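/- arXiv:1908.10724 — 6 statements merged into one kernel-verified Lean document; each statement's English description precedes it below -/
import Mathlib

section
/- If Z : Conv(ℝⁿ;ℝ) → ℝ is a continuous and dually epi-translation invariant valuation that is homogeneous of degree 1, then Z is additive, i.e. Z(α v + β w) = α Z(v) + β Z(w) for all α, β ≥ 0 and all v, w ∈ Conv(ℝⁿ;ℝ). -/
open Filter Topology MeasureTheory

noncomputable section

/-- Euclidean space `ℝⁿ`. -/
abbrev Vn (n : ℕ) := EuclideanSpace ℝ (Fin n)

/-- `Conv(ℝⁿ;ℝ)`: finite-valued convex functions on `ℝⁿ`. -/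
def ConvFin (n : ℕ) : Set (Vn n → ℝ) := {v | ConvexOn ℝ Set.univ v}

/-- Epi-convergence of a sequence of real-valued functions
(the lower bound condition is stated in `EReal` so that the `liminf` is the
honest extended-real lower limit). -/
def EpiConvergesR {n : ℕ} (vk : ℕ → Vn n → ℝ) (v : Vn n → ℝ) : Prop :=
  ∀ x : Vn n,
    (∀ xk : ℕ → Vn n, Tendsto xk atTop (𝓝 x) →
      (v x : EReal) ≤ liminf (fun k => ((vk k (xk k) : ℝ) : EReal)) atTop) ∧
    (∃ xk : ℕ → Vn n, Tendsto xk atTop (𝓝 x) ∧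
      Tendsto (fun k => vk k (xk k)) atTop (𝓝 (v x)))

/-- Continuity (with respect to epi-convergence) of a functional on a class `X`. -/
def ContinuousValR {n : ℕ} (X : Set (Vn n → ℝ)) (Z : (Vn n → ℝ) → ℝ) : Prop :=
  ∀ (vk : ℕ → Vn n → ℝ) (v : Vn n → ℝ),
    (∀ k, vk k ∈ X) → v ∈ X → EpiConvergesR vk v →
      Tendsto (fun k => Z (vk k)) atTop (𝓝 (Z v))

/-- The valuation property on a class `X` (here `⊔`, `⊓` are the pointwise
maximum and minimum). -/
def IsValuationR {n : ℕ} (X : Set (Vn n → ℝ)) (Z : (Vn n → ℝ) → ℝ) : Prop :=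
  ∀ u v : Vn n → ℝ, u ∈ X → v ∈ X → u ⊔ v ∈ X → u ⊓ v ∈ X →
    Z (u ⊔ v) + Z (u ⊓ v) = Z u + Z v

/-- Dual epi-translation invariance: invariance under addition of affine
functions `v ↦ v + ℓ + c`. -/
def DuallyEpiTranslationInvariant {n : ℕ} (X : Set (Vn n → ℝ)) (Z : (Vn n → ℝ) → ℝ) : Prop :=
  ∀ v ∈ X, ∀ ℓ : Vn n →ₗ[ℝ] ℝ, ∀ c : ℝ, Z (fun x => v x + ℓ x + c) = Z v

/-- Dual translation invariance: invariance under addition of linear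
functions `v ↦ v + ℓ`. -/
def DuallyTranslationInvariant {n : ℕ} (X : Set (Vn n → ℝ)) (Z : (Vn n → ℝ) → ℝ) : Prop :=
  ∀ v ∈ X, ∀ ℓ : Vn n →ₗ[ℝ] ℝ, Z (fun x => v x + ℓ x) = Z v

/-- `Z` is homogeneous of degree `α`: `Z(λ v) = λ^α Z(v)` for `λ > 0`. -/
def HomogeneousR {n : ℕ} (X : Set (Vn n → ℝ)) (Z : (Vn n → ℝ) → ℝ) (α : ℝ) : Prop :=
  ∀ v ∈ X, ∀ l : ℝ, 0 < l → Z (fun x => l * v x) = l ^ α * Z v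


namespace AddAux
variable {n : ℕ}

lemma contOf {v : Vn n → ℝ} (hv : v ∈ ConvFin n) : Continuous v :=
  (show ConvexOn ℝ Set.univ v from hv).locallyLipschitz.continuous

lemma convAdd {u v : Vn n → ℝ} (hu : u ∈ ConvFin n) (hv : v ∈ ConvFin n) :
    (fun x => u x + v x) ∈ ConvFin n :=
  (show ConvexOn ℝ Set.univ u from hu).add hv

lemma convSMul {v : Vn n → ℝ} {c : ℝ} (hc : 0 ≤ c) (hv : v ∈ ConvFin n) :
    (fun x => c * v x) ∈ ConvFin n :=
  (show ConvexOn ℝ Set.univ v from hv).smul hc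

lemma convMax {u v : Vn n → ℝ} (hu : u ∈ ConvFin n) (hv : v ∈ ConvFin n) :
    (fun x => max (u x) (v x)) ∈ ConvFin n :=
  (show ConvexOn ℝ Set.univ u from hu).sup hv

lemma convConst (c : ℝ) : (fun _ : Vn n => c) ∈ ConvFin n :=
  convexOn_const c convex_univ

lemma convAffine (ℓ : Vn n →ₗ[ℝ] ℝ) (c : ℝ) : (fun x => ℓ x + c) ∈ ConvFin n := by
  constructor
  · exact convex_univ
  · intro x _ y _ a b _ _ hab
    have h : a * c + b * c = c := by rw [← add_mul, hab, one_mul]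
    simp only [map_add, LinearMap.map_smul, smul_eq_mul]
    linarith

lemma epi_of_ptwise {vk : ℕ → Vn n → ℝ} {v : Vn n → ℝ}
    (h : ∀ (x : Vn n) (xk : ℕ → Vn n), Tendsto xk atTop (𝓝 x) →
      Tendsto (fun k => vk k (xk k)) atTop (𝓝 (v x))) :
    EpiConvergesR vk v := by
  intro x
  refine ⟨fun xk hxk => le_of_eq (EReal.tendsto_coe.2 (h x xk hxk)).liminf_eq.symm,
    ⟨fun _ => x, tendsto_const_nhds, h x (fun _ => x) tendsto_const_nhds⟩⟩

lemma epi_affc {u P : Vn n → ℝ} (hu : Continuous u) (hP : Continuous P)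
    {s : ℕ → ℝ} {s0 : ℝ} (hs : Tendsto s atTop (𝓝 s0)) :
    EpiConvergesR (fun k x => u x + s k * P x) (fun x => u x + s0 * P x) :=
  epi_of_ptwise fun x xk hxk =>
    (((hu.tendsto x).comp hxk).add (hs.mul ((hP.tendsto x).comp hxk)))

lemma epi_cu {u P : Vn n → ℝ} (hu : Continuous u) (hP : Continuous P)
    {s : ℕ → ℝ} (hs : Tendsto s atTop (𝓝 0)) :
    EpiConvergesR (fun k x => s k * u x + P x) P :=
  epi_of_ptwise fun x xk hxk => by
    have := (hs.mul ((hu.tendsto x).comp hxk)).add ((hP.tendsto x).comp hxk)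
    simpa using this

lemma cauchy_aff {f : ℝ → ℝ}
    (hadd : ∀ s t : ℝ, 0 ≤ s → 0 ≤ t → f (s + t) = f s + f t - f 0)
    (hcont : ∀ (s : ℕ → ℝ) (s0 : ℝ), (∀ k, 0 ≤ s k) → 0 ≤ s0 →
        Tendsto s atTop (𝓝 s0) → Tendsto (fun k => f (s k)) atTop (𝓝 (f s0))) :
    ∀ s : ℝ, 0 ≤ s → f s = f 0 + s * (f 1 - f 0) := by
  set g : ℝ → ℝ := fun s => f s - f 0 with hg
  have gadd : ∀ s t : ℝ, 0 ≤ s → 0 ≤ t → g (s + t) = g s + g t := by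
    intro s t hs ht; simp only [hg]; rw [hadd s t hs ht]; ring
  have gnat : ∀ (m : ℕ) (x : ℝ), 0 ≤ x → g (m * x) = m * g x := by
    intro m
    induction m with
    | zero => intro x _; simp [hg]
    | succ m ih =>
      intro x hx
      have h1 : ((m : ℝ) + 1) * x = (m : ℝ) * x + x := by ring
      push_cast
      rw [h1, gadd _ _ (by positivity) hx, ih x hx]; ring
  have grat : ∀ (m k : ℕ), g ((m : ℝ) / (k + 1)) = ((m : ℝ) / (k + 1)) * g 1 := by
    intro m k
    have hpos : (0:ℝ) < (k:ℝ) + 1 := by positivity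
    have h1 : g 1 = (k + 1 : ℕ) * g (1 / ((k:ℝ) + 1)) := by
      have := gnat (k+1) (1 / ((k:ℝ)+1)) (by positivity)
      rw [← this]; push_cast; rw [mul_one_div, div_self (ne_of_gt hpos)]
    have h2 : g ((m:ℝ) / ((k:ℝ)+1)) = m * g (1 / ((k:ℝ)+1)) := by
      have := gnat m (1 / ((k:ℝ)+1)) (by positivity)
      rw [← this, mul_one_div]
    rw [h2]
    push_cast at h1
    have h3 : g (1 / ((k:ℝ)+1)) = g 1 / ((k:ℝ)+1) := by
      field_simp at h1 ⊢; linarith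
    rw [h3]; field_simp
  intro s hs
  set q : ℕ → ℝ := fun k => (Nat.floor (s * (k+1)) : ℝ) / (k + 1) with hq
  have hq0 : ∀ k, 0 ≤ q k := by intro k; positivity
  have hqle : ∀ k, q k ≤ s := by
    intro k
    rw [hq, div_le_iff₀ (by positivity)]
    exact_mod_cast Nat.floor_le (by positivity)
  have hqgt : ∀ k : ℕ, s - 1 / (k+1) ≤ q k := by
    intro k
    have h1 : s * (k+1) < (Nat.floor (s * (k+1)) : ℝ) + 1 := Nat.lt_floor_add_one _
    rw [hq]
    rw [sub_le_iff_le_add, ← add_div, le_div_iff₀ (by positivity)]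
    linarith
  have hqt : Tendsto q atTop (𝓝 s) := by
    have hlow : Tendsto (fun k : ℕ => s - 1 / ((k:ℝ)+1)) atTop (𝓝 s) := by
      have := tendsto_one_div_add_atTop_nhds_zero_nat (𝕜 := ℝ)
      simpa using tendsto_const_nhds.sub this
    exact tendsto_of_tendsto_of_tendsto_of_le_of_le hlow tendsto_const_nhds hqgt hqle
  have hfq : Tendsto (fun k => f (q k)) atTop (𝓝 (f s)) := hcont q s hq0 hs hqt
  have hgq : ∀ k, f (q k) = f 0 + q k * (f 1 - f 0) := by
    intro k
    have h5 := grat (Nat.floor (s * (k+1))) k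
    simp only [hq]
    have hg1 : g 1 = f 1 - f 0 := rfl
    have h6 : f ((Nat.floor (s * (k+1)) : ℝ) / ((k:ℝ)+1)) - f 0
        = ((Nat.floor (s * (k+1)) : ℝ) / ((k:ℝ)+1)) * (f 1 - f 0) := by
      rw [← hg1]; exact h5
    linarith [h6]
  have hfq2 : Tendsto (fun k => f 0 + q k * (f 1 - f 0)) atTop (𝓝 (f 0 + s * (f 1 - f 0))) :=
    (tendsto_const_nhds.add (hqt.mul tendsto_const_nhds))
  exact tendsto_nhds_unique (hfq.congr hgq) hfq2

structure Hyp (n : ℕ) (Z : (Vn n → ℝ) → ℝ) : Prop where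
  cont : ContinuousValR (ConvFin n) Z
  val : IsValuationR (ConvFin n) Z
  inv : DuallyEpiTranslationInvariant (ConvFin n) Z
  hom : HomogeneousR (ConvFin n) Z 1

variable {Z : (Vn n → ℝ) → ℝ}

lemma Hyp.homog (H : Hyp n Z) {v : Vn n → ℝ} (hv : v ∈ ConvFin n) {l : ℝ} (hl : 0 < l) :
    Z (fun x => l * v x) = l * Z v := by
  have h := H.hom v hv l hl
  rwa [Real.rpow_one] at h

lemma Hyp.z0 (H : Hyp n Z) : Z (fun _ : Vn n => (0:ℝ)) = 0 := by
  have h := H.homog (convConst 0) (l := 2) (by norm_num)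
  simp only [mul_zero] at h
  linarith

lemma Hyp.zaffine (H : Hyp n Z) (ℓ : Vn n →ₗ[ℝ] ℝ) (c : ℝ) : Z (fun x => ℓ x + c) = 0 := by
  have h := H.inv (fun _ => 0) (convConst 0) ℓ c
  simp only [zero_add] at h
  rw [h, H.z0]

/-- The class of convex functions `w` such that `Z` is additive with respect to `w`. -/
def Adm {n : ℕ} (Z : (Vn n → ℝ) → ℝ) (w : Vn n → ℝ) : Prop :=
  w ∈ ConvFin n ∧ ∀ u ∈ ConvFin n, Z (fun x => u x + w x) = Z u + Z w

lemma Adm.scaled (H : Hyp n Z) {w : Vn n → ℝ} (hw : Adm Z w) {s : ℝ} (hs : 0 ≤ s)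
    {u : Vn n → ℝ} (hu : u ∈ ConvFin n) :
    Z (fun x => u x + s * w x) = Z u + s * Z w := by
  rcases eq_or_lt_of_le hs with h|h
  · simp [← h]
  · have hs' : s ≠ 0 := ne_of_gt h
    have hu' : (fun x => s⁻¹ * u x) ∈ ConvFin n := convSMul (by positivity) hu
    have e1 : (fun x => u x + s * w x) = fun x => s * ((fun y => s⁻¹ * u y) x + w x) := by
      funext x; field_simp
    have h2 : Z (fun x => s * ((fun y => s⁻¹ * u y) x + w x))
        = s * Z (fun x => (fun y => s⁻¹ * u y) x + w x) := H.homog (convAdd hu' hw.1) h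
    have h3 : Z (fun x => (fun y => s⁻¹ * u y) x + w x)
        = Z (fun y => s⁻¹ * u y) + Z w := hw.2 _ hu'
    have h4 : Z (fun y => s⁻¹ * u y) = s⁻¹ * Z u := H.homog hu (by positivity)
    rw [e1, h2, h3, h4]
    field_simp

lemma Adm.affine_add (H : Hyp n Z) {w : Vn n → ℝ} (hw : Adm Z w) (ℓ : Vn n →ₗ[ℝ] ℝ) (c : ℝ) :
    Adm Z (fun x => w x + ℓ x + c) := by
  have hwc : (fun x => w x + ℓ x + c) ∈ ConvFin n := by
    have h := convAdd hw.1 (convAffine ℓ c)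
    have e : (fun x => w x + (ℓ x + c)) = fun x => w x + ℓ x + c := by funext x; ring
    rwa [e] at h
  refine ⟨hwc, fun u hu => ?_⟩
  have e1 : (fun x => u x + (w x + ℓ x + c)) = fun x => (fun y => u y + w y) x + ℓ x + c := by
    funext x; ring
  have h1 : Z (fun x => (fun y => u y + w y) x + ℓ x + c) = Z (fun y => u y + w y) :=
    H.inv _ (convAdd hu hw.1) ℓ c
  have h2 : Z (fun x => w x + ℓ x + c) = Z w := H.inv w hw.1 ℓ c
  rw [e1, h1, hw.2 u hu, h2]

lemma adm_affine (H : Hyp n Z) (ℓ : Vn n →ₗ[ℝ] ℝ) (c : ℝ) : Adm Z (fun x => ℓ x + c) := by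
  refine ⟨convAffine ℓ c, fun u hu => ?_⟩
  have e1 : (fun x => u x + (ℓ x + c)) = fun x => u x + ℓ x + c := by funext x; ring
  rw [e1, H.inv u hu ℓ c, H.zaffine ℓ c, add_zero]

lemma Adm.plusPart (H : Hyp n Z) {ψ : Vn n → ℝ} (hψ : Adm Z ψ) :
    Adm Z (fun x => max (ψ x) 0) := by
  have hψc : ψ ∈ ConvFin n := hψ.1
  have hPc : (fun x => max (ψ x) 0) ∈ ConvFin n := convMax hψc (convConst 0)
  have hPcont : Continuous (fun x : Vn n => max (ψ x) 0) := contOf hPc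
  -- Cauchy functional equation from the valuation property
  have key : ∀ u ∈ ConvFin n, ∀ s t : ℝ, 0 ≤ s → 0 ≤ t →
      Z (fun x => u x + (s + t) * max (ψ x) 0)
        = Z (fun x => u x + s * max (ψ x) 0) + Z (fun x => u x + t * max (ψ x) 0) - Z u := by
    intro u hu s t hs ht
    have m1 : (fun x => u x + s * max (ψ x) 0) ∈ ConvFin n := convAdd hu (convSMul hs hPc)
    have m2 : (fun x => u x + (s * ψ x + t * max (ψ x) 0)) ∈ ConvFin n :=
      convAdd hu (convAdd (convSMul hs hψc) (convSMul ht hPc))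
    have esup : (fun x => u x + s * max (ψ x) 0) ⊔ (fun x => u x + (s * ψ x + t * max (ψ x) 0))
        = fun x => u x + (s + t) * max (ψ x) 0 := by
      funext x
      simp only [Pi.sup_apply]
      rcases le_total (ψ x) 0 with h|h
      · rw [max_eq_right h,
          max_eq_left (by nlinarith : u x + (s * ψ x + t * 0) ≤ u x + s * 0)]
        ring
      · rw [max_eq_left h,
          max_eq_right (by nlinarith : u x + s * ψ x ≤ u x + (s * ψ x + t * ψ x))]
        ring
    have einf : (fun x => u x + s * max (ψ x) 0) ⊓ (fun x => u x + (s * ψ x + t * max (ψ x) 0))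
        = fun x => u x + s * ψ x := by
      funext x
      simp only [Pi.inf_apply]
      rcases le_total (ψ x) 0 with h|h
      · rw [max_eq_right h,
          min_eq_right (by nlinarith : u x + (s * ψ x + t * 0) ≤ u x + s * 0)]
        ring
      · rw [max_eq_left h,
          min_eq_left (by nlinarith : u x + s * ψ x ≤ u x + (s * ψ x + t * ψ x))]
    have hv := H.val _ _ m1 m2
      (by rw [esup]; exact convAdd hu (convSMul (by linarith) hPc))
      (by rw [einf]; exact convAdd hu (convSMul hs hψc))
    rw [esup, einf] at hv
    have h2 : Z (fun x => u x + s * ψ x) = Z u + s * Z ψ := hψ.scaled H hs hu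
    have h3 : Z (fun x => u x + (s * ψ x + t * max (ψ x) 0))
        = Z (fun y => u y + t * max (ψ y) 0) + s * Z ψ := by
      have e : (fun x => u x + (s * ψ x + t * max (ψ x) 0))
          = fun x => (fun y => u y + t * max (ψ y) 0) x + s * ψ x := by funext x; ring
      rw [e]
      exact hψ.scaled H hs (convAdd hu (convSMul ht hPc))
    linarith [hv, h2, h3]
  -- continuity in the coefficient
  have contF : ∀ u ∈ ConvFin n, ∀ (sk : ℕ → ℝ) (s0 : ℝ), (∀ k, 0 ≤ sk k) → 0 ≤ s0 →
      Tendsto sk atTop (𝓝 s0) →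
      Tendsto (fun k => Z (fun x => u x + sk k * max (ψ x) 0)) atTop
        (𝓝 (Z (fun x => u x + s0 * max (ψ x) 0))) := by
    intro u hu sk s0 hk h0 hsk
    exact H.cont _ _ (fun k => convAdd hu (convSMul (hk k) hPc))
      (convAdd hu (convSMul h0 hPc)) (epi_affc (contOf hu) hPcont hsk)
  -- affine dependence on the coefficient
  have Faff : ∀ u ∈ ConvFin n, ∀ s : ℝ, 0 ≤ s →
      Z (fun x => u x + s * max (ψ x) 0)
        = Z u + s * (Z (fun x => u x + max (ψ x) 0) - Z u) := by
    intro u hu s hs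
    have h0 : (fun x => u x + (0:ℝ) * max (ψ x) 0) = u := by funext x; ring
    have h1 : (fun x => u x + (1:ℝ) * max (ψ x) 0) = fun x => u x + max (ψ x) 0 := by
      funext x; ring
    have hadd : ∀ s t : ℝ, 0 ≤ s → 0 ≤ t →
        Z (fun x => u x + (s + t) * max (ψ x) 0)
          = Z (fun x => u x + s * max (ψ x) 0) + Z (fun x => u x + t * max (ψ x) 0)
            - Z (fun x => u x + (0:ℝ) * max (ψ x) 0) := by
      intro s t hs ht
      rw [h0]
      exact key u hu s t hs ht
    have haff := cauchy_aff (f := fun r => Z (fun x => u x + r * max (ψ x) 0))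
      hadd (contF u hu) s hs
    simp only [h0, h1] at haff
    exact haff
  -- identification of the slope via homogeneity and continuity
  have clim : ∀ u ∈ ConvFin n,
      Z (fun x => u x + max (ψ x) 0) - Z u = Z (fun x => max (ψ x) 0) := by
    intro u hu
    have hc : ∀ l : ℝ, 0 < l → Z (fun x => l * u x + max (ψ x) 0)
        = l * Z u + (Z (fun x => u x + max (ψ x) 0) - Z u) := by
      intro l hl
      have e1 : (fun x => l * u x + max (ψ x) 0)
          = fun x => l * ((fun y => u y + l⁻¹ * max (ψ y) 0) x) := by
        funext x
        have : l ≠ 0 := ne_of_gt hl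
        field_simp
      have h2 : Z (fun x => l * ((fun y => u y + l⁻¹ * max (ψ y) 0) x))
          = l * Z (fun y => u y + l⁻¹ * max (ψ y) 0) :=
        H.homog (convAdd hu (convSMul (by positivity) hPc)) hl
      have h3 := Faff u hu l⁻¹ (by positivity)
      rw [e1, h2, h3]
      field_simp
    have hseq : Tendsto (fun k : ℕ => Z (fun x => (1/((k:ℝ)+1)) * u x + max (ψ x) 0)) atTop
        (𝓝 (Z (fun x => max (ψ x) 0))) := by
      refine H.cont _ _ (fun k => convAdd (convSMul (by positivity) hu) hPc) hPc
        (epi_cu (contOf hu) hPcont ?_)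
      exact tendsto_one_div_add_atTop_nhds_zero_nat
    have hseq2 : Tendsto (fun k : ℕ => (1/((k:ℝ)+1)) * Z u
          + (Z (fun x => u x + max (ψ x) 0) - Z u)) atTop
        (𝓝 ((0:ℝ) * Z u + (Z (fun x => u x + max (ψ x) 0) - Z u))) :=
      (tendsto_one_div_add_atTop_nhds_zero_nat.mul tendsto_const_nhds).add tendsto_const_nhds
    have h4 := tendsto_nhds_unique
      (hseq2.congr (fun k : ℕ => (hc (1/((k:ℝ)+1)) (by positivity)).symm)) hseq
    linarith [h4]
  refine ⟨hPc, fun u hu => ?_⟩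
  have := clim u hu
  linarith [this]

lemma Adm.maxAffine (H : Hyp n Z) {w : Vn n → ℝ} (hw : Adm Z w) (ℓ : Vn n →ₗ[ℝ] ℝ) (c : ℝ) :
    Adm Z (fun x => max (w x) (ℓ x + c)) := by
  have h1 : Adm Z (fun x => w x + (-ℓ) x + (-c)) := hw.affine_add H (-ℓ) (-c)
  have h2 := h1.plusPart H
  have h3 := h2.affine_add H ℓ c
  have e : (fun x => max (w x + (-ℓ) x + (-c)) 0 + ℓ x + c)
      = fun x => max (w x) (ℓ x + c) := by
    funext x
    simp only [LinearMap.neg_apply]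
    rcases le_total (w x) (ℓ x + c) with h|h
    · rw [max_eq_right (by linarith : w x + -(ℓ x) + -c ≤ 0), max_eq_right h]
      ring
    · rw [max_eq_left (by linarith : (0:ℝ) ≤ w x + -(ℓ x) + -c), max_eq_left h]
      ring
  rwa [e] at h3


lemma exists_minorant {v : Vn n → ℝ} (hv : v ∈ ConvFin n) (x₀ : Vn n) {ε : ℝ} (hε : 0 < ε) :
    ∃ (ℓ : Vn n →ₗ[ℝ] ℝ) (c : ℝ), (∀ x, ℓ x + c ≤ v x) ∧ v x₀ - ε ≤ ℓ x₀ + c := by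
  have hvc : Continuous v := contOf hv
  have hconv : ConvexOn ℝ Set.univ v := hv
  have hSconv : Convex ℝ {p : Vn n × ℝ | v p.1 < p.2} := by
    rintro ⟨p1, p2⟩ hp ⟨q1, q2⟩ hq a b ha hb hab
    simp only [Set.mem_setOf_eq] at hp hq ⊢
    simp only [Prod.smul_mk, Prod.mk_add_mk, smul_eq_mul]
    have h1 : v (a • p1 + b • q1) ≤ a * v p1 + b * v q1 := by
      have := hconv.2 (Set.mem_univ p1) (Set.mem_univ q1) ha hb hab
      simpa [smul_eq_mul] using this
    have h2 : a * v p1 + b * v q1 < a * p2 + b * q2 := by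
      rcases eq_or_lt_of_le ha with ha'|ha'
      · have hb1 : b = 1 := by linarith
        rw [← ha', hb1]; simpa using hq
      · have h3 : b * v q1 ≤ b * q2 := mul_le_mul_of_nonneg_left hq.le hb
        have h4 : a * v p1 < a * p2 := mul_lt_mul_of_pos_left hp ha'
        linarith
    exact lt_of_le_of_lt h1 h2
  have hSopen : IsOpen {p : Vn n × ℝ | v p.1 < p.2} :=
    isOpen_lt (hvc.comp continuous_fst) continuous_snd
  have hpt : (x₀, v x₀ - ε) ∉ {p : Vn n × ℝ | v p.1 < p.2} := by
    simp only [Set.mem_setOf_eq, not_lt]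
    linarith
  obtain ⟨f, hf⟩ := geometric_hahn_banach_open_point hSconv hSopen hpt
  have hfS : ∀ p : Vn n × ℝ, v p.1 < p.2 → f p < f (x₀, v x₀ - ε) := fun p hp => hf p hp
  have hsplit : ∀ (x : Vn n) (t : ℝ), f (x, t) = f (x, 0) + t * f ((0 : Vn n), (1:ℝ)) := by
    intro x t
    have e : (x, t) = (x, (0:ℝ)) + t • ((0 : Vn n), (1:ℝ)) := by
      simp [Prod.ext_iff]
    rw [e, map_add, f.map_smul, smul_eq_mul]
  set a : ℝ := f ((0 : Vn n), (1:ℝ)) with haDef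
  set r0 : ℝ := f (x₀, v x₀ - ε) with hr0
  have ha : a < 0 := by
    have h1 := hfS (x₀, v x₀ + 1) (by simp only [Set.mem_setOf_eq]; linarith)
    rw [hsplit x₀ (v x₀ + 1)] at h1
    have h2 : r0 = f (x₀, 0) + (v x₀ - ε) * a := hsplit x₀ (v x₀ - ε)
    nlinarith
  have ha' : a ≠ 0 := ne_of_lt ha
  set b : ℝ := (-a)⁻¹ with hbDef
  have hbpos : 0 < b := by
    rw [hbDef]
    have hna : 0 < -a := by linarith
    positivity
  have hb : a * b = -1 := by
    rw [hbDef]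
    field_simp
  have hminor : ∀ x, f (x, 0) + v x * a ≤ r0 := by
    intro x
    by_contra hcon
    push_neg at hcon
    have hδpos : 0 < (f (x, 0) + v x * a - r0) * b := mul_pos (by linarith) hbpos
    have h1 := hfS (x, v x + (f (x, 0) + v x * a - r0) * b)
      (by simp only [Set.mem_setOf_eq]; linarith)
    rw [hsplit] at h1
    have h2 : f (x, 0) + (v x + (f (x, 0) + v x * a - r0) * b) * a = r0 := by
      linear_combination (f (x, 0) + v x * a - r0) * hb
    linarith
  refine ⟨b • ((f.comp (ContinuousLinearMap.inl ℝ (Vn n) ℝ)).toLinearMap), -(b * r0), ?_, ?_⟩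
  · intro x
    have hgLx : (b • ((f.comp (ContinuousLinearMap.inl ℝ (Vn n) ℝ)).toLinearMap)) x
        = b * f (x, 0) := by
      simp [ContinuousLinearMap.comp_apply]
    rw [hgLx]
    have h := mul_le_mul_of_nonneg_left (hminor x) hbpos.le
    have h2 : b * (f (x, 0) + v x * a) = b * f (x, 0) - v x := by
      linear_combination v x * hb
    linarith
  · have hgLx : (b • ((f.comp (ContinuousLinearMap.inl ℝ (Vn n) ℝ)).toLinearMap)) x₀
        = b * f (x₀, 0) := by
      simp [ContinuousLinearMap.comp_apply]
    rw [hgLx]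
    have h2 : r0 = f (x₀, 0) + (v x₀ - ε) * a := hsplit x₀ (v x₀ - ε)
    have e : b * f (x₀, 0) + -(b * r0) = v x₀ - ε := by
      rw [h2]
      linear_combination (ε - v x₀) * hb
    linarith

lemma adm_all (H : Hyp n Z) {v : Vn n → ℝ} (hv : v ∈ ConvFin n) : Adm Z v := by
  have hvc : Continuous v := contOf hv
  set y : ℕ → Vn n := TopologicalSpace.denseSeq (Vn n) with hy
  have hyd : DenseRange y := TopologicalSpace.denseRange_denseSeq _
  have hmin : ∀ i : ℕ, ∃ (ℓ : Vn n →ₗ[ℝ] ℝ) (c : ℝ), (∀ x, ℓ x + c ≤ v x) ∧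
      v (y i.unpair.1) - 1/((i.unpair.2 : ℝ) + 1) ≤ ℓ (y i.unpair.1) + c :=
    fun i => exists_minorant hv (y i.unpair.1) (by positivity)
  choose L C hLle hLtouch using hmin
  set A : ℕ → Vn n → ℝ := fun i x => L i x + C i with hA
  have hAcont : ∀ i, Continuous (A i) := by
    intro i
    exact ((L i).continuous_of_finiteDimensional).add continuous_const
  have hAle : ∀ i x, A i x ≤ v x := fun i x => hLle i x
  set W : ℕ → Vn n → ℝ :=
    fun N => Nat.rec (motive := fun _ => Vn n → ℝ) (A 0)
      (fun N' W' => fun x => max (W' x) (A (N'+1) x)) N with hWdef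
  have hW0 : W 0 = A 0 := rfl
  have hWs : ∀ N, W (N+1) = fun x => max (W N x) (A (N+1) x) := fun _ => rfl
  have hWadm : ∀ N, Adm Z (W N) := by
    intro N
    induction N with
    | zero => rw [hW0, hA]; exact adm_affine H (L 0) (C 0)
    | succ N ih =>
      rw [hWs N]
      have h := ih.maxAffine H (L (N+1)) (C (N+1))
      exact h
  have hWle : ∀ N x, W N x ≤ v x := by
    intro N
    induction N with
    | zero => intro x; rw [hW0]; exact hAle 0 x
    | succ N ih =>
      intro x
      rw [hWs N]
      exact max_le (ih x) (hAle (N+1) x)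
  have hWge : ∀ i N, i ≤ N → ∀ x, A i x ≤ W N x := by
    intro i N
    induction N with
    | zero =>
      intro hi x
      have h0 : i = 0 := Nat.le_zero.mp hi
      rw [h0, hW0]
    | succ N ih =>
      intro hi x
      rw [hWs N]
      rcases Nat.lt_or_ge i (N+1) with h|h
      · exact le_trans (ih (Nat.lt_succ_iff.mp h) x) (le_max_left _ _)
      · have h1 : i = N+1 := le_antisymm hi h
        rw [h1]
        exact le_max_right _ _
  have hbdd : ∀ x, BddAbove (Set.range fun i => A i x) := by
    intro x
    exact ⟨v x, by rintro r ⟨i, rfl⟩; exact hAle i x⟩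
  have htv_le : ∀ x, (⨆ i, A i x) ≤ v x := fun x => ciSup_le (fun i => hAle i x)
  have hA_le_tv : ∀ i x, A i x ≤ ⨆ j, A j x := fun i x => le_ciSup (hbdd x) i
  have htv_conv : ConvexOn ℝ Set.univ (fun x => ⨆ i, A i x) := by
    constructor
    · exact convex_univ
    · intro p _ q _ a b ha hb hab
      simp only [smul_eq_mul]
      refine ciSup_le fun i => ?_
      have e : A i (a • p + b • q) = a * A i p + b * A i q := by
        simp only [hA, map_add, LinearMap.map_smul, smul_eq_mul]
        have h : a * C i + b * C i = C i := by rw [← add_mul, hab, one_mul]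
        linarith
      rw [e]
      exact add_le_add (mul_le_mul_of_nonneg_left (hA_le_tv i p) ha)
        (mul_le_mul_of_nonneg_left (hA_le_tv i q) hb)
  have htv_cont : Continuous (fun x => ⨆ i, A i x) := htv_conv.locallyLipschitz.continuous
  have heq : (fun x => ⨆ i, A i x) = v := by
    refine Continuous.ext_on hyd htv_cont hvc ?_
    rintro _ ⟨j, rfl⟩
    refine le_antisymm (htv_le _) ?_
    show v (y j) ≤ ⨆ i, A i (y j)
    by_contra hcon
    push_neg at hcon
    obtain ⟨m, hm⟩ := exists_nat_one_div_lt (show 0 < v (y j) - ⨆ i, A i (y j) by linarith)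
    have h1 := hLtouch (Nat.pair j m)
    have h1' : v (y j) - 1/((m:ℝ)+1) ≤ A (Nat.pair j m) (y j) := by
      simpa [Nat.unpair_pair, hA] using h1
    have h2 : A (Nat.pair j m) (y j) ≤ ⨆ i, A i (y j) := hA_le_tv _ _
    have hS : v (y j) - 1/((m:ℝ)+1) ≤ ⨆ i, A i (y j) := le_trans h1' h2
    linarith [hS, hm]
  have hsupv : ∀ x, v x = ⨆ i, A i x := fun x => (congrFun heq x).symm
  have hWt : ∀ x, Tendsto (fun N => W N x) atTop (𝓝 (v x)) := by
    intro x
    rw [Metric.tendsto_atTop]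
    intro ε hε
    have hlt : v x - ε < ⨆ i, A i x := by rw [← hsupv x]; linarith
    obtain ⟨i, hi⟩ := exists_lt_of_lt_ciSup hlt
    refine ⟨i, fun N hN => ?_⟩
    rw [Real.dist_eq, abs_sub_lt_iff]
    constructor
    · linarith [hWle N x]
    · linarith [hWge i N hN x]
  have hepi : ∀ u : Vn n → ℝ, Continuous u →
      EpiConvergesR (fun N x => u x + W N x) (fun x => u x + v x) := by
    intro u hu x
    constructor
    · intro xk hxk
      have key : ∀ i : ℕ, ((u x + A i x : ℝ) : EReal)
          ≤ liminf (fun k => ((u (xk k) + W k (xk k) : ℝ) : EReal)) atTop := by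
        intro i
        have h1 : Tendsto (fun k => ((u (xk k) + A i (xk k) : ℝ) : EReal)) atTop
            (𝓝 ((u x + A i x : ℝ) : EReal)) :=
          EReal.tendsto_coe.2 (((hu.tendsto x).comp hxk).add (((hAcont i).tendsto x).comp hxk))
        have h2 : ∀ᶠ k in atTop, ((u (xk k) + A i (xk k) : ℝ) : EReal)
            ≤ ((u (xk k) + W k (xk k) : ℝ) : EReal) := by
          filter_upwards [eventually_ge_atTop i] with k hk
          exact_mod_cast (by linarith [hWge i k hk (xk k)] : u (xk k) + A i (xk k) ≤ u (xk k) + W k (xk k))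
        calc ((u x + A i x : ℝ) : EReal)
            = liminf (fun k => ((u (xk k) + A i (xk k) : ℝ) : EReal)) atTop := h1.liminf_eq.symm
          _ ≤ _ := liminf_le_liminf h2
      have hseq : Tendsto (fun m : ℕ => ((u x + v x - 1/((m:ℝ)+1) : ℝ) : EReal)) atTop
          (𝓝 ((u x + v x : ℝ) : EReal)) := by
        refine EReal.tendsto_coe.2 ?_
        have h := tendsto_one_div_add_atTop_nhds_zero_nat (𝕜 := ℝ)
        simpa using tendsto_const_nhds.sub h
      refine le_of_tendsto hseq (Eventually.of_forall fun m => ?_)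
      have hlt : v x - 1/((m:ℝ)+1) < ⨆ i, A i x := by
        rw [← hsupv x]
        have hp : (0:ℝ) < 1/((m:ℝ)+1) := by positivity
        linarith
      obtain ⟨i, hi⟩ := exists_lt_of_lt_ciSup hlt
      refine le_trans ?_ (key i)
      exact_mod_cast (by linarith : u x + v x - 1/((m:ℝ)+1) ≤ u x + A i x)
    · exact ⟨fun _ => x, tendsto_const_nhds, (hWt x).const_add (u x)⟩
  refine ⟨hv, fun u hu => ?_⟩
  have h1 : Tendsto (fun N => Z (fun x => u x + W N x)) atTop (𝓝 (Z (fun x => u x + v x))) :=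
    H.cont _ _ (fun N => convAdd hu (hWadm N).1) (convAdd hu hv) (hepi u (contOf hu))
  have h3 : Tendsto (fun N => Z (W N)) atTop (𝓝 (Z v)) := by
    have h0 := H.cont (fun N x => (fun _ : Vn n => (0:ℝ)) x + W N x)
      (fun x => (fun _ : Vn n => (0:ℝ)) x + v x)
      (fun N => convAdd (convConst 0) (hWadm N).1) (convAdd (convConst 0) hv)
      (hepi (fun _ => 0) continuous_const)
    simp only [zero_add] at h0
    exact h0
  have h5 : Tendsto (fun N => Z (fun x => u x + W N x)) atTop (𝓝 (Z u + Z v)) :=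
    (h3.const_add (Z u)).congr (fun N => ((hWadm N).2 u hu).symm)
  exact tendsto_nhds_unique h1 h5


end AddAux

/-- **Additivity of `1`-homogeneous valuations** (Corollary 6.4): a
continuous and dually epi-translation invariant valuation on `Conv(ℝⁿ;ℝ)`
that is homogeneous of degree `1` is additive:
`Z(α v + β w) = α Z(v) + β Z(w)` for `α, β ≥ 0`. -/
theorem additivity_finite (n : ℕ) (Z : (Vn n → ℝ) → ℝ)
    (hcont : ContinuousValR (ConvFin n) Z)
    (hval : IsValuationR (ConvFin n) Z)
    (hinv : DuallyEpiTranslationInvariant (ConvFin n) Z)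
    (hhom : HomogeneousR (ConvFin n) Z 1) :
    ∀ α β : ℝ, 0 ≤ α → 0 ≤ β → ∀ v w : Vn n → ℝ,
      v ∈ ConvFin n → w ∈ ConvFin n →
        Z (fun x => α * v x + β * w x) = α * Z v + β * Z w := by
  intro α β hα hβ v w hv hw
  have H : AddAux.Hyp n Z := ⟨hcont, hval, hinv, hhom⟩
  have hαv : (fun x => α * v x) ∈ ConvFin n := AddAux.convSMul hα hv
  have hβw : (fun x => β * w x) ∈ ConvFin n := AddAux.convSMul hβ hw
  have h1 : Z (fun x => α * v x + β * w x)
      = Z (fun x => α * v x) + Z (fun x => β * w x) :=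
    (AddAux.adm_all H hβw).2 _ hαv
  have h2 : Z (fun x => α * v x) = α * Z v := by
    rcases eq_or_lt_of_le hα with h|h
    · simp only [← h, zero_mul]
      exact H.z0
    · exact H.homog hv h
  have h3 : Z (fun x => β * w x) = β * Z w := by
    rcases eq_or_lt_of_le hβ with h|h
    · simp only [← h, zero_mul]
      exact H.z0
    · exact H.homog hw h
  rw [h1, h2, h3]
end
end

section
/- A functional Z : Conv_sc(ℝⁿ) → ℝ is a continuous and epi-translation invariant valuation that is epi-homogeneous of degree 0, if and only if Z is constant. -/
open Filter Topology MeasureTheory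

noncomputable section

/-- `u : ℝⁿ → ℝ ∪ {+∞}` (represented as an `EReal`-valued function that never
takes the value `⊥ = -∞`) is convex. -/
def IsConvexFn {n : ℕ} (u : Vn n → EReal) : Prop :=
  ∀ x y : Vn n, ∀ t : ℝ, 0 < t → t < 1 →
    u (t • x + (1 - t) • y) ≤ (t : EReal) * u x + ((1 - t : ℝ) : EReal) * u y

/-- `Conv(ℝⁿ)`: convex, lower semicontinuous, proper functions
`ℝⁿ → ℝ ∪ {+∞}`. -/
def ConvSet (n : ℕ) : Set (Vn n → EReal) :=
  {u | IsConvexFn u ∧ LowerSemicontinuous u ∧ (∀ x, u x ≠ ⊥) ∧ (∃ x, u x ≠ ⊤)}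

/-- `Conv_sc(ℝⁿ)`: super-coercive elements of `Conv(ℝⁿ)`, i.e.
`u(x)/|x| → +∞` as `|x| → +∞`. -/
def ConvSc (n : ℕ) : Set (Vn n → EReal) :=
  {u | u ∈ ConvSet n ∧
    ∀ M : ℝ, ∃ R : ℝ, ∀ x : Vn n, R ≤ ‖x‖ → ((M * ‖x‖ : ℝ) : EReal) ≤ u x}

/-- Epi-convergence of a sequence `uk` to `u`. -/
def EpiConverges {n : ℕ} (uk : ℕ → Vn n → EReal) (u : Vn n → EReal) : Prop :=
  ∀ x : Vn n,
    (∀ xk : ℕ → Vn n, Tendsto xk atTop (𝓝 x) →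
      u x ≤ liminf (fun k => uk k (xk k)) atTop) ∧
    (∃ xk : ℕ → Vn n, Tendsto xk atTop (𝓝 x) ∧
      Tendsto (fun k => uk k (xk k)) atTop (𝓝 (u x)))

/-- Continuity (with respect to epi-convergence) of a functional on a class `X`. -/
def ContinuousVal {n : ℕ} (X : Set (Vn n → EReal)) (Z : (Vn n → EReal) → ℝ) : Prop :=
  ∀ (uk : ℕ → Vn n → EReal) (u : Vn n → EReal),
    (∀ k, uk k ∈ X) → u ∈ X → EpiConverges uk u →
      Tendsto (fun k => Z (uk k)) atTop (𝓝 (Z u))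

/-- The valuation property on a class `X` (here `⊔`, `⊓` are the pointwise
maximum and minimum). -/
def IsValuation {n : ℕ} (X : Set (Vn n → EReal)) (Z : (Vn n → EReal) → ℝ) : Prop :=
  ∀ u v : Vn n → EReal, u ∈ X → v ∈ X → u ⊔ v ∈ X → u ⊓ v ∈ X →
    Z (u ⊔ v) + Z (u ⊓ v) = Z u + Z v

/-- Epi-translation invariance: invariance under `u ↦ u(· - x₀) + c`. -/
def EpiTranslationInvariant {n : ℕ} (X : Set (Vn n → EReal)) (Z : (Vn n → EReal) → ℝ) : Prop :=
  ∀ u ∈ X, ∀ x₀ : Vn n, ∀ c : ℝ, Z (fun x => u (x - x₀) + (c : EReal)) = Z u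

-- Epi-multiplication `λ ⊡ u`; for `λ = 0` it is the indicator of `{0}`.
open Classical in
def epiMul {n : ℕ} (l : ℝ) (u : Vn n → EReal) : Vn n → EReal :=
  if l = 0 then (fun x => if x = 0 then (0 : EReal) else ⊤)
  else fun x => (l : EReal) * u (l⁻¹ • x)

/-- `Z` is epi-homogeneous of degree `α`: `Z(λ ⊡ u) = λ^α Z(u)` for `λ > 0`. -/
def EpiHomogeneous {n : ℕ} (X : Set (Vn n → EReal)) (Z : (Vn n → EReal) → ℝ) (α : ℝ) : Prop :=
  ∀ u ∈ X, ∀ l : ℝ, 0 < l → Z (epiMul l u) = l ^ α * Z u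

section AuxLemmas

variable {n : ℕ}

open Classical in
/-- The indicator function of `{0}`. -/
def indZero (n : ℕ) : Vn n → EReal := fun x => if x = 0 then (0 : EReal) else ⊤

lemma indZero_zero : indZero n 0 = 0 := by simp [indZero]

lemma indZero_of_ne {x : Vn n} (hx : x ≠ 0) : indZero n x = ⊤ := by simp [indZero, hx]

lemma indZero_nonneg (x : Vn n) : 0 ≤ indZero n x := by
  by_cases hx : x = 0
  · subst hx; rw [indZero_zero]
  · rw [indZero_of_ne hx]; exact le_top

lemma indZero_ne_bot (x : Vn n) : indZero n x ≠ ⊥ := by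
  by_cases hx : x = 0
  · subst hx; rw [indZero_zero]; simp
  · rw [indZero_of_ne hx]; simp

lemma coe_mul_ne_bot {l : ℝ} (hl : 0 < l) {a : EReal} (ha : a ≠ ⊥) :
    (l : EReal) * a ≠ ⊥ := by
  induction a with
  | bot => exact absurd rfl ha
  | coe a => rw [← EReal.coe_mul]; exact EReal.coe_ne_bot _
  | top =>
      rw [EReal.mul_top_of_pos (by exact_mod_cast hl)]
      exact top_ne_bot

lemma coe_mul_ne_top {l : ℝ} (hl : 0 < l) {a : EReal} (ha : a ≠ ⊤) :
    (l : EReal) * a ≠ ⊤ := by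
  induction a with
  | bot =>
      rw [EReal.mul_bot_of_pos (by exact_mod_cast hl)]
      exact bot_ne_top
  | coe a => rw [← EReal.coe_mul]; exact EReal.coe_ne_top _
  | top => exact absurd rfl ha

lemma coe_mul_add_of_ne_bot {l : ℝ} (hl : 0 < l) {a b : EReal} (ha : a ≠ ⊥) (hb : b ≠ ⊥) :
    (l : EReal) * (a + b) = (l : EReal) * a + (l : EReal) * b := by
  have hl' : (0 : EReal) < (l : EReal) := by exact_mod_cast hl
  induction a with
  | bot => exact absurd rfl ha
  | coe a =>
    induction b with
    | bot => exact absurd rfl hb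
    | coe b => norm_cast; ring
    | top =>
      rw [EReal.add_top_of_ne_bot (EReal.coe_ne_bot a), EReal.mul_top_of_pos hl',
        ← EReal.coe_mul, EReal.add_top_of_ne_bot (EReal.coe_ne_bot _)]
  | top =>
    rw [EReal.top_add_of_ne_bot hb, EReal.mul_top_of_pos hl',
      EReal.top_add_of_ne_bot (coe_mul_ne_bot hl hb)]

lemma coe_mul_le_coe_mul {l : ℝ} (hl : 0 ≤ l) {a b : EReal} (h : a ≤ b) :
    (l : EReal) * a ≤ (l : EReal) * b :=
  mul_le_mul_of_nonneg_left h (by exact_mod_cast hl)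

lemma lt_coe_mul_iff {l : ℝ} (hl : 0 < l) {y w : EReal} :
    y < (l : EReal) * w ↔ y / (l : EReal) < w := by
  have key : w ≤ y / (l : EReal) ↔ (l : EReal) * w ≤ y := by
    rw [EReal.le_div_iff_mul_le (by exact_mod_cast hl) (EReal.coe_ne_top l), EReal.mul_comm]
  rw [← not_le, ← not_le, key]

lemma lsc_coe_mul {l : ℝ} (hl : 0 < l) {u : Vn n → EReal} (hu : LowerSemicontinuous u) :
    LowerSemicontinuous fun x => (l : EReal) * u x := by
  intro x y hy
  change y < (l : EReal) * u x at hy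
  rw [lt_coe_mul_iff hl] at hy
  filter_upwards [hu x _ hy] with z hz
  show y < (l : EReal) * u z
  rw [lt_coe_mul_iff hl]; exact hz

lemma lsc_add_coe {c : ℝ} {u : Vn n → EReal} (hu : LowerSemicontinuous u) :
    LowerSemicontinuous fun x => u x + (c : EReal) := by
  intro x y hy
  have h1 : y - (c : EReal) < u x := EReal.sub_lt_of_lt_add hy
  filter_upwards [hu x _ h1] with z hz
  exact (EReal.sub_lt_iff (Or.inl (EReal.coe_ne_bot c)) (Or.inl (EReal.coe_ne_top c))).1 hz

lemma lsc_bddBelow_on_compact {f : Vn n → EReal} (hf : LowerSemicontinuous f)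
    (hbot : ∀ x, f x ≠ ⊥) {s : Set (Vn n)} (hs : IsCompact s) :
    ∃ m : ℝ, ∀ x ∈ s, (m : EReal) ≤ f x := by
  have key : ∀ y : Vn n, ∃ r : ℝ, (r : EReal) < f y := by
    intro y
    obtain ⟨r, _, hr2⟩ := EReal.exists_between_coe_real (Ne.bot_lt (hbot y))
    exact ⟨r, hr2⟩
  choose r hr using key
  obtain ⟨t, -, hcover⟩ := hs.elim_nhds_subcover (fun y => {z | (r y : EReal) < f z})
    (fun y _ => hf y (r y) (hr y))
  rcases t.eq_empty_or_nonempty with h | h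
  · subst h
    refine ⟨0, fun x hx => ?_⟩
    simpa using hcover hx
  · refine ⟨t.inf' h r, fun x hx => ?_⟩
    obtain ⟨y, hyt, hxy⟩ := Set.mem_iUnion₂.1 (hcover hx)
    exact le_trans (by exact_mod_cast Finset.inf'_le r hyt) (le_of_lt hxy)

lemma indZero_mem : indZero n ∈ ConvSc n := by
  refine ⟨⟨?_, ?_, indZero_ne_bot, ⟨0, by rw [indZero_zero]; simp⟩⟩, ?_⟩
  · intro x y t ht ht1
    by_cases hx : x = 0
    · by_cases hy : y = 0
      · subst hx; subst hy
        simp [indZero_zero]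
      · rw [indZero_of_ne hy, EReal.mul_top_of_pos (by exact_mod_cast (by linarith : (0:ℝ) < 1 - t)),
          EReal.add_top_of_ne_bot (coe_mul_ne_bot ht (indZero_ne_bot x))]
        exact le_top
    · rw [indZero_of_ne hx, EReal.mul_top_of_pos (by exact_mod_cast ht),
        EReal.top_add_of_ne_bot (coe_mul_ne_bot (by linarith) (indZero_ne_bot y))]
      exact le_top
  · intro x y hy
    by_cases hx : x = 0
    · subst hx
      rw [indZero_zero] at hy
      exact Filter.Eventually.of_forall fun z => lt_of_lt_of_le hy (indZero_nonneg z)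
    · have hytop : y < ⊤ := by
        have : indZero n x = ⊤ := if_neg hx
        rwa [this] at hy
      filter_upwards [isOpen_compl_singleton.mem_nhds (by simpa using hx : x ∈ ({0}ᶜ : Set (Vn n)))]
        with z hz
      rw [indZero_of_ne (by simpa using hz)]; exact hytop
  · intro M
    refine ⟨1, fun x hx => ?_⟩
    have hx0 : x ≠ 0 := by
      intro h; subst h; simp at hx; linarith
    rw [indZero_of_ne hx0]; exact le_top

lemma epiMul_mem {u : Vn n → EReal} (hu : u ∈ ConvSc n) {l : ℝ} (hl : 0 < l) :
    epiMul l u ∈ ConvSc n := by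
  obtain ⟨⟨hconv, hlsc, hbot, xb, hxb⟩, hsc⟩ := hu
  have hl0 : l ≠ 0 := ne_of_gt hl
  have hepi : epiMul l u = fun x => (l : EReal) * u (l⁻¹ • x) := by
    unfold epiMul; rw [if_neg hl0]
  rw [hepi]
  refine ⟨⟨?_, ?_, ?_, ?_⟩, ?_⟩
  · intro x y t ht ht1
    dsimp only
    have harg : l⁻¹ • (t • x + (1 - t) • y) = t • (l⁻¹ • x) + (1 - t) • (l⁻¹ • y) := by
      rw [smul_add, smul_comm l⁻¹ t x, smul_comm l⁻¹ (1 - t) y]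
    rw [harg]
    calc (l : EReal) * u (t • (l⁻¹ • x) + (1 - t) • (l⁻¹ • y))
        ≤ (l : EReal) * ((t : EReal) * u (l⁻¹ • x) + ((1 - t : ℝ) : EReal) * u (l⁻¹ • y)) :=
          coe_mul_le_coe_mul hl.le (hconv _ _ t ht ht1)
      _ = (t : EReal) * ((l : EReal) * u (l⁻¹ • x))
          + ((1 - t : ℝ) : EReal) * ((l : EReal) * u (l⁻¹ • y)) := by
          rw [coe_mul_add_of_ne_bot hl (coe_mul_ne_bot (by exact_mod_cast ht) (hbot _))
            (coe_mul_ne_bot (by exact_mod_cast (by linarith : (0:ℝ) < 1 - t)) (hbot _)),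
            mul_left_comm, mul_left_comm ((1 - t : ℝ) : EReal)]
  · exact LowerSemicontinuous.comp (f := fun x => (l : EReal) * u x) (lsc_coe_mul hl hlsc) (continuous_const_smul l⁻¹)
  · exact fun x => coe_mul_ne_bot hl (hbot _)
  · refine ⟨l • xb, ?_⟩
    show (l : EReal) * u (l⁻¹ • l • xb) ≠ ⊤
    rw [inv_smul_smul₀ hl0]
    exact coe_mul_ne_top hl hxb
  · intro M
    obtain ⟨R, hR⟩ := hsc M
    refine ⟨l * max R 0, fun x hx => ?_⟩
    have hinv : 0 < l⁻¹ := inv_pos.2 hl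
    have hnorm : ‖l⁻¹ • x‖ = l⁻¹ * ‖x‖ := by
      rw [norm_smul, Real.norm_eq_abs, abs_of_pos hinv]
    have hge : R ≤ ‖l⁻¹ • x‖ := by
      rw [hnorm]
      have h1 : l⁻¹ * (l * max R 0) ≤ l⁻¹ * ‖x‖ := mul_le_mul_of_nonneg_left hx hinv.le
      have h2 : l⁻¹ * (l * max R 0) = max R 0 := by field_simp
      calc R ≤ max R 0 := le_max_left _ _
        _ = l⁻¹ * (l * max R 0) := h2.symm
        _ ≤ l⁻¹ * ‖x‖ := h1
    have hre : M * ‖x‖ = l * (M * ‖l⁻¹ • x‖) := by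
      rw [hnorm]
      field_simp
    calc ((M * ‖x‖ : ℝ) : EReal) = ((l * (M * ‖l⁻¹ • x‖) : ℝ) : EReal) := by rw [hre]
      _ = (l : EReal) * ((M * ‖l⁻¹ • x‖ : ℝ) : EReal) := EReal.coe_mul _ _
      _ ≤ (l : EReal) * u (l⁻¹ • x) := coe_mul_le_coe_mul hl.le (hR _ hge)

lemma translate_mem {u : Vn n → EReal} (hu : u ∈ ConvSc n) (x₀ : Vn n) (c : ℝ) :
    (fun x => u (x - x₀) + (c : EReal)) ∈ ConvSc n := by
  obtain ⟨⟨hconv, hlsc, hbot, xb, hxb⟩, hsc⟩ := hu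
  refine ⟨⟨?_, ?_, ?_, ?_⟩, ?_⟩
  · intro x y t ht ht1
    dsimp only
    have harg : t • x + (1 - t) • y - x₀ = t • (x - x₀) + (1 - t) • (y - x₀) := by
      rw [smul_sub, smul_sub]
      module
    rw [harg]
    have h2 := hconv (x - x₀) (y - x₀) t ht ht1
    have hsum : ((t * c : ℝ) : EReal) + (((1 - t) * c : ℝ) : EReal) = (c : EReal) := by
      rw [← EReal.coe_add]; norm_cast; ring
    calc u (t • (x - x₀) + (1 - t) • (y - x₀)) + (c : EReal)
        ≤ ((t : EReal) * u (x - x₀) + ((1 - t : ℝ) : EReal) * u (y - x₀)) + (c : EReal) :=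
          add_le_add_left h2 _
      _ = ((t : EReal) * u (x - x₀) + ((t * c : ℝ) : EReal))
          + (((1 - t : ℝ) : EReal) * u (y - x₀) + (((1 - t) * c : ℝ) : EReal)) := by
          rw [add_add_add_comm, hsum]
      _ = (t : EReal) * (u (x - x₀) + (c : EReal))
          + ((1 - t : ℝ) : EReal) * (u (y - x₀) + (c : EReal)) := by
          rw [coe_mul_add_of_ne_bot (by exact_mod_cast ht) (hbot _) (EReal.coe_ne_bot c),
            coe_mul_add_of_ne_bot (by exact_mod_cast (by linarith : (0:ℝ) < 1 - t)) (hbot _)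
              (EReal.coe_ne_bot c),
            ← EReal.coe_mul, ← EReal.coe_mul]
  · exact lsc_add_coe (LowerSemicontinuous.comp hlsc (continuous_id.sub continuous_const))
  · intro x
    rw [Ne, EReal.add_eq_bot_iff]
    push_neg
    exact ⟨hbot _, EReal.coe_ne_bot c⟩
  · refine ⟨xb + x₀, ?_⟩
    simp only [add_sub_cancel_right]
    exact (EReal.add_lt_top hxb (EReal.coe_ne_top c)).ne
  · intro M
    obtain ⟨R, hR⟩ := hsc (|M| + 1)
    refine ⟨max (R + ‖x₀‖) (max ((|M| + 1) * ‖x₀‖ - c) 0), fun x hx => ?_⟩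
    have h1 : R + ‖x₀‖ ≤ ‖x‖ := le_trans (le_max_left _ _) hx
    have h2 : (|M| + 1) * ‖x₀‖ - c ≤ ‖x‖ :=
      le_trans (le_trans (le_max_left _ _) (le_max_right _ _)) hx
    have hd : ‖x‖ - ‖x₀‖ ≤ ‖x - x₀‖ := norm_sub_norm_le x x₀
    have hge : R ≤ ‖x - x₀‖ := by linarith
    have hreal : M * ‖x‖ ≤ (|M| + 1) * ‖x - x₀‖ + c := by
      have hf1 : (|M| + 1) * (‖x‖ - ‖x₀‖) ≤ (|M| + 1) * ‖x - x₀‖ :=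
        mul_le_mul_of_nonneg_left hd (by positivity)
      have hf2 : M * ‖x‖ ≤ |M| * ‖x‖ :=
        mul_le_mul_of_nonneg_right (le_abs_self M) (norm_nonneg x)
      nlinarith [norm_nonneg x]
    calc ((M * ‖x‖ : ℝ) : EReal) ≤ (((|M| + 1) * ‖x - x₀‖ + c : ℝ) : EReal) := by
          exact_mod_cast hreal
      _ = (((|M| + 1) * ‖x - x₀‖ : ℝ) : EReal) + (c : EReal) := by
          rw [← EReal.coe_add]
      _ ≤ u (x - x₀) + (c : EReal) := add_le_add_left (hR _ hge) _

lemma epiConverges_indZero {u : Vn n → EReal} (hu : u ∈ ConvSc n) :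
    EpiConverges (fun k : ℕ => epiMul ((k : ℝ) + 1)⁻¹ u) (indZero n) := by
  obtain ⟨⟨hconv, hlsc, hbot, xb, hxb⟩, hsc⟩ := hu
  have hlpos : ∀ k : ℕ, (0 : ℝ) < ((k : ℝ) + 1)⁻¹ := fun k => by positivity
  have hne : ∀ k : ℕ, ((k : ℝ) + 1)⁻¹ ≠ 0 := fun k => ne_of_gt (hlpos k)
  have hepi : ∀ (k : ℕ) (x : Vn n), epiMul ((k : ℝ) + 1)⁻¹ u x
      = ((((k : ℝ) + 1)⁻¹ : ℝ) : EReal) * u (((k : ℝ) + 1) • x) := by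
    intro k x
    unfold epiMul
    rw [if_neg (hne k)]
    simp [inv_inv]
  have hl0 : Tendsto (fun k : ℕ => ((k : ℝ) + 1)⁻¹) atTop (𝓝 0) := by
    simpa [one_div] using tendsto_one_div_add_atTop_nhds_zero_nat (𝕜 := ℝ)
  intro x
  by_cases hx : x = 0
  · subst hx
    constructor
    · intro xk hxk
      obtain ⟨R0, hR0⟩ := hsc 0
      obtain ⟨m, hm⟩ := lsc_bddBelow_on_compact hlsc hbot
        (isCompact_closedBall (0 : Vn n) (max R0 0))
      set m' := min m 0 with hm'
      have hm'0 : m' ≤ 0 := min_le_right _ _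
      have hbound : ∀ k : ℕ, ((((k : ℝ) + 1)⁻¹ * m' : ℝ) : EReal)
          ≤ epiMul ((k : ℝ) + 1)⁻¹ u (xk k) := by
        intro k
        rw [hepi]
        set y := ((k : ℝ) + 1) • xk k with hy
        rcases le_or_gt ‖y‖ (max R0 0) with hyb | hyb
        · have hmy : ((m' : ℝ) : EReal) ≤ u y := by
            refine le_trans ?_ (hm y (mem_closedBall_zero_iff.2 hyb))
            exact_mod_cast min_le_left m 0
          calc ((((k : ℝ) + 1)⁻¹ * m' : ℝ) : EReal)
              = ((((k : ℝ) + 1)⁻¹ : ℝ) : EReal) * ((m' : ℝ) : EReal) := EReal.coe_mul _ _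
            _ ≤ ((((k : ℝ) + 1)⁻¹ : ℝ) : EReal) * u y := coe_mul_le_coe_mul (hlpos k).le hmy
        · have h0 : ((0 : ℝ) : EReal) ≤ u y := by
            have := hR0 y (le_trans (le_max_left R0 0) hyb.le)
            simpa using this
          calc ((((k : ℝ) + 1)⁻¹ * m' : ℝ) : EReal) ≤ ((0 : ℝ) : EReal) := by
                exact_mod_cast mul_nonpos_of_nonneg_of_nonpos (hlpos k).le hm'0
            _ = ((((k : ℝ) + 1)⁻¹ : ℝ) : EReal) * ((0 : ℝ) : EReal) := by
                simp
            _ ≤ ((((k : ℝ) + 1)⁻¹ : ℝ) : EReal) * u y := coe_mul_le_coe_mul (hlpos k).le h0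
      have hlim : Tendsto (fun k : ℕ => ((((k : ℝ) + 1)⁻¹ * m' : ℝ) : EReal)) atTop
          (𝓝 ((0 : ℝ) : EReal)) := by
        rw [EReal.tendsto_coe]
        simpa using hl0.mul_const m'
      have hmain : ((0 : ℝ) : EReal)
          ≤ liminf (fun k : ℕ => epiMul ((k : ℝ) + 1)⁻¹ u (xk k)) atTop := by
        rw [← hlim.liminf_eq]
        exact liminf_le_liminf (Filter.Eventually.of_forall hbound)
      rw [show indZero n 0 = ((0 : ℝ) : EReal) by rw [indZero_zero]; simp]
      exact hmain
    · have ha : (((u xb).toReal : ℝ) : EReal) = u xb := EReal.coe_toReal hxb (hbot xb)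
      set a := (u xb).toReal
      refine ⟨fun k => ((k : ℝ) + 1)⁻¹ • xb, ?_, ?_⟩
      · simpa using hl0.smul_const xb
      · have hval : (fun k : ℕ => epiMul ((k : ℝ) + 1)⁻¹ u (((k : ℝ) + 1)⁻¹ • xb))
            = fun k : ℕ => ((((k : ℝ) + 1)⁻¹ * a : ℝ) : EReal) := by
          funext k
          rw [hepi, smul_inv_smul₀ (by positivity : ((k : ℝ) + 1) ≠ 0), ← ha, ← EReal.coe_mul]
        rw [hval]
        rw [show indZero n 0 = ((0 : ℝ) : EReal) by rw [indZero_zero]; simp, EReal.tendsto_coe]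
        simpa using hl0.mul_const a
  · have htop : ∀ xk : ℕ → Vn n, Tendsto xk atTop (𝓝 x) →
        Tendsto (fun k : ℕ => epiMul ((k : ℝ) + 1)⁻¹ u (xk k)) atTop (𝓝 ⊤) := by
      intro xk hxk
      rw [EReal.tendsto_nhds_top_iff_real]
      intro r
      have hxpos : 0 < ‖x‖ := norm_pos_iff.2 hx
      set M := 2 * (|r| + 1) / ‖x‖ with hM
      have hMpos : 0 < M := by positivity
      obtain ⟨R, hR⟩ := hsc M
      have h1 : ∀ᶠ k in atTop, ‖x‖ / 2 < ‖xk k‖ :=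
        hxk.norm.eventually (eventually_gt_nhds (by linarith))
      have h2 : ∀ᶠ k : ℕ in atTop, |R| ≤ ((k : ℝ) + 1) * (‖x‖ / 2) := by
        have hto : Tendsto (fun k : ℕ => ((k : ℝ) + 1) * (‖x‖ / 2)) atTop atTop := by
          apply Filter.Tendsto.atTop_mul_const (by positivity)
          exact tendsto_atTop_add_const_right atTop 1 tendsto_natCast_atTop_atTop
        exact hto.eventually (eventually_ge_atTop |R|)
      filter_upwards [h1, h2] with k hk1 hk2
      rw [hepi]
      set y := ((k : ℝ) + 1) • xk k with hy
      have hnorm : ‖y‖ = ((k : ℝ) + 1) * ‖xk k‖ := by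
        rw [hy, norm_smul, Real.norm_eq_abs, abs_of_pos (by positivity)]
      have hyR : R ≤ ‖y‖ := by
        rw [hnorm]
        have : ((k : ℝ) + 1) * (‖x‖ / 2) ≤ ((k : ℝ) + 1) * ‖xk k‖ :=
          mul_le_mul_of_nonneg_left hk1.le (by positivity)
        calc R ≤ |R| := le_abs_self R
          _ ≤ ((k : ℝ) + 1) * (‖x‖ / 2) := hk2
          _ ≤ ((k : ℝ) + 1) * ‖xk k‖ := this
      refine lt_of_lt_of_le (b := ((((k : ℝ) + 1)⁻¹ * (M * ‖y‖) : ℝ) : EReal)) ?_ ?_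
      · rw [EReal.coe_lt_coe_iff]
        have heq : ((k : ℝ) + 1)⁻¹ * (M * ‖y‖) = M * ‖xk k‖ := by
          rw [hnorm]
          field_simp
        rw [heq]
        have hMx : M * (‖x‖ / 2) = |r| + 1 := by
          rw [hM]; field_simp
        have hstep : M * (‖x‖ / 2) ≤ M * ‖xk k‖ :=
          mul_le_mul_of_nonneg_left hk1.le hMpos.le
        have := le_abs_self r
        linarith
      · rw [EReal.coe_mul]
        exact coe_mul_le_coe_mul (hlpos k).le (hR _ hyR)
    constructor
    · intro xk hxk
      rw [(htop xk hxk).liminf_eq]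
      exact le_top
    · refine ⟨fun _ => x, tendsto_const_nhds, ?_⟩
      rw [indZero_of_ne hx]
      exact htop _ tendsto_const_nhds

end AuxLemmas

/-- **Classification of `0`-epi-homogeneous valuations** (Theorem 7.1):
`Z : Conv_sc(ℝⁿ) → ℝ` is a continuous and epi-translation invariant valuation
that is epi-homogeneous of degree `0` if and only if `Z` is constant. -/
theorem classification_zero_epihomogeneous (n : ℕ) (Z : (Vn n → EReal) → ℝ) :
    (ContinuousVal (ConvSc n) Z ∧ IsValuation (ConvSc n) Z ∧
      EpiTranslationInvariant (ConvSc n) Z ∧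
      EpiHomogeneous (ConvSc n) Z 0) ↔
    (∃ c : ℝ, ∀ u ∈ ConvSc n, Z u = c) := by
  constructor
  · rintro ⟨hcont, -, -, hhom⟩
    refine ⟨Z (indZero n), fun u hu => ?_⟩
    have h1 : ∀ k : ℕ, Z (epiMul ((k : ℝ) + 1)⁻¹ u) = Z u := by
      intro k
      rw [hhom u hu _ (by positivity), Real.rpow_zero, one_mul]
    have h2 := hcont (fun k : ℕ => epiMul ((k : ℝ) + 1)⁻¹ u) (indZero n)
      (fun k => epiMul_mem hu (by positivity)) indZero_mem (epiConverges_indZero hu)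
    have h3 : (fun k : ℕ => Z (epiMul ((k : ℝ) + 1)⁻¹ u)) = fun _ => Z u := funext h1
    rw [h3] at h2
    exact tendsto_nhds_unique tendsto_const_nhds h2
  · rintro ⟨c, hc⟩
    refine ⟨?_, ?_, ?_, ?_⟩
    · intro uk u huk hu _
      have h : (fun k => Z (uk k)) = fun _ => c := funext fun k => hc _ (huk k)
      rw [h, hc u hu]
      exact tendsto_const_nhds
    · intro u v hu hv hsup hinf
      rw [hc _ hu, hc _ hv, hc _ hsup, hc _ hinf]
    · intro u hu x₀ c'
      rw [hc _ hu, hc _ (translate_mem hu x₀ c')]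
    · intro u hu l hl
      rw [hc _ hu, hc _ (epiMul_mem hu hl), Real.rpow_zero, one_mul]
end
end

section
/- A functional Z : Conv(ℝⁿ;ℝ) → ℝ is a continuous and dually epi-translation invariant valuation that is homogeneous of degree 0, if and only if Z is constant. -/
open Filter Topology MeasureTheory

noncomputable section

/-- **Classification of `0`-homogeneous valuations on `Conv(ℝⁿ;ℝ)`**
(Theorem 7.2): `Z : Conv(ℝⁿ;ℝ) → ℝ` is a continuous and dually
epi-translation invariant valuation that is homogeneous of degree `0` if and
only if `Z` is constant. -/
theorem classification_zero_homogeneous_finite (n : ℕ) (Z : (Vn n → ℝ) → ℝ) :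
    (ContinuousValR (ConvFin n) Z ∧ IsValuationR (ConvFin n) Z ∧
      DuallyEpiTranslationInvariant (ConvFin n) Z ∧
      HomogeneousR (ConvFin n) Z 0) ↔
    (∃ c : ℝ, ∀ v ∈ ConvFin n, Z v = c) := by
  constructor
  · rintro ⟨hcont, _, _, hhom⟩
    refine ⟨Z (fun _ => 0), fun v hv => ?_⟩
    have hvcont : Continuous v := by
      have := hv.continuousOn isOpen_univ
      rwa [continuousOn_univ] at this
    set vk : ℕ → Vn n → ℝ := fun k x => (1 / (k + 1 : ℝ)) * v x with hvk
    have hpos : ∀ k : ℕ, (0:ℝ) < 1 / (k + 1 : ℝ) := fun k => by positivity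
    have hmem : ∀ k, vk k ∈ ConvFin n := fun k => hv.smul (hpos k).le
    have h0 : (fun _ : Vn n => (0:ℝ)) ∈ ConvFin n := convexOn_const 0 convex_univ
    have hZk : ∀ k, Z (vk k) = Z v := by
      intro k
      have := hhom v hv (1 / (k + 1 : ℝ)) (hpos k)
      rwa [Real.rpow_zero, one_mul] at this
    have htends0 : Tendsto (fun k : ℕ => 1 / (k + 1 : ℝ)) atTop (𝓝 0) :=
      tendsto_one_div_add_atTop_nhds_zero_nat
    have hepi : EpiConvergesR vk (fun _ => 0) := by
      intro x
      have key : ∀ xk : ℕ → Vn n, Tendsto xk atTop (𝓝 x) →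
          Tendsto (fun k => vk k (xk k)) atTop (𝓝 0) := by
        intro xk hxk
        have : Tendsto (fun k : ℕ => (1 / ((k:ℝ) + 1)) * v (xk k)) atTop (𝓝 (0 * v x)) :=
          htends0.mul ((hvcont.tendsto x).comp hxk)
        simpa [vk, one_div] using this
      constructor
      · intro xk hxk
        have h := (key xk hxk)
        have h2 : Tendsto (fun k => ((vk k (xk k) : ℝ) : EReal)) atTop (𝓝 ((0:ℝ) : EReal)) :=
          (continuous_coe_real_ereal.tendsto _).comp h
        rw [h2.liminf_eq]
      · exact ⟨fun _ => x, tendsto_const_nhds, key _ tendsto_const_nhds⟩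
    have hlim := hcont vk (fun _ => 0) hmem h0 hepi
    have : Tendsto (fun _ : ℕ => Z v) atTop (𝓝 (Z (fun _ => 0))) := by
      simpa [hZk] using hlim
    exact (tendsto_nhds_unique tendsto_const_nhds this)
  · rintro ⟨c, hc⟩
    refine ⟨?_, ?_, ?_, ?_⟩
    · intro vk v hk hv _
      simp only [hc _ hv, hc _ (hk _)]
      exact tendsto_const_nhds
    · intro u v hu hv hsup hinf
      rw [hc _ hu, hc _ hv, hc _ hsup, hc _ hinf]
    · intro v hv ℓ c'
      have hmem : (fun x => v x + ℓ x + c') ∈ ConvFin n := by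
        exact (hv.add (ℓ.convexOn convex_univ)).add_const c'
      rw [hc _ hmem, hc _ hv]
    · intro v hv l hl
      have hmem : (fun x => l * v x) ∈ ConvFin n := hv.smul hl.le
      rw [hc _ hmem, hc _ hv, Real.rpow_zero, one_mul]
end
end

section
/- There exists a continuous and dually translation invariant valuation Z : Conv(ℝⁿ;ℝ) → ℝ that cannot be written as a finite sum of homogeneous valuations; that is, there is no m ∈ ℕ and no valuations Z₁,…,Z_m : Conv(ℝⁿ;ℝ) → ℝ, each homogeneous of some degree α_i ∈ ℝ, with Z = Z₁ + ⋯ + Z_m. -/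
open Filter Topology MeasureTheory

noncomputable section

lemma sum_coord_single {n : ℕ} (z : Vn n) :
    ∑ i, z i • (EuclideanSpace.single i 1 : Vn n) = z := by
  have h := (EuclideanSpace.basisFun (Fin n) ℝ).sum_repr z
  simpa [EuclideanSpace.basisFun_apply, EuclideanSpace.basisFun_repr] using h

lemma abs_coord_le_norm {n : ℕ} (z : Vn n) (i : Fin n) : |z i| ≤ ‖z‖ := by
  rw [EuclideanSpace.norm_eq]
  rw [← Real.sqrt_sq_eq_abs]
  apply Real.sqrt_le_sqrt
  simpa [Real.norm_eq_abs, sq_abs] using Finset.single_le_sum (f := fun j => z j ^ 2) (fun j _ => sq_nonneg (z j)) (Finset.mem_univ i)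

lemma exists_weights {n : ℕ} (hn : 0 < n) {r : ℝ} (hr : 0 < r)
    (y : Fin n × Bool → Vn n)
    (hy : ∀ j : Fin n × Bool,
      ‖y j - ((if j.2 then r else -r) • (EuclideanSpace.single j.1 1 : Vn n))‖
        ≤ r / (2 * n + 2)) :
    ∃ μ : Fin n × Bool → ℝ,
      (∀ j, 0 ≤ μ j) ∧ ∑ j, μ j = 1 ∧ ∑ j, μ j • y j = 0 := by
  set N : ℝ := (n : ℝ) with hNdef
  have hN : 1 ≤ N := by rw [hNdef]; exact_mod_cast hn
  set δ' : ℝ := r / (2 * N + 2) with hδ'def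
  have hδ'pos : 0 < δ' := by positivity
  set e : Fin n → Vn n := fun i => EuclideanSpace.single i 1 with he
  set a : Fin n → Vn n := fun i => y (i, true) - r • e i with ha
  set b : Fin n → Vn n := fun i => y (i, false) + r • e i with hb
  have hna : ∀ i, ‖a i‖ ≤ δ' := by
    intro i
    simpa using hy (i, true)
  have hnb : ∀ i, ‖b i‖ ≤ δ' := by
    intro i
    have := hy (i, false)
    simp only [neg_smul, sub_neg_eq_add] at this
    simpa using this
  set S : Vn n → Vn n :=
    fun ε => ∑ i, ((1 / (2 * N) + ε i / 2) • a i + (1 / (2 * N) - ε i / 2) • b i) with hS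
  set F : Vn n → Vn n := fun ε => (-r⁻¹) • S ε with hF
  have hSdiff : ∀ ε ε' : Vn n, S ε - S ε' = ∑ i, ((ε i - ε' i) / 2) • (a i - b i) := by
    intro ε ε'
    rw [hS]
    rw [← Finset.sum_sub_distrib]
    refine Finset.sum_congr rfl fun i _ => ?_
    module
  have hFlip : ∀ ε ε' : Vn n, ‖F ε - F ε'‖ ≤ (N / (2 * N + 2)) * ‖ε - ε'‖ := by
    intro ε ε'
    have h1 : F ε - F ε' = (-r⁻¹) • (S ε - S ε') := by rw [hF]; module
    rw [h1, hSdiff, norm_smul]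
    have h2 : ‖∑ i, ((ε i - ε' i) / 2) • (a i - b i)‖ ≤ ∑ i : Fin n, δ' * ‖ε - ε'‖ := by
      refine (norm_sum_le _ _).trans (Finset.sum_le_sum fun i _ => ?_)
      rw [norm_smul]
      have h3 : ‖a i - b i‖ ≤ 2 * δ' := by
        calc ‖a i - b i‖ ≤ ‖a i‖ + ‖b i‖ := norm_sub_le _ _
        _ ≤ 2 * δ' := by have := hna i; have := hnb i; linarith
      have h4 : ‖(ε i - ε' i) / 2‖ ≤ ‖ε - ε'‖ / 2 := by
        rw [Real.norm_eq_abs, abs_div]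
        have : |ε i - ε' i| ≤ ‖ε - ε'‖ := by
          simpa using abs_coord_le_norm (ε - ε') i
        simp only [abs_two]
        linarith
      calc ‖(ε i - ε' i) / 2‖ * ‖a i - b i‖ ≤ (‖ε - ε'‖ / 2) * (2 * δ') := by
            apply mul_le_mul h4 h3 (norm_nonneg _) (by positivity)
      _ = δ' * ‖ε - ε'‖ := by ring
    have h5 : ‖(-r⁻¹ : ℝ)‖ = r⁻¹ := by
      rw [Real.norm_eq_abs, abs_neg, abs_inv, abs_of_pos hr]
    rw [h5]
    have h6 : (∑ _i : Fin n, δ' * ‖ε - ε'‖ : ℝ) = N * δ' * ‖ε - ε'‖ := by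
      rw [Finset.sum_const, Finset.card_univ, Fintype.card_fin, nsmul_eq_mul]; ring
    have h7 : r⁻¹ * ‖∑ i, ((ε i - ε' i) / 2) • (a i - b i)‖ ≤ r⁻¹ * (N * δ' * ‖ε - ε'‖) := by
      apply mul_le_mul_of_nonneg_left _ (by positivity)
      rw [← h6]; exact h2
    refine h7.trans (le_of_eq ?_)
    rw [hδ'def]
    field_simp
  -- contraction setup
  have hKlt : N / (2 * N + 2) < 1 := by
    rw [div_lt_one (by linarith)]; linarith
  have hKnn : (0:ℝ) ≤ N / (2 * N + 2) := by positivity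
  set K : NNReal := Real.toNNReal (N / (2 * N + 2)) with hKdef
  have hKcoe : (K : ℝ) = N / (2 * N + 2) := Real.coe_toNNReal _ hKnn
  have hcontr : ContractingWith K F := by
    constructor
    · rw [← NNReal.coe_lt_coe, hKcoe]; exact hKlt
    · apply LipschitzWith.of_dist_le_mul
      intro x y
      rw [dist_eq_norm, dist_eq_norm, hKcoe]
      exact hFlip x y
  obtain ⟨ε, hfix, -⟩ := hcontr.exists_fixedPoint 0 (edist_ne_top _ _)
  have hF0 : ‖F 0‖ ≤ 1 / (2 * N + 2) := by
    have hS0 : S (0 : Vn n) = ∑ i, ((1 / (2 * N)) • a i + (1 / (2 * N)) • b i) := by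
      rw [hS]
      refine Finset.sum_congr rfl fun i _ => ?_
      norm_num
    have h1 : ‖S (0 : Vn n)‖ ≤ δ' := by
      rw [hS0]
      refine (norm_sum_le _ _).trans ?_
      have hterm : ∀ i : Fin n,
          ‖(1 / (2 * N)) • a i + (1 / (2 * N)) • b i‖ ≤ δ' / N := by
        intro i
        refine (norm_add_le _ _).trans ?_
        rw [norm_smul, norm_smul, Real.norm_eq_abs, abs_of_pos (by positivity)]
        have hNpos : (0:ℝ) < N := by linarith
        calc 1 / (2 * N) * ‖a i‖ + 1 / (2 * N) * ‖b i‖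
            ≤ 1 / (2 * N) * δ' + 1 / (2 * N) * δ' := by
              gcongr <;> [exact hna i; exact hnb i]
          _ = δ' / N := by field_simp; ring
      refine (Finset.sum_le_sum fun i _ => hterm i).trans ?_
      rw [Finset.sum_const, Finset.card_univ, Fintype.card_fin, nsmul_eq_mul, ← hNdef]
      have hNpos : (0:ℝ) < N := by linarith
      field_simp
      exact le_rfl
    rw [hF, norm_smul, Real.norm_eq_abs, abs_neg, abs_inv, abs_of_pos hr]
    calc r⁻¹ * ‖S 0‖ ≤ r⁻¹ * δ' := by
          apply mul_le_mul_of_nonneg_left h1 (by positivity)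
      _ = 1 / (2 * N + 2) := by rw [hδ'def]; field_simp
  have hεn : ‖ε‖ ≤ 1 / (N + 2) := by
    have h1 : ‖ε‖ ≤ (N / (2 * N + 2)) * ‖ε‖ + 1 / (2 * N + 2) := by
      conv_lhs => rw [← hfix]
      calc ‖F ε‖ = ‖(F ε - F 0) + F 0‖ := by rw [sub_add_cancel]
        _ ≤ ‖F ε - F 0‖ + ‖F 0‖ := norm_add_le _ _
        _ ≤ (N / (2 * N + 2)) * ‖ε - 0‖ + 1 / (2 * N + 2) := add_le_add (hFlip ε 0) hF0
        _ = (N / (2 * N + 2)) * ‖ε‖ + 1 / (2 * N + 2) := by rw [sub_zero]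
    have h2N : (0:ℝ) < 2 * N + 2 := by linarith
    have hNpos : (0:ℝ) < N + 2 := by linarith
    rw [div_mul_eq_mul_div, ← add_div, le_div_iff₀ h2N] at h1
    rw [le_div_iff₀ hNpos]
    nlinarith [h1]
  have hcoord : ∀ i : Fin n, |ε i| ≤ 1 / (N + 2) :=
    fun i => (abs_coord_le_norm ε i).trans hεn
  have hNpos : (0:ℝ) < N := by linarith
  have habs : ∀ i : Fin n, |ε i| / 2 ≤ 1 / (2 * N) := by
    intro i
    have h3 : 1 / (N + 2) ≤ 1 / N := by
      apply one_div_le_one_div_of_le hNpos; linarith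
    have h4 := hcoord i
    calc |ε i| / 2 ≤ (1 / N) / 2 := by linarith
      _ = 1 / (2 * N) := by ring
  refine ⟨fun j => 1 / (2 * N) + (if j.2 then ε j.1 / 2 else -(ε j.1 / 2)), ?_, ?_, ?_⟩
  · rintro ⟨i, s⟩
    have h2 := habs i
    have h4 := neg_abs_le (ε i)
    have h5 := le_abs_self (ε i)
    cases s <;> simp only [Bool.false_eq_true, if_true, if_false, reduceIte] <;> linarith
  · rw [Fintype.sum_prod_type]
    have hrow : ∀ i : Fin n,
        (∑ s : Bool, (1 / (2 * N) + (if s then ε i / 2 else -(ε i / 2)))) = 1 / N := by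
      intro i
      rw [Fintype.sum_bool]
      simp only [Bool.false_eq_true, if_true, if_false, reduceIte]
      ring
    rw [Finset.sum_congr rfl fun i _ => hrow i, Finset.sum_const, Finset.card_univ,
      Fintype.card_fin, nsmul_eq_mul, ← hNdef]
    field_simp
  · have hfl : (-r⁻¹) • S ε = ε := by
      have h := hfix
      rw [Function.IsFixedPt, hF] at h
      exact h
    have hSfix : S ε = (-r) • ε := by
      calc S ε = (-r) • ((-r⁻¹) • S ε) := by
            rw [smul_smul, neg_mul_neg, mul_inv_cancel₀ (ne_of_gt hr), one_smul]
        _ = (-r) • ε := by rw [hfl]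
    rw [Fintype.sum_prod_type]
    have hterm : ∀ i : Fin n,
        (∑ s : Bool, (1 / (2 * N) + (if s then ε i / 2 else -(ε i / 2))) • y (i, s))
          = ((1 / (2 * N) + ε i / 2) • a i + (1 / (2 * N) - ε i / 2) • b i)
            + (r * ε i) • e i := by
      intro i
      rw [Fintype.sum_bool]
      simp only [Bool.false_eq_true, if_true, if_false, reduceIte, ha, hb]
      module
    rw [Finset.sum_congr rfl fun i _ => hterm i, Finset.sum_add_distrib]
    have h7 : (∑ i, (r * ε i) • e i) = r • ε := by
      have h8 : (∑ i, (r * ε i) • e i) = r • ∑ i, ε i • e i := by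
        rw [Finset.smul_sum]
        exact Finset.sum_congr rfl fun i _ => by rw [smul_smul]
      rw [h8]
      congr 1
      simp only [he]
      exact sum_coord_single ε
    have h9 : (∑ i, ((1 / (2 * N) + ε i / 2) • a i + (1 / (2 * N) - ε i / 2) • b i)) = S ε := by
      rw [hS]
    rw [h7, h9, hSfix]
    module

lemma epi_tendsto_at_zero {n : ℕ} {vk : ℕ → Vn n → ℝ} {v : Vn n → ℝ}
    (hk : ∀ k, ConvexOn ℝ Set.univ (vk k)) (hv : ConvexOn ℝ Set.univ v)
    (he : EpiConvergesR vk v) :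
    Tendsto (fun k => vk k 0) atTop (𝓝 (v 0)) := by
  rcases Nat.eq_zero_or_pos n with hn0 | hn
  · subst hn0
    haveI : Subsingleton (Vn 0) := ⟨fun a b => by ext i; exact Fin.elim0 i⟩
    obtain ⟨xk, -, hval⟩ := (he 0).2
    have hfun : (fun k => vk k (xk k)) = fun k => vk k 0 :=
      funext fun k => by rw [Subsingleton.elim (xk k) (0 : Vn 0)]
    rwa [hfun] at hval
  · refine tendsto_order.2 ⟨?_, ?_⟩
    · intro c hc
      have hl := (he 0).1 (fun _ => 0) tendsto_const_nhds
      have hc' : (c : EReal) < liminf (fun k => ((vk k 0 : ℝ) : EReal)) atTop :=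
        lt_of_lt_of_le (by exact_mod_cast hc) hl
      filter_upwards [eventually_lt_of_lt_liminf hc'] with k hk2
      exact_mod_cast hk2
    · intro c hc
      set ε : ℝ := c - v 0 with hε
      have hεpos : 0 < ε := sub_pos.2 hc
      have hcont : ContinuousAt v 0 :=
        (hv.continuousOn isOpen_univ).continuousAt (Filter.univ_mem)
      obtain ⟨δ, hδpos, hδ⟩ := Metric.continuousAt_iff.1 hcont (ε / 4) (by positivity)
      set r : ℝ := δ / 2 with hrdef
      have hr : 0 < r := by rw [hrdef]; positivity
      set p : Fin n × Bool → Vn n :=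
        fun j => (if j.2 then r else -r) • (EuclideanSpace.single j.1 1 : Vn n) with hp
      have hpnorm : ∀ j, dist (p j) 0 < δ := by
        intro j
        rw [dist_zero_right, hp, norm_smul, EuclideanSpace.norm_single]
        have : ‖(if j.2 then r else -r : ℝ)‖ = r := by
          cases j.2 <;> simp [Real.norm_eq_abs, abs_of_pos hr]
        rw [this, norm_one, mul_one, hrdef]
        linarith
      have hvp : ∀ j, v (p j) < v 0 + ε / 4 := by
        intro j
        have h1 := hδ (hpnorm j)
        rw [Real.dist_eq] at h1
        have := abs_lt.1 h1
        linarith [this.2]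
      choose y hy1 hy2 using fun j => (he (p j)).2
      have hev1 : ∀ᶠ k in atTop, ∀ j, dist (y j k) (p j) ≤ r / (2 * n + 2) := by
        rw [eventually_all]
        intro j
        have h2 := Metric.tendsto_nhds.1 (hy1 j) (r / (2 * n + 2)) (by positivity)
        filter_upwards [h2] with k hk2 using hk2.le
      have hev2 : ∀ᶠ k in atTop, ∀ j, vk k (y j k) < v 0 + ε / 2 := by
        rw [eventually_all]
        intro j
        exact (hy2 j).eventually_lt_const (by linarith [hvp j])
      filter_upwards [hev1, hev2] with k hk1 hk2
      obtain ⟨μ, hμ0, hμ1, hμc⟩ := exists_weights hn hr (fun j => y j k) (by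
        intro j
        have := hk1 j
        rw [dist_eq_norm] at this
        simpa only [hp] using this)
      have hj := (hk k).map_sum_le (t := Finset.univ) (w := μ) (p := fun j => y j k)
        (fun j _ => hμ0 j) hμ1 (fun j _ => Set.mem_univ _)
      rw [hμc] at hj
      have hsum : (∑ j, μ j • vk k (y j k)) ≤ ∑ j, μ j * (v 0 + ε / 2) := by
        refine Finset.sum_le_sum fun j _ => ?_
        rw [smul_eq_mul]
        exact mul_le_mul_of_nonneg_left (hk2 j).le (hμ0 j)
      rw [← Finset.sum_mul, hμ1, one_mul] at hsum
      have : vk k 0 ≤ v 0 + ε / 2 := hj.trans hsum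
      linarith

/-- **No homogeneous decomposition without vertical translation invariance**
(Theorem 8.1): there exists a continuous, dually translation invariant
valuation on `Conv(ℝⁿ;ℝ)` that is not a finite sum of homogeneous
valuations. -/
theorem no_homogeneous_decomposition_finite (n : ℕ) :
    ∃ Z : (Vn n → ℝ) → ℝ,
      ContinuousValR (ConvFin n) Z ∧ IsValuationR (ConvFin n) Z ∧
      DuallyTranslationInvariant (ConvFin n) Z ∧
      ¬ ∃ (m : ℕ) (Zs : Fin m → (Vn n → ℝ) → ℝ) (α : Fin m → ℝ),
          (∀ i, IsValuationR (ConvFin n) (Zs i) ∧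
            HomogeneousR (ConvFin n) (Zs i) (α i)) ∧
          ∀ v ∈ ConvFin n, Z v = ∑ i, Zs i v := by
  refine ⟨fun v => Real.exp (v 0), ?_, ?_, ?_, ?_⟩
  · intro vk v hkX hvX he
    exact (Real.continuous_exp.tendsto (v 0)).comp (epi_tendsto_at_zero hkX hvX he)
  · intro u v _ _ _ _
    show Real.exp ((u ⊔ v) 0) + Real.exp ((u ⊓ v) 0) = Real.exp (u 0) + Real.exp (v 0)
    rw [Pi.sup_apply, Pi.inf_apply]
    rcases le_total (u 0) (v 0) with h | h
    · rw [sup_eq_right.2 h, inf_eq_left.2 h, add_comm]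
    · rw [sup_eq_left.2 h, inf_eq_right.2 h]
  · intro v _ ℓ
    show Real.exp (v 0 + ℓ 0) = Real.exp (v 0)
    rw [map_zero, add_zero]
  · rintro ⟨m, Zs, α, hZs, hsum⟩
    have hconst : ∀ t : ℝ, (fun _ : Vn n => t) ∈ ConvFin n := fun t =>
      convexOn_const _ convex_univ
    set c : Fin m → ℝ := fun i => Zs i (fun _ : Vn n => (1 : ℝ)) with hc
    have hkey : ∀ t : ℝ, 0 < t → Real.exp t = ∑ i, c i * t ^ α i := by
      intro t ht
      have h1 : Real.exp t = ∑ i, Zs i (fun _ : Vn n => t) := hsum (fun _ : Vn n => t) (hconst t)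
      rw [h1]
      refine Finset.sum_congr rfl fun i _ => ?_
      have h2 := (hZs i).2 (fun _ : Vn n => (1 : ℝ)) (hconst 1) t ht
      simp only [mul_one] at h2
      rw [h2, mul_comm]
    rcases Nat.eq_zero_or_pos m with hm | hm
    · subst hm
      have := hkey 1 one_pos
      simp at this
    · haveI : Nonempty (Fin m) := ⟨⟨0, hm⟩⟩
      set A : ℝ := Finset.univ.sup' Finset.univ_nonempty α with hA
      set C : ℝ := ∑ i, |c i| with hC
      have hbound : ∀ t : ℝ, 1 ≤ t → Real.exp t ≤ C * t ^ A := by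
        intro t ht
        have ht0 : 0 < t := by linarith
        rw [hkey t ht0, hC, Finset.sum_mul]
        refine Finset.sum_le_sum fun i _ => ?_
        have h3 : t ^ α i ≤ t ^ A :=
          Real.rpow_le_rpow_of_exponent_le ht (Finset.le_sup' α (Finset.mem_univ i))
        have h4 : (0:ℝ) ≤ t ^ α i := (Real.rpow_pos_of_pos ht0 _).le
        calc c i * t ^ α i ≤ |c i| * t ^ α i :=
              mul_le_mul_of_nonneg_right (le_abs_self _) h4
          _ ≤ |c i| * t ^ A := mul_le_mul_of_nonneg_left h3 (abs_nonneg _)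
      obtain ⟨t, ht1, ht2⟩ :=
        ((eventually_ge_atTop (1:ℝ)).and
          ((tendsto_exp_div_rpow_atTop A).eventually (eventually_gt_atTop C))).exists
      have htpos : (0:ℝ) < t ^ A := Real.rpow_pos_of_pos (by linarith) _
      have h5 : C * t ^ A < Real.exp t := (lt_div_iff₀ htpos).1 ht2
      exact absurd (hbound t ht1) (not_le.2 h5)
end
end

section
/- There exists a continuous and translation invariant valuation Z : Conv_sc(ℝⁿ) → ℝ that cannot be written as a finite sum of epi-homogeneous valuations; that is, there is no m ∈ ℕ and no valuations Z₁,…,Z_m : Conv_sc(ℝⁿ) → ℝ, each epi-homogeneous of some degree α_i ∈ ℝ, with Z = Z₁ + ⋯ + Z_m. -/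
set_option maxHeartbeats 1000000

open Filter Topology MeasureTheory

noncomputable section

/-- Translation invariance (without vertical translations):
invariance under `u ↦ u(· - x₀)`. -/
def TranslationInvariant {n : ℕ} (X : Set (Vn n → EReal)) (Z : (Vn n → EReal) → ℝ) : Prop :=
  ∀ u ∈ X, ∀ x₀ : Vn n, Z (fun x => u (x - x₀)) = Z u
open Filter Topology

namespace Helpers

lemma ereal_mul_strictMono {c : ℝ} (hc : 0 < c) :
    StrictMono (fun a : EReal => (c : EReal) * a) := by
  intro a b hab
  simp only
  induction a using EReal.rec with
  | bot =>
    rw [EReal.coe_mul_bot_of_pos hc]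
    induction b using EReal.rec with
    | bot => exact absurd hab (lt_irrefl _)
    | coe b => rw [← EReal.coe_mul]; exact EReal.bot_lt_coe _
    | top => rw [EReal.coe_mul_top_of_pos hc]; exact bot_lt_top
  | coe a =>
    induction b using EReal.rec with
    | bot => exact absurd hab (by simp)
    | coe b =>
      rw [← EReal.coe_mul, ← EReal.coe_mul]
      exact_mod_cast mul_lt_mul_of_pos_left (by exact_mod_cast hab) hc
    | top => rw [EReal.coe_mul_top_of_pos hc, ← EReal.coe_mul]; exact EReal.coe_lt_top _
  | top => exact absurd hab (by simp)

/-- Multiplication by a positive real as an order isomorphism of `EReal`. -/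
noncomputable def erealMulIso (c : ℝ) (hc : 0 < c) : EReal ≃o EReal where
  toFun a := (c : EReal) * a
  invFun a := ((c⁻¹ : ℝ) : EReal) * a
  left_inv a := by
    show ((c⁻¹ : ℝ) : EReal) * ((c : EReal) * a) = a
    induction a using EReal.rec with
    | bot => rw [EReal.coe_mul_bot_of_pos hc, EReal.coe_mul_bot_of_pos (by positivity)]
    | coe a => simp only [← EReal.coe_mul]; norm_cast; field_simp
    | top => rw [EReal.coe_mul_top_of_pos hc, EReal.coe_mul_top_of_pos (by positivity)]
  right_inv a := by
    show ((c : ℝ) : EReal) * (((c⁻¹ : ℝ)) * a) = a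
    induction a using EReal.rec with
    | bot => rw [EReal.coe_mul_bot_of_pos (by positivity : (0:ℝ) < c⁻¹), EReal.coe_mul_bot_of_pos hc]
    | coe a => simp only [← EReal.coe_mul]; norm_cast; field_simp
    | top => rw [EReal.coe_mul_top_of_pos (by positivity : (0:ℝ) < c⁻¹), EReal.coe_mul_top_of_pos hc]
  map_rel_iff' := by
    intro a b
    simp only [Equiv.coe_fn_mk]
    exact (ereal_mul_strictMono hc).le_iff_le

lemma ereal_mul_mono {c : ℝ} (hc : 0 < c) {a b : EReal} (h : a ≤ b) :
    (c : EReal) * a ≤ (c : EReal) * b := (ereal_mul_strictMono hc).monotone h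

lemma ereal_mul_continuous {c : ℝ} (hc : 0 < c) :
    Continuous (fun a : EReal => (c : EReal) * a) :=
  (erealMulIso c hc).toHomeomorph.continuous

/-- distributivity over a positive convex combination, for non-`⊥` values -/
lemma ereal_mul_dist {l t s : ℝ} (hl : 0 < l) (ht : 0 < t) (hs : 0 < s)
    {a b : EReal} (ha : a ≠ ⊥) (hb : b ≠ ⊥) :
    (l : EReal) * ((t : EReal) * a + (s : EReal) * b)
      = (t : EReal) * ((l : EReal) * a) + (s : EReal) * ((l : EReal) * b) := by
  induction a using EReal.rec with
  | bot => exact absurd rfl ha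
  | coe a =>
    induction b using EReal.rec with
    | bot => exact absurd rfl hb
    | coe b =>
      simp only [← EReal.coe_mul, ← EReal.coe_add]
      norm_cast; ring
    | top =>
      rw [EReal.coe_mul_top_of_pos hs, ← EReal.coe_mul,
        EReal.coe_add_top, EReal.coe_mul_top_of_pos hl, EReal.coe_mul_top_of_pos hs,
        ← EReal.coe_mul, ← EReal.coe_mul, EReal.coe_add_top]
  | top =>
    rw [EReal.coe_mul_top_of_pos ht, EReal.coe_mul_top_of_pos hl, EReal.coe_mul_top_of_pos ht]
    have hsb : (s : EReal) * b ≠ ⊥ := by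
      induction b using EReal.rec with
      | bot => exact absurd rfl hb
      | coe b => rw [← EReal.coe_mul]; exact EReal.coe_ne_bot _
      | top => rw [EReal.coe_mul_top_of_pos hs]; exact top_ne_bot
    have hsb' : (s : EReal) * ((l:EReal) * b) ≠ ⊥ := by
      induction b using EReal.rec with
      | bot => exact absurd rfl hb
      | coe b => rw [← EReal.coe_mul, ← EReal.coe_mul]; exact EReal.coe_ne_bot _
      | top => rw [EReal.coe_mul_top_of_pos hl, EReal.coe_mul_top_of_pos hs]; exact top_ne_bot
    rw [EReal.top_add_of_ne_bot hsb, EReal.coe_mul_top_of_pos hl, EReal.top_add_of_ne_bot hsb']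

lemma ereal_mul_ne_bot {l : ℝ} (hl : 0 < l) {a : EReal} (ha : a ≠ ⊥) :
    (l : EReal) * a ≠ ⊥ := by
  induction a using EReal.rec with
  | bot => exact absurd rfl ha
  | coe a => rw [← EReal.coe_mul]; exact EReal.coe_ne_bot _
  | top => rw [EReal.coe_mul_top_of_pos hl]; exact top_ne_bot

end Helpers

namespace Helpers2
open Set

/-- A lower semicontinuous `EReal`-valued function attains its minimum on a
nonempty compact set. -/
lemma lsc_attains_min {X : Type*} [TopologicalSpace X] [T2Space X] {f : X → EReal}
    (hf : LowerSemicontinuous f) {S : Set X} (hS : IsCompact S) (hne : S.Nonempty) :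
    ∃ x ∈ S, ∀ y ∈ S, f x ≤ f y := by
  by_cases htop : ∀ x ∈ S, f x = ⊤
  · obtain ⟨x, hx⟩ := hne
    exact ⟨x, hx, fun y hy => by rw [htop x hx, htop y hy]⟩
  push_neg at htop
  obtain ⟨x₁, hx₁S, hx₁⟩ := htop
  set m : EReal := sInf (f '' S) with hm
  have hmlt : m < ⊤ := lt_of_le_of_lt (sInf_le ⟨x₁, hx₁S, rfl⟩) (lt_top_iff_ne_top.2 hx₁)
  set I := {c : EReal // m < c}
  have hIne : Nonempty I := ⟨⟨⊤, hmlt⟩⟩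
  set T : I → Set X := fun c => S ∩ {x | f x ≤ c.1} with hT
  have hTclosed : ∀ c : I, IsClosed {x | f x ≤ c.1} := fun c => hf.isClosed_preimage c.1
  have hTne : ∀ c : I, (T c).Nonempty := by
    intro c
    obtain ⟨y, hy⟩ := sInf_lt_iff.1 c.2
    obtain ⟨x, hxS, rfl⟩ := hy.1
    exact ⟨x, hxS, le_of_lt hy.2⟩
  have hTdir : Directed (· ⊇ ·) T := by
    intro c d
    refine ⟨⟨c.1 ⊓ d.1, lt_min c.2 d.2⟩, ?_, ?_⟩
    · exact inter_subset_inter_right _ (fun x (hx : f x ≤ c.1 ⊓ d.1) => le_trans hx inf_le_left)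
    · exact inter_subset_inter_right _ (fun x (hx : f x ≤ c.1 ⊓ d.1) => le_trans hx inf_le_right)
  obtain ⟨x, hx⟩ := IsCompact.nonempty_iInter_of_directed_nonempty_isCompact_isClosed
    T hTdir hTne (fun c => hS.inter_right (hTclosed c))
    (fun c => (hS.isClosed.inter (hTclosed c)))
  rw [mem_iInter] at hx
  have hxS : x ∈ S := (hx ⟨⊤, hmlt⟩).1
  refine ⟨x, hxS, fun y hy => ?_⟩
  have hfxm : f x ≤ m := by
    refine le_of_forall_gt_imp_ge_of_dense (fun c hc => ?_)
    exact (hx ⟨c, hc⟩).2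
  exact le_trans hfxm (sInf_le ⟨y, hy, rfl⟩)

end Helpers2

namespace Proof
open Helpers Helpers2 Set

variable {n : ℕ}

/-- the minimum value functional -/
def minE {n : ℕ} (u : Vn n → EReal) : EReal := ⨅ x, u x

/-- Any `u ∈ ConvSc n` attains a finite minimum. -/
lemma exists_min {u : Vn n → EReal} (h : u ∈ ConvSc n) :
    ∃ x : Vn n, u x = minE u ∧ minE u ≠ ⊥ ∧ minE u ≠ ⊤ := by
  obtain ⟨⟨hconv, hlsc, hbot, x₀, hx₀⟩, hsc⟩ := h
  set r : ℝ := (u x₀).toReal with hr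
  have hux₀ : u x₀ = (r : EReal) := (EReal.coe_toReal hx₀ (hbot x₀)).symm
  set M : ℝ := |r| + 1 with hM
  obtain ⟨R₁, hR₁⟩ := hsc M
  set R : ℝ := max R₁ (max ‖x₀‖ 1) with hRdef
  have hR1 : (1:ℝ) ≤ R := le_trans (le_max_right _ _) (le_max_right _ _)
  have hx₀R : ‖x₀‖ ≤ R := le_trans (le_max_left _ _) (le_max_right _ _)
  have houter : ∀ x : Vn n, R ≤ ‖x‖ → ((r:EReal)) < u x := by
    intro x hx
    have h1 : ((M * ‖x‖ : ℝ) : EReal) ≤ u x := hR₁ x (le_trans (le_max_left _ _) hx)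
    refine lt_of_lt_of_le ?_ h1
    rw [EReal.coe_lt_coe_iff]
    have : (1:ℝ) ≤ ‖x‖ := le_trans hR1 hx
    nlinarith [abs_nonneg r, le_abs_self r, norm_nonneg x]
  have hball : IsCompact (Metric.closedBall (0 : Vn n) R) := isCompact_closedBall _ _
  obtain ⟨x, hxS, hxmin⟩ := lsc_attains_min hlsc hball
    ⟨x₀, by simpa [Metric.mem_closedBall, dist_eq_norm] using hx₀R⟩
  have hxr : u x ≤ (r:EReal) := by
    have := hxmin x₀ (by simpa [Metric.mem_closedBall, dist_eq_norm] using hx₀R)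
    rwa [hux₀] at this
  have hglobal : ∀ y : Vn n, u x ≤ u y := by
    intro y
    by_cases hy : ‖y‖ ≤ R
    · exact hxmin y (by simpa [Metric.mem_closedBall, dist_eq_norm] using hy)
    · exact le_trans hxr (le_of_lt (houter y (le_of_not_ge hy)))
  have hmin : u x = minE u := le_antisymm (le_iInf hglobal) (iInf_le _ x)
  refine ⟨x, hmin, ?_, ?_⟩
  · rw [← hmin]; exact hbot x
  · rw [← hmin]; exact ne_top_of_le_ne_top (EReal.coe_ne_top r) hxr


lemma epiMul_pos_apply {l : ℝ} (hl : 0 < l) (u : Vn n → EReal) (x : Vn n) :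
    epiMul l u x = (l : EReal) * u (l⁻¹ • x) := by
  rw [epiMul, if_neg (ne_of_gt hl)]

lemma epiMul_mem {l : ℝ} (hl : 0 < l) {u : Vn n → EReal} (h : u ∈ ConvSc n) :
    epiMul l u ∈ ConvSc n := by
  obtain ⟨⟨hconv, hlsc, hbot, x₀, hx₀⟩, hsc⟩ := h
  have hlne : l ≠ 0 := ne_of_gt hl
  refine ⟨⟨?_, ?_, ?_, ?_⟩, ?_⟩
  · -- convexity
    intro x y t ht ht1
    rw [epiMul_pos_apply hl, epiMul_pos_apply hl, epiMul_pos_apply hl]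
    have hrw : l⁻¹ • (t • x + (1 - t) • y) = t • (l⁻¹ • x) + (1 - t) • (l⁻¹ • y) := by
      module
    rw [hrw]
    calc (l : EReal) * u (t • (l⁻¹ • x) + (1 - t) • (l⁻¹ • y))
        ≤ (l : EReal) * ((t : EReal) * u (l⁻¹ • x) + ((1 - t : ℝ) : EReal) * u (l⁻¹ • y)) :=
          ereal_mul_mono hl (hconv _ _ t ht ht1)
      _ = (t : EReal) * ((l:EReal) * u (l⁻¹ • x)) + ((1 - t : ℝ) : EReal) * ((l:EReal) * u (l⁻¹ • y)) :=
          ereal_mul_dist hl ht (by linarith) (hbot _) (hbot _)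
  · -- lower semicontinuity
    have h1 : LowerSemicontinuous (fun x : Vn n => u (l⁻¹ • x)) :=
      LowerSemicontinuous.comp hlsc (continuous_const_smul _)
    have h2 := Continuous.comp_lowerSemicontinuous (ereal_mul_continuous hl) h1
      (ereal_mul_strictMono hl).monotone
    have heq : epiMul l u = (fun a => (l:EReal) * a) ∘ fun x : Vn n => u (l⁻¹ • x) := by
      funext x; rw [epiMul_pos_apply hl]; rfl
    rw [heq]; exact h2
  · intro x
    rw [epiMul_pos_apply hl]
    exact ereal_mul_ne_bot hl (hbot _)
  · refine ⟨l • x₀, ?_⟩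
    rw [epiMul_pos_apply hl, smul_smul, inv_mul_cancel₀ hlne, one_smul]
    have : u x₀ = ((u x₀).toReal : EReal) := (EReal.coe_toReal hx₀ (hbot x₀)).symm
    rw [this, ← EReal.coe_mul]
    exact EReal.coe_ne_top _
  · -- super-coercivity
    intro M
    obtain ⟨R₀, hR₀⟩ := hsc M
    refine ⟨l * max R₀ 0, fun x hx => ?_⟩
    rw [epiMul_pos_apply hl]
    have hnorm : ‖l⁻¹ • x‖ = l⁻¹ * ‖x‖ := by
      rw [norm_smul, Real.norm_eq_abs, abs_of_pos (by positivity)]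
    have hx' : R₀ ≤ ‖l⁻¹ • x‖ := by
      rw [hnorm]
      have h2 : l * max R₀ 0 ≤ ‖x‖ := hx
      calc R₀ ≤ max R₀ 0 := le_max_left _ _
        _ = l⁻¹ * (l * max R₀ 0) := by field_simp
        _ ≤ l⁻¹ * ‖x‖ := by
            apply mul_le_mul_of_nonneg_left h2 (by positivity)
    have h3 : ((M * ‖l⁻¹ • x‖ : ℝ) : EReal) ≤ u (l⁻¹ • x) := hR₀ _ hx'
    calc ((M * ‖x‖ : ℝ) : EReal) = (l : EReal) * ((M * ‖l⁻¹ • x‖ : ℝ) : EReal) := by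
          rw [← EReal.coe_mul, EReal.coe_eq_coe_iff, hnorm]
          field_simp
      _ ≤ (l : EReal) * u (l⁻¹ • x) := ereal_mul_mono hl h3

lemma epiMul_minE {l : ℝ} (hl : 0 < l) (u : Vn n → EReal) :
    minE (epiMul l u) = (l : EReal) * minE u := by
  have hlne : l ≠ 0 := ne_of_gt hl
  unfold minE
  have h1 : (⨅ x : Vn n, epiMul l u x) = ⨅ x : Vn n, (l : EReal) * u (l⁻¹ • x) := by
    exact iInf_congr (fun x => epiMul_pos_apply hl u x)
  rw [h1]
  let e : Vn n ≃ Vn n :=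
    ⟨fun x => l • x, fun x => l⁻¹ • x, fun x => by simp [smul_smul, inv_mul_cancel₀ hlne],
      fun x => by simp [smul_smul, mul_inv_cancel₀ hlne]⟩
  have h2 : (⨅ x : Vn n, (l : EReal) * u (l⁻¹ • x)) = ⨅ y : Vn n, (l : EReal) * u y := by
    have h3 := Equiv.iInf_comp e (g := fun y => (l : EReal) * u (l⁻¹ • y))
    rw [← h3]
    refine iInf_congr (fun x => ?_)
    simp only [e, Equiv.coe_fn_mk, smul_smul, inv_mul_cancel₀ hlne, one_smul]
  rw [h2]
  exact ((erealMulIso l hl).map_iInf u).symm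


lemma minE_inf (u v : Vn n → EReal) : minE (u ⊓ v) = minE u ⊓ minE v := by
  unfold minE
  simp only [Pi.inf_apply]
  exact iInf_inf_eq

lemma minE_le_sup {u v : Vn n → EReal} (hu : u ∈ ConvSc n) (hv : v ∈ ConvSc n)
    (hw : IsConvexFn (u ⊓ v)) (h : minE u ≤ minE v) : minE (u ⊔ v) ≤ minE v := by
  obtain ⟨xu, hxu, hubot, hutop⟩ := exists_min hu
  obtain ⟨xv, hxv, hvbot, hvtop⟩ := exists_min hv
  set b : ℝ := (minE v).toReal with hb
  have hβ : minE v = (b : EReal) := (EReal.coe_toReal hvtop hvbot).symm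
  set c : ℝ → Vn n := fun t => t • xv + (1 - t) • xu with hc
  have hccont : Continuous c := by
    apply Continuous.add
    · exact continuous_id.smul continuous_const
    · exact (continuous_const.sub continuous_id).smul continuous_const
  have hAclosed : IsClosed (c ⁻¹' {x | u x ≤ (b : EReal)}) :=
    (hu.1.2.1.isClosed_preimage (b : EReal)).preimage hccont
  have hBclosed : IsClosed (c ⁻¹' {x | v x ≤ (b : EReal)}) :=
    (hv.1.2.1.isClosed_preimage (b : EReal)).preimage hccont
  have hcover : Set.Icc (0:ℝ) 1 ⊆
      (c ⁻¹' {x | u x ≤ (b : EReal)}) ∪ (c ⁻¹' {x | v x ≤ (b : EReal)}) := by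
    intro t ht
    rcases eq_or_lt_of_le ht.1 with h0 | h0
    · left
      have hc0 : c t = xu := by rw [hc, ← h0]; simp
      simp only [Set.mem_preimage, Set.mem_setOf_eq, hc0, hxu]
      exact le_trans h (le_of_eq hβ)
    rcases eq_or_lt_of_le ht.2 with h1 | h1
    · right
      have hc1 : c t = xv := by rw [hc, h1]; simp
      simp only [Set.mem_preimage, Set.mem_setOf_eq, hc1, hxv]
      exact le_of_eq hβ
    -- interior case
    have hconv := hw xv xu t h0 h1
    have h2 : (u ⊓ v) xv ≤ (b : EReal) := by
      rw [← hβ]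
      exact le_trans (by exact inf_le_right) (le_of_eq hxv)
    have h3 : (u ⊓ v) xu ≤ (b : EReal) := by
      refine le_trans (le_trans (by exact inf_le_left) (le_of_eq hxu)) (le_trans h (le_of_eq hβ))
    have h4 : (u ⊓ v) (t • xv + (1 - t) • xu) ≤ (b : EReal) := by
      refine le_trans hconv ?_
      have h5 : (t : EReal) * (u ⊓ v) xv ≤ (t : EReal) * (b : EReal) :=
        ereal_mul_mono h0 h2
      have h6 : ((1 - t : ℝ) : EReal) * (u ⊓ v) xu ≤ ((1 - t : ℝ) : EReal) * (b : EReal) :=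
        ereal_mul_mono (by linarith) h3
      refine le_trans (add_le_add h5 h6) (le_of_eq ?_)
      rw [← EReal.coe_mul, ← EReal.coe_mul, ← EReal.coe_add, EReal.coe_eq_coe_iff]
      ring
    have h7 : u (c t) ⊓ v (c t) ≤ (b : EReal) := h4
    rcases inf_le_iff.1 h7 with h8 | h8
    · exact Or.inl h8
    · exact Or.inr h8
  obtain ⟨t₀, ht₀⟩ := isPreconnected_closed_iff.1 isPreconnected_Icc _ _ hAclosed hBclosed
    hcover ⟨0, by constructor <;> norm_num, by
      simp only [Set.mem_preimage, Set.mem_setOf_eq, hc]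
      have hc0 : (0:ℝ) • xv + (1 - (0:ℝ)) • xu = xu := by simp
      rw [hc0, hxu]; exact le_trans h (le_of_eq hβ)⟩
    ⟨1, by constructor <;> norm_num, by
      simp only [Set.mem_preimage, Set.mem_setOf_eq, hc]
      have hc1 : (1:ℝ) • xv + (1 - (1:ℝ)) • xu = xv := by simp
      rw [hc1, hxv]; exact le_of_eq hβ⟩
  have h9 : (u ⊔ v) (c t₀) ≤ (b : EReal) := sup_le ht₀.2.1 ht₀.2.2
  rw [hβ]
  exact le_trans (iInf_le _ (c t₀)) h9

lemma minE_sup {u v : Vn n → EReal} (hu : u ∈ ConvSc n) (hv : v ∈ ConvSc n)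
    (hw : IsConvexFn (u ⊓ v)) : minE (u ⊔ v) = minE u ⊔ minE v := by
  have hge : minE u ⊔ minE v ≤ minE (u ⊔ v) := by
    refine sup_le ?_ ?_ <;> exact le_iInf (fun x => le_trans (iInf_le _ x) (by simp))
  refine le_antisymm ?_ hge
  rcases le_total (minE u) (minE v) with h | h
  · rw [sup_eq_right.2 h]
    exact minE_le_sup hu hv hw h
  · rw [sup_eq_left.2 h]
    have hw' : IsConvexFn (v ⊓ u) := by rwa [inf_comm]
    rw [sup_comm]
    exact minE_le_sup hv hu hw' h


lemma not_frequently_low {uk : ℕ → Vn n → EReal} {u : Vn n → EReal}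
    (hepi : EpiConverges uk u) {S : Set (Vn n)} (hS : IsCompact S) (hScl : IsClosed S)
    {c : EReal} (hgt : ∀ z ∈ S, c < u z) :
    ¬ ∃ᶠ k in atTop, ∃ p ∈ S, uk k p ≤ c := by
  intro hfreq
  obtain ⟨φ, hφ, hP⟩ := extraction_of_frequently_atTop hfreq
  choose p hpS hpc using hP
  obtain ⟨z, hz, ψ, hψ, hconv⟩ := tendsto_subseq_of_bounded hS.isBounded hpS
  have hzS : z ∈ S := by rwa [hScl.closure_eq] at hz
  set σ : ℕ → ℕ := φ ∘ ψ with hσ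
  have hσmono : StrictMono σ := hφ.comp hψ
  classical
  set xk : ℕ → Vn n := fun k => if h : ∃ j, σ j = k then p (ψ h.choose) else z with hxk
  have hxkσ : ∀ j, xk (σ j) = p (ψ j) := by
    intro j
    have h : ∃ j', σ j' = σ j := ⟨j, rfl⟩
    rw [hxk]
    simp only [dif_pos h]
    exact congrArg (fun j => p (ψ j)) (hσmono.injective h.choose_spec)
  have hxktend : Tendsto xk atTop (𝓝 z) := by
    rw [Metric.tendsto_atTop]
    intro ε hε
    obtain ⟨J, hJ⟩ := Metric.tendsto_atTop.1 hconv ε hε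
    refine ⟨σ J, fun k hk => ?_⟩
    by_cases h : ∃ j, σ j = k
    · have hj : h.choose ≥ J := by
        have := h.choose_spec
        by_contra hcon
        push_neg at hcon
        have := hσmono hcon
        omega
      have : xk k = p (ψ h.choose) := by rw [hxk]; simp only [dif_pos h]
      rw [this]
      exact hJ h.choose hj
    · have : xk k = z := by rw [hxk]; simp only [dif_neg h]
      rw [this]; simpa using hε
  have hliminf : u z ≤ liminf (fun k => uk k (xk k)) atTop := (hepi z).1 xk hxktend
  have hfreq2 : ∃ᶠ k in atTop, uk k (xk k) ≤ c := by
    rw [frequently_atTop]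
    intro N
    refine ⟨σ N, hσmono.le_apply, ?_⟩
    rw [hxkσ N]
    exact hpc (ψ N)
  have := liminf_le_of_frequently_le' hfreq2
  exact absurd (le_trans hliminf this) (not_le.2 (hgt z hzS))


lemma minE_tendsto {uk : ℕ → Vn n → EReal} {u : Vn n → EReal}
    (huk : ∀ k, uk k ∈ ConvSc n) (hu : u ∈ ConvSc n) (hepi : EpiConverges uk u) :
    Tendsto (fun k => (minE (uk k)).toReal) atTop (𝓝 ((minE u).toReal)) := by
  obtain ⟨xs, hxs, hubot, hutop⟩ := exists_min hu
  set μ : ℝ := (minE u).toReal with hμdef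
  have hμ : minE u = (μ : EReal) := (EReal.coe_toReal hutop hubot).symm
  set mk : ℕ → ℝ := fun k => (minE (uk k)).toReal with hmkdef
  have hmk : ∀ k, minE (uk k) = ((mk k : ℝ) : EReal) := by
    intro k
    obtain ⟨_, _, h1, h2⟩ := exists_min (huk k)
    exact (EReal.coe_toReal h2 h1).symm
  obtain ⟨xk0, hxk0tend, hval⟩ := (hepi xs).2
  rw [hxs, hμ] at hval
  -- upper bound
  have hupper : ∀ ε : ℝ, 0 < ε → ∀ᶠ k in atTop, mk k < μ + ε := by
    intro ε hε
    have hlt : (μ : EReal) < ((μ + ε : ℝ) : EReal) := by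
      rw [EReal.coe_lt_coe_iff]; linarith
    filter_upwards [hval.eventually_lt_const hlt] with k hk
    have h1 : ((mk k : ℝ) : EReal) < ((μ + ε : ℝ) : EReal) := by
      rw [← hmk k]
      exact lt_of_le_of_lt (iInf_le _ (xk0 k)) hk
    exact EReal.coe_lt_coe_iff.1 h1
  -- lower bound
  have hlower : ∀ ε : ℝ, 0 < ε → ∀ᶠ k in atTop, μ - ε < mk k := by
    intro ε hε
    by_contra hcon
    rw [Filter.not_eventually] at hcon
    simp only [not_lt] at hcon
    -- constants
    set C₀ : ℝ := μ + 1 with hC₀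
    have hev1 : ∀ᶠ k in atTop, uk k (xk0 k) < ((C₀ : ℝ) : EReal) :=
      hval.eventually_lt_const (by rw [EReal.coe_lt_coe_iff]; linarith)
    set B : ℝ := ‖xs‖ + 1 with hB
    have hev2 : ∀ᶠ k in atTop, ‖xk0 k‖ ≤ B := by
      exact hxk0tend.norm.eventually_le_const (show ‖xs‖ < B by rw [hB]; linarith)
    set M₁ : ℝ := max (C₀ + 1) 1 with hM₁
    obtain ⟨R₀, hR₀⟩ := hu.2 M₁
    set R : ℝ := max (max R₀ 1) (B + 1) with hR
    have hR1 : (1:ℝ) ≤ R := le_trans (le_max_right _ _) (le_max_left _ _)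
    have hRB : B + 1 ≤ R := le_max_right _ _
    have hRR₀ : R₀ ≤ R := le_trans (le_max_left _ _) (le_max_left _ _)
    have hsphere : ∀ z ∈ Metric.sphere (0 : Vn n) R, ((C₀ : ℝ) : EReal) < u z := by
      intro z hzmem
      have hz : ‖z‖ = R := by rwa [mem_sphere_zero_iff_norm] at hzmem
      have h1 : ((M₁ * ‖z‖ : ℝ) : EReal) ≤ u z := hR₀ z (by rw [hz]; exact hRR₀)
      refine lt_of_lt_of_le ?_ h1
      rw [EReal.coe_lt_coe_iff, hz]
      have h2 : C₀ + 1 ≤ M₁ := le_max_left _ _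
      have h3 : (1:ℝ) ≤ M₁ := le_max_right _ _
      nlinarith
    have hballgt : ∀ z : Vn n, z ∈ Metric.closedBall (0 : Vn n) R →
        ((μ - ε : ℝ) : EReal) < u z := by
      intro z _
      refine lt_of_lt_of_le ?_ (le_trans (le_of_eq hμ.symm) (iInf_le _ z))
      rw [EReal.coe_lt_coe_iff]; linarith
    -- frequently, we find a low point
    have hfreq : ∃ᶠ k in atTop,
        (∃ p ∈ Metric.closedBall (0 : Vn n) R, uk k p ≤ ((μ - ε : ℝ) : EReal)) ∨
        (∃ p ∈ Metric.sphere (0 : Vn n) R, uk k p ≤ ((C₀ : ℝ) : EReal)) := by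
      refine ((hcon.and_eventually hev1).and_eventually hev2).mono ?_
      rintro k ⟨⟨hk1, hk2⟩, hk3⟩
      obtain ⟨y, hy, -, -⟩ := exists_min (huk k)
      have hyval : uk k y ≤ ((μ - ε : ℝ) : EReal) := by
        rw [hy, hmk k, EReal.coe_le_coe_iff]
        exact hk1
      by_cases hyR : ‖y‖ ≤ R
      · exact Or.inl ⟨y, by simpa [Metric.mem_closedBall, dist_eq_norm] using hyR, hyval⟩
      · push_neg at hyR
        -- IVT to find a sphere point on the segment
        right
        set g : ℝ → ℝ := fun t => ‖xk0 k + t • (y - xk0 k)‖ with hg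
        have hgcont : ContinuousOn g (Set.Icc 0 1) := by
          apply Continuous.continuousOn
          exact (continuous_const.add (continuous_id.smul continuous_const)).norm
        have hg0 : g 0 = ‖xk0 k‖ := by simp [hg]
        have hg1 : g 1 = ‖y‖ := by simp [hg]
        have hmem : R ∈ Set.Icc (g 0) (g 1) := by
          constructor
          · rw [hg0]; linarith
          · rw [hg1]; linarith
        obtain ⟨t, ht, hgt'⟩ := intermediate_value_Icc (by norm_num : (0:ℝ) ≤ 1) hgcont hmem
        set p : Vn n := xk0 k + t • (y - xk0 k) with hp
        have hpnorm : ‖p‖ = R := hgt'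
        have hpsphere : p ∈ Metric.sphere (0 : Vn n) R := by
          simpa [Metric.mem_sphere, dist_eq_norm] using hpnorm
        have ht0 : t ≠ 0 := by
          intro h0
          have : g 0 = R := by rw [← h0]; exact hgt'
          rw [hg0] at this
          have : ‖xk0 k‖ < R := by linarith
          linarith [this.le.trans_eq rfl, hk3]
        refine ⟨p, hpsphere, ?_⟩
        rcases eq_or_lt_of_le ht.2 with h1 | h1
        · have hpy : p = y := by rw [hp, h1]; module
          rw [hpy]
          refine le_trans hyval ?_
          rw [EReal.coe_le_coe_iff]; linarith
        · -- 0 < t < 1 : convexity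
          have ht0' : 0 < t := lt_of_le_of_ne ht.1 (Ne.symm ht0)
          have hprw : p = t • y + (1 - t) • xk0 k := by rw [hp]; module
          have hconv := (huk k).1.1 y (xk0 k) t ht0' h1
          rw [← hprw] at hconv
          refine le_trans hconv ?_
          have h5 : (t : EReal) * uk k y ≤ (t : EReal) * ((C₀ : ℝ) : EReal) := by
            refine ereal_mul_mono ht0' (le_trans hyval ?_)
            rw [EReal.coe_le_coe_iff]; linarith
          have h6 : ((1 - t : ℝ) : EReal) * uk k (xk0 k) ≤ ((1 - t : ℝ) : EReal) * ((C₀ : ℝ) : EReal) :=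
            ereal_mul_mono (by linarith) (le_of_lt hk2)
          refine le_trans (add_le_add h5 h6) (le_of_eq ?_)
          rw [← EReal.coe_mul, ← EReal.coe_mul, ← EReal.coe_add, EReal.coe_eq_coe_iff]
          ring
    rcases frequently_or_distrib.1 hfreq with hf | hf
    · exact not_frequently_low hepi (isCompact_closedBall _ _) Metric.isClosed_closedBall hballgt hf
    · exact not_frequently_low hepi (isCompact_sphere _ _) Metric.isClosed_sphere hsphere hf
  -- combine
  rw [Metric.tendsto_atTop]
  intro ε hε
  obtain ⟨N₁, hN₁⟩ := eventually_atTop.1 (hupper ε hε)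
  obtain ⟨N₂, hN₂⟩ := eventually_atTop.1 (hlower ε hε)
  refine ⟨max N₁ N₂, fun k hk => ?_⟩
  have h1 := hN₁ k (le_trans (le_max_left _ _) hk)
  have h2 := hN₂ k (le_trans (le_max_right _ _) hk)
  rw [Real.dist_eq, abs_sub_lt_iff]
  constructor <;> linarith


/-- A finite sum of real power functions vanishing on `[2, ∞)` has all
coefficients zero. -/
lemma power_sum_zero (s : Finset ℝ) :
    ∀ C : ℝ → ℝ, (∀ l : ℝ, 2 ≤ l → ∑ a ∈ s, C a * l ^ a = 0) → ∀ a ∈ s, C a = 0 := by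
  classical
  induction s using Finset.induction_on_max with
  | empty => intro C _ a ha; exact absurd ha (Finset.notMem_empty a)
  | insert b s hb ih =>
    intro C hC
    have hbs : b ∉ s := fun h => absurd (hb b h) (lt_irrefl b)
    -- C b = 0
    have hCb : C b = 0 := by
      have htend : Tendsto (fun l : ℝ => C b + ∑ a ∈ s, C a * l ^ (a - b)) atTop
          (𝓝 (C b + 0)) := by
        refine tendsto_const_nhds.add ?_
        have : ∀ a ∈ s, Tendsto (fun l : ℝ => C a * l ^ (a - b)) atTop (𝓝 0) := by
          intro a ha
          have h1 : Tendsto (fun l : ℝ => l ^ (a - b)) atTop (𝓝 0) := by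
            have : a - b = -(b - a) := by ring
            rw [this]
            exact tendsto_rpow_neg_atTop (by linarith [hb a ha])
          simpa using h1.const_mul (C a)
        have := tendsto_finset_sum s fun a ha => this a ha
        simpa using this
      have heq : ∀ᶠ l : ℝ in atTop, (fun l : ℝ => C b + ∑ a ∈ s, C a * l ^ (a - b)) l = 0 := by
        filter_upwards [eventually_ge_atTop (2:ℝ)] with l hl
        have hl0 : (0:ℝ) < l := by linarith
        have h2 := hC l hl
        rw [Finset.sum_insert hbs] at h2
        have h3 : l ^ (-b) * (C b * l ^ b + ∑ a ∈ s, C a * l ^ a) = 0 := by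
          rw [h2, mul_zero]
        rw [mul_add, Finset.mul_sum] at h3
        have h4 : l ^ (-b) * (C b * l ^ b) = C b := by
          rw [← mul_assoc, mul_comm (l ^ (-b)) (C b), mul_assoc, ← Real.rpow_add hl0]
          simp
        have h5 : ∀ a ∈ s, l ^ (-b) * (C a * l ^ a) = C a * l ^ (a - b) := by
          intro a ha
          rw [← mul_assoc, mul_comm (l ^ (-b)) (C a), mul_assoc, ← Real.rpow_add hl0]
          ring_nf
        rw [h4, Finset.sum_congr rfl h5] at h3
        exact h3
      have h6 : Tendsto (fun l : ℝ => C b + ∑ a ∈ s, C a * l ^ (a - b)) atTop (𝓝 0) :=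
        Tendsto.congr' (EventuallyEq.symm heq) tendsto_const_nhds
      have := tendsto_nhds_unique htend h6
      linarith
    intro a ha
    rcases Finset.mem_insert.1 ha with rfl | ha'
    · exact hCb
    · refine ih C ?_ a ha'
      intro l hl
      have h2 := hC l hl
      rw [Finset.sum_insert hbs, hCb, zero_mul, zero_add] at h2
      exact h2


/-- the test function `x ↦ ‖x‖² + 1` -/
def u0 {n : ℕ} : Vn n → EReal := fun x => ((‖x‖^2 + 1 : ℝ) : EReal)

lemma u0_mem : (u0 : Vn n → EReal) ∈ ConvSc n := by
  refine ⟨⟨?_, ?_, ?_, ?_⟩, ?_⟩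
  · intro x y t ht ht1
    unfold u0
    rw [← EReal.coe_mul, ← EReal.coe_mul, ← EReal.coe_add, EReal.coe_le_coe_iff]
    have hinner : (inner ℝ x y : ℝ) ≤ ‖x‖ * ‖y‖ := real_inner_le_norm x y
    have hexp : ‖t • x + (1 - t) • y‖^2
        = t^2 * ‖x‖^2 + 2 * (t * (1-t) * (inner ℝ x y : ℝ)) + (1-t)^2 * ‖y‖^2 := by
      rw [@norm_add_sq_real (Vn n)]
      rw [real_inner_smul_left, real_inner_smul_right, norm_smul, norm_smul]
      rw [Real.norm_eq_abs, Real.norm_eq_abs, abs_of_pos ht, abs_of_pos (by linarith : (0:ℝ) < 1 - t)]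
      ring
    rw [hexp]
    nlinarith [sq_nonneg (‖x‖ - ‖y‖), mul_pos ht (show (0:ℝ) < 1 - t by linarith), norm_nonneg x, norm_nonneg y]
  · apply Continuous.lowerSemicontinuous
    exact continuous_coe_real_ereal.comp (by continuity)
  · intro x; exact EReal.coe_ne_bot _
  · exact ⟨0, EReal.coe_ne_top _⟩
  · intro M
    refine ⟨|M|, fun x hx => ?_⟩
    unfold u0
    rw [EReal.coe_le_coe_iff]
    nlinarith [le_abs_self M, abs_nonneg M, norm_nonneg x]

lemma u0_minE : minE (u0 : Vn n → EReal) = (1 : EReal) := by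
  refine le_antisymm ?_ ?_
  · refine le_trans (iInf_le _ 0) ?_
    unfold u0
    rw [show ((1:EReal) = ((1:ℝ) : EReal)) by norm_cast, EReal.coe_le_coe_iff]
    simp
  · refine le_iInf (fun x => ?_)
    unfold u0
    rw [show ((1:EReal) = ((1:ℝ) : EReal)) by norm_cast, EReal.coe_le_coe_iff]
    nlinarith [norm_nonneg x, sq_nonneg ‖x‖]

/-- the profile function -/
def zeta (t : ℝ) : ℝ := max 0 (1 - |t - 1|)

lemma zeta_continuous : Continuous zeta := by
  exact continuous_const.max (continuous_const.sub (continuous_id.sub continuous_const).abs)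

lemma zeta_one : zeta 1 = 1 := by norm_num [zeta]

lemma zeta_ge_two {t : ℝ} (ht : 2 ≤ t) : zeta t = 0 := by
  have : |t - 1| = t - 1 := abs_of_nonneg (by linarith)
  rw [zeta, this]
  exact max_eq_left (by linarith)

/-- Our valuation. -/
def Zval {n : ℕ} : (Vn n → EReal) → ℝ := fun u => zeta ((minE u).toReal)

end Proof

/-- **No epi-homogeneous decomposition without vertical translation
invariance** (Theorem 8.2): there exists a continuous, translation invariant
valuation on `Conv_sc(ℝⁿ)` that is not a finite sum of epi-homogeneous
valuations. -/
theorem no_epihomogeneous_decomposition_sc (n : ℕ) :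
    ∃ Z : (Vn n → EReal) → ℝ,
      ContinuousVal (ConvSc n) Z ∧ IsValuation (ConvSc n) Z ∧
      TranslationInvariant (ConvSc n) Z ∧
      ¬ ∃ (m : ℕ) (Zs : Fin m → (Vn n → EReal) → ℝ) (α : Fin m → ℝ),
          (∀ i, IsValuation (ConvSc n) (Zs i) ∧
            EpiHomogeneous (ConvSc n) (Zs i) (α i)) ∧
          ∀ u ∈ ConvSc n, Z u = ∑ i, Zs i u := by
  classical
  open Proof Helpers in
  refine ⟨Zval, ?_, ?_, ?_, ?_⟩
  · -- continuity
    intro uk u huk hu hepi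
    exact (Proof.zeta_continuous.tendsto _).comp (Proof.minE_tendsto huk hu hepi)
  · -- valuation
    intro u v hu hv hsup hinf
    obtain ⟨_, _, hubot, hutop⟩ := Proof.exists_min hu
    obtain ⟨_, _, hvbot, hvtop⟩ := Proof.exists_min hv
    set a : ℝ := (Proof.minE u).toReal with ha
    set b : ℝ := (Proof.minE v).toReal with hb
    have hua : Proof.minE u = (a : EReal) := (EReal.coe_toReal hutop hubot).symm
    have hvb : Proof.minE v = (b : EReal) := (EReal.coe_toReal hvtop hvbot).symm
    have hsupmin : Proof.minE (u ⊔ v) = ((max a b : ℝ) : EReal) := by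
      rw [Proof.minE_sup hu hv hinf.1.1, hua, hvb]
      rcases le_total a b with h | h
      · rw [max_eq_right h, sup_eq_right.2 (by exact_mod_cast h)]
      · rw [max_eq_left h, sup_eq_left.2 (by exact_mod_cast h)]
    have hinfmin : Proof.minE (u ⊓ v) = ((min a b : ℝ) : EReal) := by
      rw [Proof.minE_inf, hua, hvb]
      rcases le_total a b with h | h
      · rw [min_eq_left h, inf_eq_left.2 (by exact_mod_cast h)]
      · rw [min_eq_right h, inf_eq_right.2 (by exact_mod_cast h)]
    show Proof.zeta ((Proof.minE (u ⊔ v)).toReal) + Proof.zeta ((Proof.minE (u ⊓ v)).toReal)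
        = Proof.zeta ((Proof.minE u).toReal) + Proof.zeta ((Proof.minE v).toReal)
    rw [hsupmin, hinfmin, hua, hvb]
    simp only [EReal.toReal_coe]
    rcases le_total a b with h | h
    · rw [max_eq_right h, min_eq_left h, add_comm]
    · rw [max_eq_left h, min_eq_right h]
  · -- translation invariance
    intro u hu x₀
    show Proof.zeta ((Proof.minE fun x => u (x - x₀)).toReal) = Proof.zeta ((Proof.minE u).toReal)
    have : (Proof.minE fun x => u (x - x₀)) = Proof.minE u := by
      unfold Proof.minE
      exact Equiv.iInf_comp (Equiv.subRight x₀) (g := u)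
    rw [this]
  · -- no decomposition
    rintro ⟨m, Zs, α, hZs, hdec⟩
    set c : Fin m → ℝ := fun i => Zs i Proof.u0 with hc
    have key : ∀ l : ℝ, 0 < l → Proof.zeta l = ∑ i, c i * l ^ (α i) := by
      intro l hl
      have h1 : Proof.Zval (epiMul l (Proof.u0 : Vn n → EReal)) = Proof.zeta l := by
        show Proof.zeta ((Proof.minE (epiMul l (Proof.u0 : Vn n → EReal))).toReal) = _
        rw [Proof.epiMul_minE hl, Proof.u0_minE, mul_one, EReal.toReal_coe]
      have h2 := hdec _ (Proof.epiMul_mem hl Proof.u0_mem)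
      rw [h1] at h2
      rw [h2]
      refine Finset.sum_congr rfl (fun i _ => ?_)
      rw [(hZs i).2 Proof.u0 Proof.u0_mem l hl, mul_comm]
    -- group by exponents
    set s : Finset ℝ := Finset.image α Finset.univ with hs
    set C : ℝ → ℝ := fun a => ∑ i ∈ Finset.univ.filter (fun i => α i = a), c i with hC
    have hgroup : ∀ l : ℝ, 0 < l → ∑ i, c i * l ^ (α i) = ∑ a ∈ s, C a * l ^ a := by
      intro l hl
      rw [← Finset.sum_fiberwise_of_maps_to (fun i _ => Finset.mem_image_of_mem α (Finset.mem_univ i))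
        (fun i => c i * l ^ (α i))]
      refine Finset.sum_congr rfl (fun a _ => ?_)
      rw [hC, Finset.sum_mul]
      refine Finset.sum_congr rfl (fun i hi => ?_)
      rw [(Finset.mem_filter.1 hi).2]
    have hzero : ∀ a ∈ s, C a = 0 := by
      refine Proof.power_sum_zero s C (fun l hl => ?_)
      rw [← hgroup l (by linarith), ← key l (by linarith), Proof.zeta_ge_two hl]
    have hone : Proof.zeta 1 = 0 := by
      rw [key 1 one_pos, hgroup 1 one_pos]
      exact Finset.sum_eq_zero (fun a ha => by rw [hzero a ha, zero_mul])
    rw [Proof.zeta_one] at hone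
    exact one_ne_zero hone
end
end

section
/- Every continuous and dually epi-translation invariant valuation Z : Conv_od(ℝⁿ) → ℝ is constant, where Conv_od(ℝⁿ) is the set of functions in Conv(ℝⁿ) whose effective domain contains the origin in its interior. -/
open Filter Topology MeasureTheory

noncomputable section

/-- `Conv_od(ℝⁿ)`: functions in `Conv(ℝⁿ)` whose effective domain contains
the origin in its interior. -/
def ConvOd (n : ℕ) : Set (Vn n → EReal) :=
  {u | u ∈ ConvSet n ∧ (0 : Vn n) ∈ interior {x : Vn n | u x ≠ ⊤}}

/-- Dual epi-translation invariance for extended-real-valued functions: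
invariance under addition of affine functions `u ↦ u + ℓ + c`. -/
def DuallyEpiTranslationInvariantE {n : ℕ} (X : Set (Vn n → EReal))
    (Z : (Vn n → EReal) → ℝ) : Prop :=
  ∀ u ∈ X, ∀ ℓ : Vn n →ₗ[ℝ] ℝ, ∀ c : ℝ,
    Z (fun x => u x + (ℓ x : EReal) + (c : EReal)) = Z u

namespace ThmAux

variable {n : ℕ}

/-! ### EReal helpers -/

lemma ereal_mul_add_of_pos {t : ℝ} (ht : 0 < t) (a : EReal) (c : ℝ) (ha : a ≠ ⊥) :
    (t : EReal) * (a + (c : EReal)) = (t : EReal) * a + ((t * c : ℝ) : EReal) := by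
  induction a with
  | bot => exact absurd rfl ha
  | coe r =>
      rw [← EReal.coe_add, ← EReal.coe_mul, ← EReal.coe_mul, ← EReal.coe_add, mul_add]
  | top =>
      rw [EReal.top_add_coe, EReal.coe_mul_top_of_pos ht, EReal.top_add_coe]

lemma ereal_le_liminf_of_lsc {f : Vn n → EReal} (hf : LowerSemicontinuous f)
    {xk : ℕ → Vn n} {x : Vn n} (hx : Tendsto xk atTop (𝓝 x)) :
    f x ≤ liminf (fun k => f (xk k)) atTop := by
  refine le_of_forall_lt fun c hc => ?_
  obtain ⟨c', hc1, hc2⟩ := exists_between hc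
  obtain ⟨N, hN⟩ := eventually_atTop.1 (hx.eventually (hf x c' hc2))
  have h1 : (c' : EReal) ≤ ⨅ i, ⨅ _ : i ≥ N, f (xk i) :=
    le_iInf₂ fun i hi => (hN i hi).le
  have h2 : (⨅ i, ⨅ _ : i ≥ N, f (xk i)) ≤ liminf (fun k => f (xk k)) atTop := by
    rw [liminf_eq_iSup_iInf_of_nat]
    exact le_iSup (fun m => ⨅ i, ⨅ _ : i ≥ m, f (xk i)) N
  exact lt_of_lt_of_le hc1 (h1.trans h2)


/-- Epi-convergence of a pointwise nondecreasing sequence of lsc functions to its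
pointwise supremum. -/
lemma epi_of_mono {w : ℕ → Vn n → EReal} {wl : Vn n → EReal}
    (hlsc : ∀ k, LowerSemicontinuous (w k))
    (hmono : ∀ k x, w k x ≤ w (k + 1) x)
    (hsup : ∀ x, (⨆ k, w k x) = wl x) : EpiConverges w wl := by
  have hmono' : ∀ x, Monotone fun k => w k x := fun x =>
    monotone_nat_of_le_succ (fun k => hmono k x)
  intro x
  constructor
  · intro xk hxk
    rw [← hsup x]
    refine iSup_le fun m => ?_
    have h1 : w m x ≤ liminf (fun k => w m (xk k)) atTop :=
      ereal_le_liminf_of_lsc (hlsc m) hxk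
    refine h1.trans (liminf_le_liminf ?_)
    filter_upwards [eventually_ge_atTop m] with k hk
    exact hmono' (xk k) hk
  · refine ⟨fun _ => x, tendsto_const_nhds, ?_⟩
    rw [← hsup x]
    exact tendsto_atTop_iSup (hmono' x)

/-! ### Lower semicontinuity helpers -/

lemma lsc_add_of_ne_bot {f g : Vn n → EReal} (hf : LowerSemicontinuous f)
    (hg : LowerSemicontinuous g) (hf' : ∀ z, f z ≠ ⊥) (hg' : ∀ z, g z ≠ ⊥) :
    LowerSemicontinuous (fun z => f z + g z) := by
  intro x c hc
  have hax : f x ≠ ⊥ := hf' x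
  have hbx : g x ≠ ⊥ := hg' x
  -- find reals a < f x, b < g x with c ≤ a + b
  obtain ⟨a, b, haf, hbg, hab⟩ :
      ∃ a b : ℝ, (a : EReal) < f x ∧ (b : EReal) < g x ∧ c ≤ ((a : EReal) + b) := by
    rcases eq_or_ne c ⊥ with rfl | hcb
    · rcases EReal.exists_between_coe_real (Ne.bot_lt hax) with ⟨a, _, ha⟩
      rcases EReal.exists_between_coe_real (Ne.bot_lt hbx) with ⟨b, _, hb⟩
      exact ⟨a, b, ha, hb, bot_le⟩
    · have hct : c ≠ ⊤ := (lt_of_lt_of_le hc le_top).ne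
      lift c to ℝ using ⟨hct, hcb⟩
      have hc' : (c : EReal) < f x + g x := hc
      cases hfx : f x with
      | bot => exact absurd hfx hax
      | coe r =>
          cases hgx : g x with
          | bot => exact absurd hgx hbx
          | coe s =>
              rw [hfx, hgx] at hc'
              have hrs : c < r + s := by exact_mod_cast hc'
              refine ⟨r - (r + s - c) / 2, s - (r + s - c) / 2, ?_, ?_, ?_⟩
              · exact_mod_cast by linarith
              · exact_mod_cast by linarith
              · rw [← EReal.coe_add]; exact_mod_cast by linarith
          | top =>
              refine ⟨r - 1, c - r + 1, ?_, ?_, ?_⟩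
              · exact_mod_cast by linarith
              · exact EReal.coe_lt_top _
              · rw [← EReal.coe_add]; exact_mod_cast by linarith
      | top =>
          cases hgx : g x with
          | bot => exact absurd hgx hbx
          | coe s =>
              refine ⟨c - s + 1, s - 1, ?_, ?_, ?_⟩
              · exact EReal.coe_lt_top _
              · exact_mod_cast by linarith
              · rw [← EReal.coe_add]; exact_mod_cast by linarith
          | top =>
              refine ⟨c / 2, c / 2, ?_, ?_, ?_⟩
              · exact EReal.coe_lt_top _
              · exact EReal.coe_lt_top _
              · rw [← EReal.coe_add]; exact_mod_cast by linarith
  filter_upwards [hf x a haf, hg x b hbg] with z hza hzb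
  exact lt_of_le_of_lt hab (EReal.add_lt_add hza hzb)


lemma ereal_pos_mul_ne_bot {t : ℝ} (ht : 0 < t) {a : EReal} (ha : a ≠ ⊥) :
    (t : EReal) * a ≠ ⊥ := by
  cases a with
  | bot => exact absurd rfl ha
  | coe r => rw [← EReal.coe_mul]; exact EReal.coe_ne_bot _
  | top => rw [EReal.coe_mul_top_of_pos ht]; exact top_ne_bot

lemma ereal_add_real_ne_top_iff {a : EReal} (c : ℝ) : a + (c : EReal) = ⊤ ↔ a = ⊤ := by
  cases a with
  | bot => simp [EReal.bot_add]
  | coe r =>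
      rw [← EReal.coe_add]
      exact iff_of_false (EReal.coe_ne_top _) (EReal.coe_ne_top _)
  | top => simp [EReal.top_add_coe]

/-! ### walls -/

open Classical in
def wall (β : ℝ) (L : Vn n →ₗ[ℝ] ℝ) : Vn n → EReal := fun z => if L z ≤ β then 0 else ⊤

lemma wall_nonneg (β : ℝ) (L : Vn n →ₗ[ℝ] ℝ) (z : Vn n) : 0 ≤ wall β L z := by
  unfold wall; split <;> simp

lemma wall_ne_bot (β : ℝ) (L : Vn n →ₗ[ℝ] ℝ) (z : Vn n) : wall β L z ≠ ⊥ := by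
  unfold wall; split <;> simp

lemma wall_lsc (β : ℝ) (L : Vn n →ₗ[ℝ] ℝ) : LowerSemicontinuous (wall β L) := by
  intro x c hc
  by_cases hx : L x ≤ β
  · have : wall β L x = 0 := if_pos hx
    rw [this] at hc
    filter_upwards with z
    exact lt_of_lt_of_le hc (wall_nonneg β L z)
  · have hopen : IsOpen {z : Vn n | β < L z} :=
      isOpen_lt continuous_const (L.continuous_of_finiteDimensional)
    have hmem : x ∈ {z : Vn n | β < L z} := lt_of_not_ge hx
    filter_upwards [hopen.mem_nhds hmem] with z hz
    have : wall β L z = ⊤ := if_neg (not_le.2 hz)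
    rw [this]
    exact lt_of_lt_of_le hc le_top

/-! ### convexity -/

lemma isConvexFn_add_real {u : Vn n → EReal} (hu : IsConvexFn u) (hub : ∀ z, u z ≠ ⊥)
    {g : Vn n → ℝ} (hg : ConvexOn ℝ Set.univ g) :
    IsConvexFn (fun z => u z + (g z : EReal)) := by
  intro x y t ht ht1
  have ht0 : (0:ℝ) ≤ t := le_of_lt ht
  have ht1' : (0:ℝ) < 1 - t := by linarith
  have hgc : g (t • x + (1 - t) • y) ≤ t * g x + (1 - t) * g y :=
    hg.2 (Set.mem_univ x) (Set.mem_univ y) ht0 (le_of_lt ht1') (by ring)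
  have h1 : u (t • x + (1 - t) • y) + (g (t • x + (1 - t) • y) : EReal)
      ≤ ((t : EReal) * u x + ((1 - t : ℝ) : EReal) * u y)
        + ((t * g x + (1 - t) * g y : ℝ) : EReal) :=
    add_le_add (hu x y t ht ht1) (by exact_mod_cast hgc)
  refine h1.trans (le_of_eq ?_)
  rw [EReal.coe_add, add_add_add_comm, ← ereal_mul_add_of_pos ht (u x) (g x) (hub x),
    ← ereal_mul_add_of_pos ht1' (u y) (g y) (hub y)]

lemma isConvexFn_add_wall {u : Vn n → EReal} (hu : IsConvexFn u) (hub : ∀ z, u z ≠ ⊥)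
    (β : ℝ) (L : Vn n →ₗ[ℝ] ℝ) :
    IsConvexFn (fun z => u z + wall β L z) := by
  intro x y t ht ht1
  have ht1' : (0:ℝ) < 1 - t := by linarith
  by_cases hx : L x ≤ β
  · by_cases hy : L y ≤ β
    · have hc : L (t • x + (1 - t) • y) ≤ β := by
        rw [map_add, _root_.map_smul, _root_.map_smul]
        calc t • L x + (1 - t) • L y ≤ t • β + (1 - t) • β := by
              apply add_le_add
              · exact smul_le_smul_of_nonneg_left hx (le_of_lt ht)
              · exact smul_le_smul_of_nonneg_left hy (le_of_lt ht1')
          _ = β := by simp [smul_eq_mul]; ring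
      have e1 : wall β L (t • x + (1 - t) • y) = 0 := if_pos hc
      have e2 : wall β L x = 0 := if_pos hx
      have e3 : wall β L y = 0 := if_pos hy
      simp only [e1, e2, e3, add_zero]
      exact hu x y t ht ht1
    · have e3 : wall β L y = ⊤ := if_neg hy
      have : ((1 - t : ℝ) : EReal) * (u y + wall β L y) = ⊤ := by
        rw [e3, EReal.add_top_of_ne_bot (hub y), EReal.coe_mul_top_of_pos ht1']
      rw [this, EReal.add_top_of_ne_bot]
      · exact le_top
      · apply ereal_pos_mul_ne_bot ht
        show u x + wall β L x ≠ ⊥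
        intro hbot
        rcases EReal.add_eq_bot_iff.1 hbot with h | h
        exacts [hub x h, wall_ne_bot β L x h]
  · have e2 : wall β L x = ⊤ := if_neg hx
    have : (t : EReal) * (u x + wall β L x) = ⊤ := by
      rw [e2, EReal.add_top_of_ne_bot (hub x), EReal.coe_mul_top_of_pos ht]
    rw [this, EReal.top_add_of_ne_bot]
    · exact le_top
    · apply ereal_pos_mul_ne_bot ht1'
      show u y + wall β L y ≠ ⊥
      intro hbot
      rcases EReal.add_eq_bot_iff.1 hbot with h | h
      exacts [hub y h, wall_ne_bot β L y h]


lemma add_ne_bot' {a b : EReal} (ha : a ≠ ⊥) (hb : b ≠ ⊥) : a + b ≠ ⊥ := fun h => by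
  rcases EReal.add_eq_bot_iff.1 h with h' | h'
  exacts [ha h', hb h']

lemma u_zero_ne_top {u : Vn n → EReal} (hu : u ∈ ConvOd n) : u 0 ≠ ⊤ :=
  interior_subset hu.2

lemma mem_zero : (fun _ : Vn n => (0 : EReal)) ∈ ConvOd n := by
  refine ⟨⟨?_, lowerSemicontinuous_const, fun _ => by simp, ⟨0, by simp⟩⟩, ?_⟩
  · intro x y t ht ht1
    simp
  · have : {x : Vn n | (fun _ : Vn n => (0:EReal)) x ≠ ⊤} = Set.univ := by
      ext z; simp
    rw [this, interior_univ]
    trivial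

lemma mem_add_convexOn {u : Vn n → EReal} (hu : u ∈ ConvOd n) {g : Vn n → ℝ}
    (hg : ConvexOn ℝ Set.univ g) (hgc : Continuous g) :
    (fun z => u z + (g z : EReal)) ∈ ConvOd n := by
  obtain ⟨⟨hconv, hlsc, hbot, _⟩, hint⟩ := hu
  have h0 : u 0 ≠ ⊤ := interior_subset hint
  refine ⟨⟨isConvexFn_add_real hconv hbot hg, ?_, ?_, ⟨0, ?_⟩⟩, ?_⟩
  · exact lsc_add_of_ne_bot hlsc
      ((continuous_coe_real_ereal.comp hgc).lowerSemicontinuous) hbot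
      (fun z => EReal.coe_ne_bot _)
  · exact fun z => add_ne_bot' (hbot z) (EReal.coe_ne_bot _)
  · intro htop
    exact h0 ((ereal_add_real_ne_top_iff (g 0)).1 htop)
  · have hset : {z : Vn n | u z + (g z : EReal) ≠ ⊤} = {z | u z ≠ ⊤} := by
      ext z
      simp only [Set.mem_setOf_eq, ne_eq]
      rw [ereal_add_real_ne_top_iff (g z)]
    rw [hset]
    exact hint

lemma mem_add_wall {u : Vn n → EReal} (hu : u ∈ ConvOd n) (L : Vn n →ₗ[ℝ] ℝ) {β : ℝ}
    (hβ : 0 < β) : (fun z => u z + wall β L z) ∈ ConvOd n := by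
  obtain ⟨⟨hconv, hlsc, hbot, _⟩, hint⟩ := hu
  have h0 : u 0 ≠ ⊤ := interior_subset hint
  have hw0 : wall β L 0 = 0 := if_pos (by rw [map_zero]; exact le_of_lt hβ)
  refine ⟨⟨isConvexFn_add_wall hconv hbot β L,
      lsc_add_of_ne_bot hlsc (wall_lsc β L) hbot (wall_ne_bot β L),
      fun z => add_ne_bot' (hbot z) (wall_ne_bot β L z), ⟨0, ?_⟩⟩, ?_⟩
  · show u 0 + wall β L 0 ≠ ⊤
    rw [hw0, add_zero]; exact h0
  · have hsub : interior {x : Vn n | u x ≠ ⊤} ∩ {z | L z < β}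
        ⊆ {z | u z + wall β L z ≠ ⊤} := by
      rintro z ⟨hz1, hz2⟩
      have hwz : wall β L z = 0 := if_pos (le_of_lt hz2)
      simp only [Set.mem_setOf_eq, hwz, add_zero]
      exact interior_subset hz1
    have hopen : IsOpen (interior {x : Vn n | u x ≠ ⊤} ∩ {z | L z < β}) :=
      isOpen_interior.inter (isOpen_lt L.continuous_of_finiteDimensional continuous_const)
    have h0m : (0 : Vn n) ∈ interior {x : Vn n | u x ≠ ⊤} ∩ {z | L z < β} :=
      ⟨hint, show L 0 < β by rw [map_zero]; exact hβ⟩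
    exact interior_maximal hsub hopen h0m

lemma isConvexFn_sup {u v : Vn n → EReal} (hu : IsConvexFn u) (hv : IsConvexFn v) :
    IsConvexFn (fun z => u z ⊔ v z) := by
  intro x y t ht ht1
  have htE : (0 : EReal) ≤ (t : EReal) := by exact_mod_cast ht.le
  have ht1E : (0 : EReal) ≤ ((1 - t : ℝ) : EReal) := by
    have : (0:ℝ) ≤ 1 - t := by linarith
    exact_mod_cast this
  rw [sup_le_iff]
  constructor
  · exact (hu x y t ht ht1).trans (add_le_add
      (mul_le_mul_of_nonneg_left le_sup_left htE)
      (mul_le_mul_of_nonneg_left le_sup_left ht1E))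
  · exact (hv x y t ht ht1).trans (add_le_add
      (mul_le_mul_of_nonneg_left le_sup_right htE)
      (mul_le_mul_of_nonneg_left le_sup_right ht1E))

lemma lsc_sup {f g : Vn n → EReal} (hf : LowerSemicontinuous f)
    (hg : LowerSemicontinuous g) : LowerSemicontinuous fun z => f z ⊔ g z := by
  intro x c hc
  rcases lt_sup_iff.1 hc with h | h
  · filter_upwards [hf x c h] with z hz; exact lt_sup_iff.2 (Or.inl hz)
  · filter_upwards [hg x c h] with z hz; exact lt_sup_iff.2 (Or.inr hz)

lemma convexOn_affine (L : Vn n →ₗ[ℝ] ℝ) (c : ℝ) :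
    ConvexOn ℝ Set.univ (fun z => L z + c) := by
  refine ⟨convex_univ, fun x _ y _ a b ha hb hab => le_of_eq ?_⟩
  simp only [map_add, _root_.map_smul, smul_eq_mul]
  have hc' : a * c + b * c = c := by rw [← add_mul, hab, one_mul]
  linarith


/-! ### ramps -/

lemma convexOn_rampL (t β : ℝ) (ht : 0 ≤ t) (L : Vn n →ₗ[ℝ] ℝ) :
    ConvexOn ℝ Set.univ (fun z => t * max (β - L z) 0) := by
  have h1 : ConvexOn ℝ Set.univ (fun z => max ((-L) z + β) 0) :=
    (convexOn_affine (-L) β).sup (convexOn_const 0 convex_univ)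
  have h2 : ConvexOn ℝ Set.univ (fun z => max (β - L z) 0) := by
    have : (fun z : Vn n => max (β - L z) 0) = fun z => max ((-L) z + β) 0 := by
      funext z
      simp only [LinearMap.neg_apply]
      ring_nf
    rw [this]; exact h1
  simpa [smul_eq_mul] using h2.smul ht

lemma convexOn_rampR (t β : ℝ) (ht : 0 ≤ t) (L : Vn n →ₗ[ℝ] ℝ) :
    ConvexOn ℝ Set.univ (fun z => t * max (L z - β) 0) := by
  have h1 : ConvexOn ℝ Set.univ (fun z => max (L z + (-β)) 0) :=
    (convexOn_affine L (-β)).sup (convexOn_const 0 convex_univ)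
  have h2 : ConvexOn ℝ Set.univ (fun z => max (L z - β) 0) := by
    have : (fun z : Vn n => max (L z - β) 0) = fun z => max (L z + (-β)) 0 := by
      funext z; ring_nf
    rw [this]; exact h1
  simpa [smul_eq_mul] using h2.smul ht

lemma continuous_rampL (t β : ℝ) (L : Vn n →ₗ[ℝ] ℝ) :
    Continuous (fun z : Vn n => t * max (β - L z) 0) :=
  continuous_const.mul ((continuous_const.sub L.continuous_of_finiteDimensional).max
    continuous_const)

lemma continuous_rampR (t β : ℝ) (L : Vn n →ₗ[ℝ] ℝ) :
    Continuous (fun z : Vn n => t * max (L z - β) 0) :=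
  continuous_const.mul ((L.continuous_of_finiteDimensional.sub continuous_const).max
    continuous_const)

section Zlemmas

variable {Z : (Vn n → EReal) → ℝ}

lemma mem_add_linear_const {u : Vn n → EReal} (hu : u ∈ ConvOd n)
    (ℓ : Vn n →ₗ[ℝ] ℝ) (c : ℝ) :
    (fun z => u z + (ℓ z : EReal) + (c : EReal)) ∈ ConvOd n := by
  have h := mem_add_convexOn hu (convexOn_affine ℓ c)
    (ℓ.continuous_of_finiteDimensional.add continuous_const)
  have he : (fun z => u z + (ℓ z : EReal) + (c : EReal))
      = fun z => u z + ((ℓ z + c : ℝ) : EReal) := by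
    funext z
    rw [EReal.coe_add, add_assoc]
  rw [he]; exact h


lemma ne_bot_of_mem {u : Vn n → EReal} (hu : u ∈ ConvOd n) : ∀ z, u z ≠ ⊥ :=
  hu.1.2.2.1

/-- Key lemma: adding a left ramp `t (β - ℓ)⁺` (with `β > 0`) does not change `Z`. -/
lemma key_rampL (hval : IsValuation (ConvOd n) Z)
    (hinv : DuallyEpiTranslationInvariantE (ConvOd n) Z)
    {v : Vn n → EReal} (hv : v ∈ ConvOd n) {t β : ℝ} (ht : 0 ≤ t) (hβ : 0 < β)
    (L : Vn n →ₗ[ℝ] ℝ) :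
    Z (fun z => v z + ((t * max (β - L z) 0 : ℝ) : EReal)) = Z v := by
  set x : Vn n → EReal := fun z => v z + ((t * max (β - L z) 0 : ℝ) : EReal) with hxdef
  set y : Vn n → EReal := fun z => v z + wall β L z with hydef
  have hx : x ∈ ConvOd n := mem_add_convexOn hv (convexOn_rampL t β ht L)
    (continuous_rampL t β L)
  have hy : y ∈ ConvOd n := mem_add_wall hv L hβ
  have hinfeq : x ⊓ y = v := by
    funext z
    rw [Pi.inf_apply]
    by_cases hz : L z ≤ β
    · have hwz : wall β L z = 0 := if_pos hz
      have hgz : (0:ℝ) ≤ t * max (β - L z) 0 := mul_nonneg ht (le_max_right _ _)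
      have hxz : v z ≤ x z := by
        rw [hxdef]
        exact le_add_of_nonneg_right (by exact_mod_cast hgz)
      have hyz : y z = v z := by rw [hydef]; simp only [hwz, add_zero]
      rw [hyz]
      exact inf_eq_right.2 hxz
    · have hwz : wall β L z = ⊤ := if_neg hz
      have hgz : max (β - L z) 0 = 0 := max_eq_right (by linarith [lt_of_not_ge hz])
      have hxz : x z = v z := by
        rw [hxdef]; simp only [hgz, mul_zero, EReal.coe_zero, add_zero]
      have hyz : y z = ⊤ := by
        rw [hydef]; simp only [hwz]
        exact EReal.add_top_of_ne_bot (ne_bot_of_mem hv z)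
      rw [hxz, hyz]
      exact inf_eq_left.2 le_top
  have hsupeq : x ⊔ y = fun z => y z + ((((-t) • L) z : ℝ) : EReal) + ((t * β : ℝ) : EReal) := by
    funext z
    rw [Pi.sup_apply]
    have hLz : (((-t) • L) z : ℝ) = -t * L z := by
      simp [LinearMap.smul_apply, smul_eq_mul]
    by_cases hz : L z ≤ β
    · have hwz : wall β L z = 0 := if_pos hz
      have hmax : max (β - L z) 0 = β - L z := max_eq_left (by linarith)
      have hgz : (0:ℝ) ≤ t * max (β - L z) 0 := mul_nonneg ht (le_max_right _ _)
      have hyz : y z = v z := by rw [hydef]; simp only [hwz, add_zero]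
      have hxz : x z = v z + ((t * (β - L z) : ℝ) : EReal) := by
        rw [hxdef]; simp only [hmax]
      have hle : y z ≤ x z := by
        rw [hyz, hxdef]
        exact le_add_of_nonneg_right (by exact_mod_cast hgz)
      rw [sup_eq_left.2 hle, hxz, hyz, hLz]
      rw [add_assoc, ← EReal.coe_add]
      congr 1
      norm_cast
      ring
    · have hwz : wall β L z = ⊤ := if_neg hz
      have hyz : y z = ⊤ := by
        rw [hydef]; simp only [hwz]
        exact EReal.add_top_of_ne_bot (ne_bot_of_mem hv z)
      rw [sup_eq_right.2 (le_top.trans_eq hyz.symm), hyz]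
      rw [EReal.top_add_coe, EReal.top_add_coe]
  have hsupmem : x ⊔ y ∈ ConvOd n := by
    rw [hsupeq]; exact mem_add_linear_const hy ((-t) • L) (t * β)
  have hinfmem : x ⊓ y ∈ ConvOd n := by rw [hinfeq]; exact hv
  have hvaleq := hval x y hx hy hsupmem hinfmem
  rw [hinfeq, hsupeq, hinv y hy ((-t) • L) (t * β)] at hvaleq
  linarith

/-- Adding a right ramp `t (ℓ - β)⁺` (with `β > 0`) does not change `Z`. -/
lemma key_rampR (hval : IsValuation (ConvOd n) Z)
    (hinv : DuallyEpiTranslationInvariantE (ConvOd n) Z)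
    {v : Vn n → EReal} (hv : v ∈ ConvOd n) {t β : ℝ} (ht : 0 ≤ t) (hβ : 0 < β)
    (L : Vn n →ₗ[ℝ] ℝ) :
    Z (fun z => v z + ((t * max (L z - β) 0 : ℝ) : EReal)) = Z v := by
  set w : Vn n → EReal := fun z => v z + ((t * max (L z - β) 0 : ℝ) : EReal) with hwdef
  have hw : w ∈ ConvOd n := mem_add_convexOn hv (convexOn_rampR t β ht L)
    (continuous_rampR t β L)
  have h1 := hinv w hw ((-t) • L) (t * β)
  have he : (fun z => w z + ((((-t) • L) z : ℝ) : EReal) + ((t * β : ℝ) : EReal))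
      = fun z => v z + ((t * max (β - L z) 0 : ℝ) : EReal) := by
    funext z
    rw [hwdef]
    simp only [LinearMap.smul_apply, smul_eq_mul]
    rw [add_assoc, add_assoc, ← EReal.coe_add, ← EReal.coe_add]
    congr 2
    rcases le_total (L z) β with h | h
    · rw [max_eq_right (by linarith), max_eq_left (by linarith)]; ring
    · rw [max_eq_left (by linarith), max_eq_right (by linarith)]; ring
  rw [he] at h1
  rw [← h1, key_rampL hval hinv hv ht hβ L]


/-- Cutting with a halfspace `{ℓ ≤ β}` (with `β > 0`) does not change `Z`. -/
lemma key_cut (hcont : ContinuousVal (ConvOd n) Z) (hval : IsValuation (ConvOd n) Z)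
    (hinv : DuallyEpiTranslationInvariantE (ConvOd n) Z)
    {v : Vn n → EReal} (hv : v ∈ ConvOd n) {β : ℝ} (hβ : 0 < β)
    (L : Vn n →ₗ[ℝ] ℝ) :
    Z (fun z => v z + wall β L z) = Z v := by
  set w : ℕ → Vn n → EReal :=
    fun k z => v z + (((k : ℝ) * max (L z - β) 0 : ℝ) : EReal) with hwdef
  set wl : Vn n → EReal := fun z => v z + wall β L z with hwldef
  have hmem : ∀ k, w k ∈ ConvOd n := fun k =>
    mem_add_convexOn hv (convexOn_rampR _ β (Nat.cast_nonneg k) L)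
      (continuous_rampR _ β L)
  have hZk : ∀ k, Z (w k) = Z v := fun k =>
    key_rampR hval hinv hv (Nat.cast_nonneg k) hβ L
  have hlsc : ∀ k, LowerSemicontinuous (w k) := fun k => (hmem k).1.2.1
  have hmono : ∀ k z, w k z ≤ w (k+1) z := by
    intro k z
    apply add_le_add_right
    have : ((k:ℝ) * max (L z - β) 0) ≤ ((k:ℝ)+1) * max (L z - β) 0 := by
      apply mul_le_mul_of_nonneg_right _ (le_max_right _ _)
      linarith
    exact_mod_cast this
  have hsup : ∀ z, (⨆ k, w k z) = wl z := by
    intro z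
    by_cases hz : L z ≤ β
    · have hmax : max (L z - β) 0 = 0 := max_eq_right (by linarith)
      have hwz : wall β L z = 0 := if_pos hz
      simp only [hwdef, hwldef, hmax, mul_zero, EReal.coe_zero, add_zero, hwz]
      exact iSup_const
    · have hmax : max (L z - β) 0 = L z - β := max_eq_left (by linarith [lt_of_not_ge hz])
      have hwz : wall β L z = ⊤ := if_neg hz
      have hm : (0:ℝ) < L z - β := by linarith [lt_of_not_ge hz]
      simp only [hwdef, hwldef, hmax, hwz]
      rw [EReal.add_top_of_ne_bot (ne_bot_of_mem hv z)]
      cases hvz : v z with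
      | bot => exact absurd hvz (ne_bot_of_mem hv z)
      | coe r =>
          rw [iSup_eq_top]
          intro b hb
          cases b with
          | bot => exact ⟨0, by rw [← EReal.coe_add]; exact bot_lt_iff_ne_bot.2 (EReal.coe_ne_bot _)⟩
          | coe s =>
              obtain ⟨k, hk⟩ := exists_nat_gt ((s - r) / (L z - β))
              refine ⟨k, ?_⟩
              rw [← EReal.coe_add]
              have : s < r + (k:ℝ) * (L z - β) := by
                rw [div_lt_iff₀ hm] at hk
                linarith
              exact_mod_cast this
          | top => exact absurd hb (lt_irrefl _)
      | top =>
          have : ∀ k : ℕ, (⊤:EReal) + (((k:ℝ) * (L z - β) : ℝ) : EReal) = ⊤ :=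
            fun k => EReal.top_add_coe _
          rw [iSup_congr this]
          exact iSup_const
  have hepi : EpiConverges w wl := epi_of_mono hlsc hmono hsup
  have hlim : wl ∈ ConvOd n := mem_add_wall hv L hβ
  have htend := hcont w wl hmem hlim hepi
  have htend' : Tendsto (fun _ : ℕ => Z v) atTop (𝓝 (Z wl)) := by
    refine htend.congr fun k => hZk k
  exact tendsto_nhds_unique htend' tendsto_const_nhds


end Zlemmas

open Classical in
def wallSum : List ((Vn n →ₗ[ℝ] ℝ) × ℝ) → Vn n → EReal
  | [] => fun _ => 0
  | p :: ps => fun z => wall p.2 p.1 z + wallSum ps z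

lemma wallSum_ne_bot (l : List ((Vn n →ₗ[ℝ] ℝ) × ℝ)) (z : Vn n) : wallSum l z ≠ ⊥ := by
  induction l with
  | nil => simp [wallSum]
  | cons p ps ih => exact add_ne_bot' (wall_ne_bot p.2 p.1 z) ih

lemma wallSum_eq_zero {l : List ((Vn n →ₗ[ℝ] ℝ) × ℝ)} {z : Vn n}
    (h : ∀ p ∈ l, p.1 z ≤ p.2) : wallSum l z = 0 := by
  induction l with
  | nil => rfl
  | cons p ps ih =>
      have h1 : wall p.2 p.1 z = 0 := if_pos (h p List.mem_cons_self)
      have h2 : wallSum ps z = 0 := ih fun q hq => h q (List.mem_cons_of_mem p hq)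
      show wall p.2 p.1 z + wallSum ps z = 0
      rw [h1, h2, add_zero]

lemma wallSum_eq_top {l : List ((Vn n →ₗ[ℝ] ℝ) × ℝ)} {z : Vn n}
    (h : ¬ ∀ p ∈ l, p.1 z ≤ p.2) : wallSum l z = ⊤ := by
  induction l with
  | nil => exact absurd (by intro p hp; exact absurd hp List.not_mem_nil) h
  | cons p ps ih =>
      show wall p.2 p.1 z + wallSum ps z = ⊤
      by_cases h1 : p.1 z ≤ p.2
      · have h2 : ¬ ∀ q ∈ ps, q.1 z ≤ q.2 := by
          intro hq
          exact h (by
            intro q hqmem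
            rcases List.mem_cons.1 hqmem with rfl | hmem
            exacts [h1, hq q hmem])
        rw [ih h2]
        exact EReal.add_top_of_ne_bot (wall_ne_bot p.2 p.1 z)
      · have : wall p.2 p.1 z = ⊤ := if_neg h1
        rw [this]
        exact EReal.top_add_of_ne_bot (wallSum_ne_bot ps z)

section Zlemmas2

variable {Z : (Vn n → EReal) → ℝ}

lemma key_cuts (hcont : ContinuousVal (ConvOd n) Z) (hval : IsValuation (ConvOd n) Z)
    (hinv : DuallyEpiTranslationInvariantE (ConvOd n) Z)
    {v : Vn n → EReal} (hv : v ∈ ConvOd n) (l : List ((Vn n →ₗ[ℝ] ℝ) × ℝ))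
    (hl : ∀ p ∈ l, 0 < p.2) :
    Z (fun z => v z + wallSum l z) = Z v ∧ (fun z => v z + wallSum l z) ∈ ConvOd n := by
  induction l with
  | nil =>
      have : (fun z => v z + wallSum ([] : List ((Vn n →ₗ[ℝ] ℝ) × ℝ)) z) = v := by
        funext z; show v z + 0 = v z; rw [add_zero]
      rw [this]; exact ⟨rfl, hv⟩
  | cons p ps ih =>
      obtain ⟨ihZ, ihmem⟩ := ih fun q hq => hl q (List.mem_cons_of_mem p hq)
      have hp : 0 < p.2 := hl p List.mem_cons_self
      have he : (fun z => v z + wallSum (p :: ps) z)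
          = fun z => (v z + wallSum ps z) + wall p.2 p.1 z := by
        funext z
        show v z + (wall p.2 p.1 z + wallSum ps z) = v z + wallSum ps z + wall p.2 p.1 z
        rw [add_assoc, add_comm (wall p.2 p.1 z) (wallSum ps z)]
      rw [he]
      refine ⟨?_, mem_add_wall ihmem p.1 hp⟩
      rw [key_cut hcont hval hinv ihmem hp p.1]
      exact ihZ

end Zlemmas2

/-! ### Convex analysis at the origin -/

set_option maxHeartbeats 1000000 in
lemma exists_affine_props {u : Vn n → EReal} (hu : u ∈ ConvOd n) :
    ∃ (G : Vn n →ₗ[ℝ] ℝ) (c0 : ℝ),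
      (∀ z, ((c0 + G z : ℝ) : EReal) ≤ u z) ∧
      (∀ ε > 0, ∃ ρ > 0, ∀ z ∈ Metric.ball (0 : Vn n) ρ,
        u z ≤ ((c0 + G z + ε : ℝ) : EReal)) := by
  obtain ⟨⟨hconvex, hlsc, hbot, _⟩, hint⟩ := hu
  -- a ball on which u is finite
  obtain ⟨δ, hδ, hball⟩ : ∃ δ > 0, Metric.ball (0 : Vn n) δ ⊆ {x | u x ≠ ⊤} := by
    rcases Metric.mem_nhds_iff.1 (mem_interior_iff_mem_nhds.1 hint) with ⟨δ, hδ, hsub⟩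
    exact ⟨δ, hδ, hsub⟩
  have h0ball : (0 : Vn n) ∈ Metric.ball (0 : Vn n) δ := Metric.mem_ball_self hδ
  set f : Vn n → ℝ := fun z => (u z).toReal with hfdef
  have hfeq : ∀ z ∈ Metric.ball (0 : Vn n) δ, u z = ((f z : ℝ) : EReal) := by
    intro z hz
    exact (EReal.coe_toReal (hball hz) (hbot z)).symm
  -- convexity of f on the ball
  have hfconv : ConvexOn ℝ (Metric.ball (0 : Vn n) δ) f := by
    refine ⟨convex_ball 0 δ, ?_⟩
    intro x hx y hy a b ha hb hab
    rcases eq_or_lt_of_le ha with rfl | ha'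
    · have hb1 : b = 1 := by linarith
      simp [hb1]
    rcases eq_or_lt_of_le hb with rfl | hb'
    · have ha1 : a = 1 := by linarith
      simp [ha1]
    have habmem : a • x + b • y ∈ Metric.ball (0 : Vn n) δ :=
      (convex_ball 0 δ) hx hy ha hb hab
    have ha1 : a < 1 := by linarith
    have hba : (1 : ℝ) - a = b := by linarith
    have h := hconvex x y a ha' ha1
    rw [hba] at h
    rw [hfeq _ hx, hfeq _ hy, hfeq _ habmem, ← EReal.coe_mul, ← EReal.coe_mul,
      ← EReal.coe_add] at h
    have hr : f (a • x + b • y) ≤ a * f x + b * f y := by exact_mod_cast h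
    simpa [smul_eq_mul] using hr
  have hfcont : ContinuousOn f (Metric.ball (0 : Vn n) δ) :=
    ConvexOn.continuousOn Metric.isOpen_ball hfconv
  -- strict epigraph over the ball
  set T : Set (Vn n × ℝ) := {p | p.1 ∈ Metric.ball (0 : Vn n) δ ∧ f p.1 < p.2} with hTdef
  have hTconv : Convex ℝ T := hfconv.convex_strict_epigraph
  have hTopen : IsOpen T := by
    have hφ : ContinuousOn (fun p : Vn n × ℝ => p.2 - f p.1)
        (Metric.ball (0 : Vn n) δ ×ˢ (Set.univ : Set ℝ)) := by
      apply ContinuousOn.sub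
      · exact continuous_snd.continuousOn
      · exact hfcont.comp continuous_fst.continuousOn
          (fun p hp => hp.1)
    have h : IsOpen ((Metric.ball (0 : Vn n) δ ×ˢ (Set.univ : Set ℝ))
        ∩ (fun p : Vn n × ℝ => p.2 - f p.1) ⁻¹' Set.Ioi (0:ℝ)) := hφ.isOpen_inter_preimage
      (Metric.isOpen_ball.prod isOpen_univ) isOpen_Ioi
    have hTeq : T = (Metric.ball (0 : Vn n) δ ×ˢ (Set.univ : Set ℝ))
        ∩ (fun p : Vn n × ℝ => p.2 - f p.1) ⁻¹' Set.Ioi 0 := by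
      ext p
      simp only [hTdef, Set.mem_setOf_eq, Set.mem_inter_iff, Set.mem_prod,
        Set.mem_univ, and_true, Set.mem_preimage, Set.mem_Ioi, sub_pos]
    rw [hTeq]; exact h
  have hp0 : ((0 : Vn n), f 0) ∉ T := fun h => lt_irrefl _ h.2
  obtain ⟨F, hF⟩ := geometric_hahn_banach_point_open hTconv hTopen hp0
  -- decomposition of F
  have hdecomp : ∀ (x : Vn n) (r : ℝ), F (x, r) = F (x, 0) + r * F (0, 1) := by
    intro x r
    have : (x, r) = (x, (0:ℝ)) + r • ((0 : Vn n), (1:ℝ)) := by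
      simp [Prod.ext_iff]
    rw [this, map_add, _root_.map_smul, smul_eq_mul]
  have hc1 : 0 < F (0, 1) := by
    have hmem : ((0 : Vn n), f 0 + 1) ∈ T := by
      refine ⟨h0ball, ?_⟩
      show f 0 < f 0 + 1
      linarith
    have := hF _ hmem
    rw [hdecomp 0 (f 0), hdecomp 0 (f 0 + 1)] at this
    nlinarith
  set c1 : ℝ := F (0, 1) with hc1def
  -- minorant on the ball
  have hminball : ∀ x ∈ Metric.ball (0 : Vn n) δ, f 0 * c1 - F (x, 0) ≤ f x * c1 := by
    intro x hx
    by_contra hcon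
    push_neg at hcon
    set d : ℝ := f 0 * c1 - F (x, 0) - f x * c1 with hddef
    have hd : 0 < d := by simp only [hddef]; linarith
    have hε : 0 < d / (2 * c1) := div_pos hd (by linarith)
    have hmem : (x, f x + d / (2 * c1)) ∈ T := by
      refine ⟨hx, ?_⟩
      show f x < f x + d / (2 * c1)
      linarith
    have := hF _ hmem
    rw [hdecomp 0 (f 0), hdecomp x (f x + d / (2 * c1))] at this
    have h2 : F (0, 0) = 0 := by
      have : ((0:Vn n), (0:ℝ)) = (0 : Vn n × ℝ) := rfl
      rw [this, map_zero]
    rw [h2] at this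
    have hd2 : (f x + d / (2 * c1)) * c1 = f x * c1 + d / 2 := by
      field_simp
    nlinarith
  -- define G
  set φ : Vn n →L[ℝ] ℝ := F.comp (ContinuousLinearMap.inl ℝ (Vn n) ℝ) with hφdef
  have hφeval : ∀ x : Vn n, φ x = F (x, 0) := by
    intro x
    rw [hφdef, ContinuousLinearMap.comp_apply, ContinuousLinearMap.inl_apply]
  set G : Vn n →ₗ[ℝ] ℝ := (-(c1⁻¹)) • (φ : Vn n →ₗ[ℝ] ℝ) with hGdef
  have hGeval : ∀ x : Vn n, G x = -(c1⁻¹) * F (x, 0) := by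
    intro x
    rw [hGdef, LinearMap.smul_apply, ContinuousLinearMap.coe_coe, hφeval, smul_eq_mul]
  have hminball' : ∀ x ∈ Metric.ball (0 : Vn n) δ, f 0 + G x ≤ f x := by
    intro x hx
    have h := hminball x hx
    have hGc : G x * c1 = -(F (x, 0)) := by
      rw [hGeval x]
      field_simp
    have h2 : (f 0 + G x) * c1 ≤ f x * c1 := by
      have hexp : (f 0 + G x) * c1 = f 0 * c1 + G x * c1 := by ring
      rw [hexp, hGc]
      linarith
    exact le_of_mul_le_mul_right h2 hc1
  refine ⟨G, f 0, ?_, ?_⟩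
  · -- global affine minorant
    intro z
    rcases eq_or_ne (u z) ⊤ with htop | htop
    · rw [htop]; exact le_top
    have hbz : u z ≠ ⊥ := hbot z
    set r : ℝ := (u z).toReal with hrdef
    have huz : u z = (r : EReal) := (EReal.coe_toReal htop hbz).symm
    -- choose small t
    set t : ℝ := min (1/2) (δ / 2 / (‖z‖ + 1)) with htdef
    have hnz : (0:ℝ) < ‖z‖ + 1 := by positivity
    have ht : 0 < t := lt_min (by norm_num) (by positivity)
    have ht1 : t < 1 := lt_of_le_of_lt (min_le_left _ _) (by norm_num)
    have htz : t * ‖z‖ < δ := by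
      have h1 : t ≤ δ / 2 / (‖z‖ + 1) := min_le_right _ _
      have h2 : t * ‖z‖ ≤ δ / 2 / (‖z‖ + 1) * ‖z‖ :=
        mul_le_mul_of_nonneg_right h1 (norm_nonneg z)
      have h3 : δ / 2 / (‖z‖ + 1) * ‖z‖ < δ := by
        rw [div_mul_eq_mul_div]
        rw [div_lt_iff₀ hnz]
        nlinarith [norm_nonneg z]
      linarith
    have htzball : t • z ∈ Metric.ball (0 : Vn n) δ := by
      rw [mem_ball_zero_iff, norm_smul, Real.norm_eq_abs, abs_of_pos ht]
      exact htz
    have hcomb := hconvex z 0 t ht ht1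
    rw [smul_zero, add_zero] at hcomb
    rw [hfeq _ htzball] at hcomb
    rw [huz, hfeq _ h0ball] at hcomb
    have hrhs : (t : EReal) * ((r : ℝ) : EReal) + ((1 - t : ℝ) : EReal) * ((f 0 : ℝ) : EReal)
        = ((t * r + (1 - t) * f 0 : ℝ) : EReal) := by
      rw [EReal.coe_add, EReal.coe_mul, EReal.coe_mul]
    rw [hrhs] at hcomb
    have hreal : f (t • z) ≤ t * r + (1 - t) * f 0 := by exact_mod_cast hcomb
    have hmin := hminball' (t • z) htzball
    have hGt : G (t • z) = t * G z := by rw [_root_.map_smul, smul_eq_mul]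
    rw [hGt] at hmin
    -- f 0 + t G z ≤ t r + (1-t) f 0  ⟹  f 0 + G z ≤ r
    have hfinal : f 0 + G z ≤ r := by
      have := hmin.trans hreal
      have h2 : t * (f 0 + G z) ≤ t * r := by nlinarith
      exact le_of_mul_le_mul_left h2 ht
    rw [huz]
    exact_mod_cast hfinal
  · -- upper bound near 0
    intro ε hε
    have hfc0 : ContinuousAt f 0 := hfcont.continuousAt (Metric.isOpen_ball.mem_nhds h0ball)
    have hGc : Continuous fun z : Vn n => f 0 + G z + ε :=
      (continuous_const.add G.continuous_of_finiteDimensional).add continuous_const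
    have hval0 : f 0 < f 0 + G 0 + ε := by
      rw [map_zero]
      linarith
    have hev : ∀ᶠ z in 𝓝 (0 : Vn n), f z - (f 0 + G z + ε) < 0 := by
      have h1 : Tendsto (fun z : Vn n => f z - (f 0 + G z + ε)) (𝓝 0)
          (𝓝 (f 0 - (f 0 + G 0 + ε))) := hfc0.sub hGc.continuousAt
      exact h1.eventually_lt_const (by rw [map_zero]; linarith)
    have hev2 : ∀ᶠ z in 𝓝 (0 : Vn n), z ∈ Metric.ball (0 : Vn n) δ :=
      Metric.ball_mem_nhds 0 hδ
    obtain ⟨ρ, hρ, hρsub⟩ := Metric.eventually_nhds_iff_ball.1 (hev.and hev2)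
    refine ⟨ρ, hρ, fun z hz => ?_⟩
    obtain ⟨h1, h2⟩ := hρsub z hz
    rw [hfeq z h2]
    exact_mod_cast (by linarith : f z ≤ f 0 + G z + ε)

/-! ### membership and epi-convergence of the approximating sequence -/

lemma mem_affine {G : Vn n →ₗ[ℝ] ℝ} {c0 : ℝ} :
    (fun z : Vn n => ((c0 + G z : ℝ) : EReal)) ∈ ConvOd n := by
  have he : (fun z : Vn n => (fun _ : Vn n => (0:EReal)) z + ((G z : ℝ) : EReal)
      + ((c0 : ℝ) : EReal)) = fun z : Vn n => ((c0 + G z : ℝ) : EReal) := by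
    funext z
    show (0:EReal) + (G z : EReal) + (c0 : EReal) = ((c0 + G z : ℝ) : EReal)
    rw [zero_add, ← EReal.coe_add, add_comm]
  rw [← he]
  exact mem_add_linear_const mem_zero G c0

lemma mem_affine_sup {u : Vn n → EReal} (hu : u ∈ ConvOd n) (G : Vn n →ₗ[ℝ] ℝ) (c0 ε : ℝ) :
    (fun z => ((c0 + G z : ℝ) : EReal) ⊔ (u z + ((ε : ℝ) : EReal))) ∈ ConvOd n := by
  have hA : (fun z : Vn n => ((c0 + G z : ℝ) : EReal)) ∈ ConvOd n := mem_affine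
  have hB : (fun z => u z + ((ε : ℝ) : EReal)) ∈ ConvOd n :=
    mem_add_convexOn hu (convexOn_const _ convex_univ) continuous_const
  refine ⟨⟨isConvexFn_sup hA.1.1 hB.1.1, lsc_sup hA.1.2.1 hB.1.2.1, ?_, ⟨0, ?_⟩⟩, ?_⟩
  · intro z h
    have hbb : ((c0 + G z : ℝ) : EReal) = ⊥ := eq_bot_mono le_sup_left h
    exact EReal.coe_ne_bot _ hbb
  · have h1 : ((c0 + G 0 : ℝ) : EReal) < ⊤ := EReal.coe_lt_top _
    have h2 : u 0 + ((ε : ℝ) : EReal) < ⊤ := by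
      rw [lt_top_iff_ne_top]
      intro h
      exact u_zero_ne_top hu ((ereal_add_real_ne_top_iff ε).1 h)
    exact (sup_lt_iff.2 ⟨h1, h2⟩).ne
  · have hset : {z : Vn n | (((c0 + G z : ℝ) : EReal) ⊔ (u z + ((ε : ℝ) : EReal))) ≠ ⊤}
        = {z | u z ≠ ⊤} := by
      ext z
      simp only [Set.mem_setOf_eq]
      constructor
      · intro h htop
        apply h
        have hth : u z + ((ε : ℝ) : EReal) = ⊤ := by
          rw [htop]; exact EReal.top_add_coe ε
        exact top_le_iff.1 (hth ▸ le_sup_right)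
      · intro h htop
        have h1 : ((c0 + G z : ℝ) : EReal) < ⊤ := EReal.coe_lt_top _
        have h2 : u z + ((ε : ℝ) : EReal) < ⊤ :=
          lt_top_iff_ne_top.2 (fun hh => h ((ereal_add_real_ne_top_iff ε).1 hh))
        exact (sup_lt_iff.2 ⟨h1, h2⟩).ne htop
    have : {z : Vn n | (fun w => (((c0 + G w : ℝ) : EReal) ⊔ (u w + ((ε : ℝ) : EReal)))) z ≠ ⊤}
        = {z | u z ≠ ⊤} := hset
    rw [this]
    exact hu.2

lemma epi_affine_sup {u : Vn n → EReal} (hu : u ∈ ConvOd n) (G : Vn n →ₗ[ℝ] ℝ) (c0 : ℝ)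
    (hminor : ∀ z, ((c0 + G z : ℝ) : EReal) ≤ u z) :
    EpiConverges
      (fun k z => ((c0 + G z : ℝ) : EReal) ⊔ (u z + ((-(1/((k:ℝ)+1)) : ℝ) : EReal))) u := by
  have hlscuk : ∀ k : ℕ, LowerSemicontinuous
      (fun z => ((c0 + G z : ℝ) : EReal) ⊔ (u z + ((-(1/((k:ℝ)+1)) : ℝ) : EReal))) :=
    fun k => (mem_affine_sup hu G c0 _).1.2.1
  apply epi_of_mono hlscuk
  · intro k z
    refine sup_le_sup le_rfl (add_le_add_right ?_ _)
    have hk : (0:ℝ) < (k:ℝ) + 1 := by positivity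
    have hle : -(1/((k:ℝ)+1)) ≤ -(1/((((k+1):ℕ):ℝ)+1)) := by
      push_cast
      have h1 : (1:ℝ)/((k:ℝ)+1+1) ≤ 1/((k:ℝ)+1) := by
        apply one_div_le_one_div_of_le hk
        linarith
      linarith
    exact_mod_cast hle
  · intro z
    apply le_antisymm
    · refine iSup_le fun k => ?_
      refine sup_le (hminor z) ?_
      have h0 : ((-(1/((k:ℝ)+1)) : ℝ) : EReal) ≤ (0 : EReal) := by
        have h1 : (0:ℝ) ≤ 1/((k:ℝ)+1) := by positivity
        have h2 : -(1/((k:ℝ)+1)) ≤ (0:ℝ) := by linarith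
        exact_mod_cast h2
      calc u z + ((-(1/((k:ℝ)+1)) : ℝ) : EReal) ≤ u z + 0 := add_le_add_right h0 _
        _ = u z := add_zero _
    · have key : ∀ s : ℝ, (s : EReal) < u z →
          ∃ k : ℕ, (s : EReal) < u z + ((-(1/((k:ℝ)+1)) : ℝ) : EReal) := by
        intro s hs
        rcases eq_or_ne (u z) ⊤ with htop | htop
        · refine ⟨0, ?_⟩
          rw [htop, EReal.top_add_coe]
          exact EReal.coe_lt_top s
        · have hbz : u z ≠ ⊥ := ne_bot_of_mem hu z
          have huz : u z = (((u z).toReal : ℝ) : EReal) := (EReal.coe_toReal htop hbz).symm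
          set r : ℝ := (u z).toReal with hr
          rw [huz] at hs ⊢
          have hsr : s < r := by exact_mod_cast hs
          have hrs : (0:ℝ) < r - s := by linarith
          obtain ⟨k, hk⟩ := exists_nat_gt (1/(r - s))
          have hkpos : (0:ℝ) < (k:ℝ) + 1 := by positivity
          have hlt : 1/((k:ℝ)+1) < r - s := by
            rw [div_lt_iff₀ hkpos]
            rw [div_lt_iff₀ hrs] at hk
            nlinarith
          refine ⟨k, ?_⟩
          rw [← EReal.coe_add]
          have hfin : s < r + -(1/((k:ℝ)+1)) := by linarith
          exact_mod_cast hfin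
      refine le_of_forall_lt fun b hb => ?_
      cases b with
      | bot =>
          refine lt_of_lt_of_le (bot_lt_iff_ne_bot.2 (EReal.coe_ne_bot (c0 + G z))) ?_
          exact le_sup_left.trans (le_iSup
            (fun k : ℕ => ((c0 + G z : ℝ) : EReal) ⊔ (u z + ((-(1/((k:ℝ)+1)) : ℝ) : EReal))) 0)
      | coe s =>
          obtain ⟨k, hk⟩ := key s hb
          exact lt_of_lt_of_le hk (le_sup_right.trans (le_iSup
            (fun k : ℕ => ((c0 + G z : ℝ) : EReal) ⊔ (u z + ((-(1/((k:ℝ)+1)) : ℝ) : EReal))) k))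
      | top => exact absurd hb not_top_lt

/-! ### cubes -/

lemma cube_lemma (ρ : ℝ) (hρ : 0 < ρ) :
    ∃ l : List ((Vn n →ₗ[ℝ] ℝ) × ℝ), (∀ p ∈ l, 0 < p.2) ∧
      ∀ z : Vn n, (∀ p ∈ l, p.1 z ≤ p.2) → z ∈ Metric.ball (0 : Vn n) ρ := by
  set δc : ℝ := ρ / (Real.sqrt n + 2) with hδc
  have hs : (0:ℝ) < Real.sqrt n + 2 := by positivity
  have hδcpos : 0 < δc := div_pos hρ hs
  set Li : Fin n → (Vn n →ₗ[ℝ] ℝ) := fun i =>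
    (LinearMap.proj i).comp (WithLp.linearEquiv 2 ℝ (Fin n → ℝ)).toLinearMap with hLi
  have hLieval : ∀ (i : Fin n) (z : Vn n), Li i z = z i := fun i z => rfl
  refine ⟨(List.finRange n).flatMap (fun i => [(Li i, δc), (-(Li i), δc)]), ?_, ?_⟩
  · intro p hp
    rcases List.mem_flatMap.1 hp with ⟨i, _, hmem⟩
    simp only [List.mem_cons, List.not_mem_nil, or_false] at hmem
    rcases hmem with rfl | rfl
    exacts [hδcpos, hδcpos]
  · intro z hz
    have hcoord : ∀ i : Fin n, |z i| ≤ δc := by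
      intro i
      have h1 := hz (Li i, δc) (List.mem_flatMap.2 ⟨i, List.mem_finRange i, by simp⟩)
      have h2 := hz (-(Li i), δc) (List.mem_flatMap.2 ⟨i, List.mem_finRange i, by simp⟩)
      rw [show ((Li i, δc) : (Vn n →ₗ[ℝ] ℝ) × ℝ).1 z = z i from hLieval i z] at h1
      have h2' : -(z i) ≤ δc := by
        have : ((-(Li i), δc) : (Vn n →ₗ[ℝ] ℝ) × ℝ).1 z = -(z i) := by
          show (-(Li i)) z = -(z i)
          rw [LinearMap.neg_apply, hLieval]
        rw [this] at h2
        exact h2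
      rw [abs_le]
      exact ⟨by linarith, h1⟩
    rw [mem_ball_zero_iff]
    have hb1 : ‖z‖ ≤ Real.sqrt n * δc := by
      rw [EuclideanSpace.norm_eq]
      have hsum : (∑ i : Fin n, ‖z i‖^2) ≤ (n : ℝ) * δc^2 := by
        calc (∑ i : Fin n, ‖z i‖^2) ≤ ∑ _i : Fin n, δc^2 := by
              apply Finset.sum_le_sum
              intro i _
              rw [Real.norm_eq_abs]
              have := hcoord i
              nlinarith [abs_nonneg (z i)]
          _ = (n : ℝ) * δc^2 := by
              rw [Finset.sum_const, Finset.card_univ, Fintype.card_fin, nsmul_eq_mul]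
      calc Real.sqrt (∑ i : Fin n, ‖z i‖^2) ≤ Real.sqrt ((n:ℝ) * δc^2) :=
            Real.sqrt_le_sqrt hsum
        _ = Real.sqrt n * δc := by
            rw [Real.sqrt_mul (by positivity), Real.sqrt_sq hδcpos.le]
    have hb2 : Real.sqrt n * δc < ρ := by
      have h1 : Real.sqrt n * δc = Real.sqrt n * ρ / (Real.sqrt n + 2) := by
        rw [hδc]; ring
      rw [h1, div_lt_iff₀ hs]
      nlinarith [Real.sqrt_nonneg (n:ℝ)]
    linarith

section Zfinal

variable {Z : (Vn n → EReal) → ℝ}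

/-- `Z` only depends on the germ at the origin. -/
lemma Z_eq_of_eq_on_ball (hcont : ContinuousVal (ConvOd n) Z)
    (hval : IsValuation (ConvOd n) Z)
    (hinv : DuallyEpiTranslationInvariantE (ConvOd n) Z)
    {v w : Vn n → EReal} (hv : v ∈ ConvOd n) (hw : w ∈ ConvOd n)
    {ρ : ℝ} (hρ : 0 < ρ) (heq : ∀ z ∈ Metric.ball (0 : Vn n) ρ, v z = w z) :
    Z v = Z w := by
  obtain ⟨l, hlpos, hlsub⟩ := cube_lemma ρ hρ
  have h1 := (key_cuts hcont hval hinv hv l hlpos).1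
  have h2 := (key_cuts hcont hval hinv hw l hlpos).1
  have he : (fun z => v z + wallSum l z) = (fun z => w z + wallSum l z) := by
    funext z
    by_cases hz : ∀ p ∈ l, p.1 z ≤ p.2
    · rw [wallSum_eq_zero hz, add_zero, add_zero]
      exact heq z (hlsub z hz)
    · rw [wallSum_eq_top hz, EReal.add_top_of_ne_bot (ne_bot_of_mem hv z),
        EReal.add_top_of_ne_bot (ne_bot_of_mem hw z)]
  rw [← h1, he, h2]

end Zfinal

end ThmAux

/-- **Triviality on `Conv_od(ℝⁿ)`** (Theorem 9.2): every continuous and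
dually epi-translation invariant valuation on `Conv_od(ℝⁿ)` is constant. -/
theorem constant_on_convOd (n : ℕ) (Z : (Vn n → EReal) → ℝ)
    (hcont : ContinuousVal (ConvOd n) Z)
    (hval : IsValuation (ConvOd n) Z)
    (hinv : DuallyEpiTranslationInvariantE (ConvOd n) Z) :
    ∃ c : ℝ, ∀ u ∈ ConvOd n, Z u = c := by
  classical
  refine ⟨Z (fun _ => (0 : EReal)), fun u hu => ?_⟩
  obtain ⟨G, c0, hminor, husc⟩ := ThmAux.exists_affine_props hu
  set A : Vn n → EReal := fun z => ((c0 + G z : ℝ) : EReal) with hAdef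
  have hAfun : (fun z : Vn n => (fun _ : Vn n => (0 : EReal)) z + ((G z : ℝ) : EReal)
      + ((c0 : ℝ) : EReal)) = A := by
    funext z
    rw [hAdef]
    show (0 : EReal) + (G z : EReal) + (c0 : EReal) = ((c0 + G z : ℝ) : EReal)
    rw [zero_add, ← EReal.coe_add, add_comm]
  have hAmem : A ∈ ConvOd n := ThmAux.mem_affine
  have hZA : Z A = Z (fun _ => (0 : EReal)) := by
    rw [← hAfun]
    exact hinv _ ThmAux.mem_zero G c0
  set uk : ℕ → Vn n → EReal :=
    fun k z => A z ⊔ (u z + ((-(1/((k:ℝ)+1)) : ℝ) : EReal)) with hukdef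
  have hukmem : ∀ k, uk k ∈ ConvOd n := fun k => ThmAux.mem_affine_sup hu G c0 _
  have hZuk : ∀ k, Z (uk k) = Z (fun _ => (0 : EReal)) := by
    intro k
    have hε : (0:ℝ) < 1/((k:ℝ)+1) := by positivity
    obtain ⟨ρ, hρ, hball⟩ := husc (1/((k:ℝ)+1)) hε
    have heq : ∀ z ∈ Metric.ball (0 : Vn n) ρ, uk k z = A z := by
      intro z hz
      have h1 := hball z hz
      have h2 : u z + ((-(1/((k:ℝ)+1)) : ℝ) : EReal) ≤ A z := by
        calc u z + ((-(1/((k:ℝ)+1)) : ℝ) : EReal)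
            ≤ ((c0 + G z + 1/((k:ℝ)+1) : ℝ) : EReal) + ((-(1/((k:ℝ)+1)) : ℝ) : EReal) :=
              add_le_add_left h1 _
          _ = A z := by
              rw [hAdef, ← EReal.coe_add]
              norm_cast
              ring
      show A z ⊔ (u z + ((-(1/((k:ℝ)+1)) : ℝ) : EReal)) = A z
      exact sup_eq_left.2 h2
    have hgerm := ThmAux.Z_eq_of_eq_on_ball hcont hval hinv (hukmem k) hAmem hρ heq
    rw [hgerm, hZA]
  have hepi : EpiConverges uk u := ThmAux.epi_affine_sup hu G c0 hminor
  have htend := hcont uk u hukmem hu hepi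
  have htend' : Tendsto (fun _ : ℕ => Z (fun _ : Vn n => (0 : EReal))) atTop (𝓝 (Z u)) :=
    htend.congr hZuk
  exact tendsto_nhds_unique htend' tendsto_const_nhds
end
end
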